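/- arXiv:2410.22676 — 11 statements merged into one kernel-verified Lean document; each statement's English description precedes it below -/
import Mathlib

section
/- Let n, k be positive integers with n ≥ 2k. If F ⊆ ([n] choose k) is an intersecting family (every two members have nonempty intersection), then |F| ≤ C(n-1, k-1). -/
open Finset

theorem EKR (n k : ℕ) (hk : 0 < k) (hn : 2 * k ≤ n)
    (F : Finset (Finset ℕ))
    (hF : ∀ A ∈ F, A ∈ (Finset.Icc 1 n).powersetCard k)
    (hint : ∀ A ∈ F, ∀ B ∈ F, (A ∩ B).Nonempty) :
    F.card ≤ (n - 1).choose (k - 1) := by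
  classical
  -- map each A ⊆ Icc 1 n to a subset of Fin n
  set f : Finset ℕ → Finset (Fin n) :=
    fun A => Finset.univ.filter (fun i : Fin n => (i : ℕ) + 1 ∈ A) with hf
  have key : ∀ A ∈ F, ∀ x ∈ A, 1 ≤ x ∧ x ≤ n := by
    intro A hA x hx
    have := (mem_powersetCard.1 (hF A hA)).1 hx
    simpa [Finset.mem_Icc] using this
  have hmem : ∀ A ∈ F, ∀ x ∈ A, x - 1 < n := by
    intro A hA x hx
    have := key A hA x hx
    omega
  have hrec : ∀ A ∈ F, ∀ x ∈ A, ∃ i : Fin n, i ∈ f A ∧ (i : ℕ) + 1 = x := by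
    intro A hA x hx
    have h := key A hA x hx
    refine ⟨⟨x - 1, hmem A hA x hx⟩, ?_, by simp only [Fin.val_mk]; omega⟩
    simp only [hf, mem_filter, mem_univ, true_and]
    have : x - 1 + 1 = x := by omega
    rwa [this]
  have hcardf : ∀ A ∈ F, (f A).card = k := by
    intro A hA
    have hk' := (mem_powersetCard.1 (hF A hA)).2
    rw [← hk']
    refine Finset.card_bij (fun i _ => (i : ℕ) + 1) ?_ ?_ ?_
    · intro i hi
      simpa [hf] using (mem_filter.1 hi).2
    · intro a ha b hb hab
      exact Fin.ext (by omega)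
    · intro x hx
      obtain ⟨i, hi, hix⟩ := hrec A hA x hx
      exact ⟨i, hi, hix⟩
  have hinjOn : Set.InjOn f F := by
    intro A hA B hB hAB
    ext x
    constructor
    · intro hx
      obtain ⟨i, hi, hix⟩ := hrec A hA x hx
      rw [hAB] at hi
      have := (mem_filter.1 hi).2
      rwa [hix] at this
    · intro hx
      obtain ⟨i, hi, hix⟩ := hrec B hB x hx
      rw [← hAB] at hi
      have := (mem_filter.1 hi).2
      rwa [hix] at this
  set G : Finset (Finset (Fin n)) := F.image f with hG
  have hcard : G.card = F.card := Finset.card_image_of_injOn hinjOn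
  have hsized : (G : Set (Finset (Fin n))).Sized k := by
    intro A hA
    obtain ⟨B, hB, rfl⟩ := Finset.mem_image.1 hA
    exact hcardf B hB
  have hinter : (G : Set (Finset (Fin n))).Intersecting := by
    intro A hA B hB
    obtain ⟨A', hA', rfl⟩ := Finset.mem_image.1 hA
    obtain ⟨B', hB', rfl⟩ := Finset.mem_image.1 hB
    obtain ⟨x, hx⟩ := hint A' hA' B' hB'
    have hxA := Finset.mem_inter.1 hx
    obtain ⟨i, hi, hix⟩ := hrec A' hA' x hxA.1
    intro hd
    have hiB : i ∈ f B' := by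
      simp only [hf, mem_filter, mem_univ, true_and, hix]
      exact hxA.2
    exact (Finset.disjoint_left.1 hd) hi hiB
  have hhalf : k ≤ n / 2 := by omega
  calc F.card = G.card := hcard.symm
    _ ≤ (n - 1).choose (k - 1) := Finset.erdos_ko_rado hinter hsized hhalf
end

section
/- Let n, k be positive integers with n ≥ 2k and k ≥ 1. If F ⊆ ([n] choose k) is intersecting and |F| = C(n-1, k-1) with n > 2k, then there exists p ∈ [n] such that F = {A ∈ ([n] choose k) : p ∈ A}. -/
open Finset

-- transport EKR bound to arbitrary ground finset of ℕ
theorem ekr_ground {V : Finset ℕ} {F : Finset (Finset ℕ)} {k : ℕ}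
    (hF : ∀ A ∈ F, A ⊆ V ∧ A.card = k)
    (hint : ∀ A ∈ F, ∀ B ∈ F, (A ∩ B).Nonempty)
    (hVk : 2 * k ≤ V.card) : F.card ≤ (V.card - 1).choose (k - 1) := by
  classical
  set n := V.card with hn
  set g : Fin n ≃o V := V.orderIsoOfFin rfl with hg
  set m : Finset ℕ → Finset (Fin n) := fun A => univ.filter (fun t => (g t : ℕ) ∈ A) with hm
  have himg : ∀ A, A ⊆ V → (m A).image (fun t => (g t : ℕ)) = A := by
    intro A hA
    ext x
    simp only [hm, mem_image, mem_filter, mem_univ, true_and]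
    constructor
    · rintro ⟨t, ht, rfl⟩; exact ht
    · intro hx
      exact ⟨g.symm ⟨x, hA hx⟩, by simpa using hx, by simp⟩
  have hminj : ∀ A, A ⊆ V → ∀ B, B ⊆ V → m A = m B → A = B := by
    intro A hA B hB h
    rw [← himg A hA, ← himg B hB, h]
  have hcardm : ∀ A, A ⊆ V → (m A).card = A.card := by
    intro A hA
    have hinj : Function.Injective (fun t : Fin n => (g t : ℕ)) := fun a b hab => by
      have := Subtype.ext hab; exact g.injective this
    calc (m A).card = ((m A).image fun t => (g t : ℕ)).card :=
          (Finset.card_image_of_injective _ hinj).symm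
      _ = A.card := by rw [himg A hA]
  set 𝒜 : Finset (Finset (Fin n)) := F.image m with h𝒜
  have hcard𝒜 : 𝒜.card = F.card := by
    apply Finset.card_image_of_injOn
    intro A hA B hB h
    exact hminj A (hF A hA).1 B (hF B hB).1 h
  have hint𝒜 : (𝒜 : Set (Finset (Fin n))).Intersecting := by
    rintro a ha b hb
    simp only [h𝒜, coe_image, Set.mem_image, mem_coe] at ha hb
    obtain ⟨A, hA, rfl⟩ := ha
    obtain ⟨B, hB, rfl⟩ := hb
    obtain ⟨x, hx⟩ := hint A hA B hB
    simp only [mem_inter] at hx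
    intro hdis
    have hxV : x ∈ V := (hF A hA).1 hx.1
    have : g.symm ⟨x, hxV⟩ ∈ m A ∩ m B := by
      simp [hm, hx.1, hx.2]
    exact (Finset.disjoint_left.1 hdis (mem_inter.1 this).1) (mem_inter.1 this).2
  have hsized : (𝒜 : Set (Finset (Fin n))).Sized k := by
    rintro a ha
    simp only [h𝒜, coe_image, Set.mem_image, mem_coe] at ha
    obtain ⟨A, hA, rfl⟩ := ha
    rw [hcardm A (hF A hA).1, (hF A hA).2]
  have := Finset.erdos_ko_rado hint𝒜 hsized (by omega : k ≤ n / 2)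
  omega

theorem star_card {V : Finset ℕ} {k p : ℕ} (hp : p ∈ V) (hk : 1 ≤ k) :
    ((V.powersetCard k).filter (fun A => p ∈ A)).card = (V.card - 1).choose (k - 1) := by
  classical
  rw [← card_erase_of_mem hp, ← Finset.card_powersetCard]
  apply Finset.card_nbij' (i := fun A => A.erase p) (j := fun T => insert p T)
  · intro A hA
    simp only [mem_coe, mem_filter, mem_powersetCard] at hA
    obtain ⟨⟨hAV, hAc⟩, hpA⟩ := hA
    simp only [mem_coe, mem_powersetCard]
    constructor
    · intro x hx
      rw [mem_erase] at hx ⊢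
      exact ⟨hx.1, hAV hx.2⟩
    · rw [card_erase_of_mem hpA, hAc]
  · intro T hT
    rw [mem_coe, mem_powersetCard] at hT
    obtain ⟨hTV, hTc⟩ := hT
    have hpT : p ∉ T := fun h => (mem_erase.1 (hTV h)).1 rfl
    simp only [mem_coe, mem_filter, mem_powersetCard, mem_insert, true_or, and_true]
    constructor
    · intro x hx
      rcases mem_insert.1 hx with rfl | hx
      · exact hp
      · exact (mem_erase.1 (hTV hx)).2
    · rw [card_insert_of_notMem hpT, hTc]; omega
  · intro A hA
    simp only [mem_coe, mem_filter] at hA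
    exact insert_erase hA.2
  · intro T hT
    rw [mem_coe, mem_powersetCard] at hT
    have hpT : p ∉ T := fun h => (mem_erase.1 (hT.1 h)).1 rfl
    exact erase_insert hpT

theorem pair_card {V : Finset ℕ} {k i j : ℕ} (hi : i ∈ V) (hj : j ∈ V) (hij : i ≠ j)
    (hk : 2 ≤ k) :
    ((V.powersetCard k).filter (fun A => i ∈ A ∧ j ∈ A)).card
      = (V.card - 2).choose (k - 2) := by
  classical
  have h2 : ((V.erase i).erase j).card = V.card - 2 := by
    rw [card_erase_of_mem (mem_erase.2 ⟨hij.symm, hj⟩), card_erase_of_mem hi]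
    omega
  rw [← h2, ← Finset.card_powersetCard]
  apply Finset.card_nbij' (i := fun A => (A.erase i).erase j)
    (j := fun T => insert i (insert j T))
  · intro A hA
    simp only [mem_coe, mem_filter, mem_powersetCard] at hA
    obtain ⟨⟨hAV, hAc⟩, hiA, hjA⟩ := hA
    simp only [mem_coe, mem_powersetCard]
    refine ⟨?_, ?_⟩
    · intro x hx
      simp only [mem_erase] at hx ⊢
      exact ⟨hx.1, hx.2.1, hAV hx.2.2⟩
    · rw [card_erase_of_mem (mem_erase.2 ⟨hij.symm, hjA⟩), card_erase_of_mem hiA, hAc]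
      omega
  · intro T hT
    rw [mem_coe, mem_powersetCard] at hT
    obtain ⟨hTV, hTc⟩ := hT
    have hiT : i ∉ T := fun h => by have := hTV h; simp [mem_erase] at this
    have hjT : j ∉ T := fun h => by have := hTV h; simp [mem_erase] at this
    simp only [mem_coe, mem_filter, mem_powersetCard]
    refine ⟨⟨?_, ?_⟩, by simp, by simp⟩
    · intro x hx
      rcases mem_insert.1 hx with rfl | hx
      · exact hi
      rcases mem_insert.1 hx with rfl | hx
      · exact hj
      · have := hTV hx; simp only [mem_erase] at this; exact this.2.2
    · rw [card_insert_of_notMem (by simp [hiT, hij] : i ∉ insert j T),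
        card_insert_of_notMem hjT, hTc]
      omega
  · intro A hA
    simp only [mem_coe, mem_filter] at hA ⊢
    rw [insert_erase (mem_erase.2 ⟨hij.symm, hA.2.2⟩), insert_erase hA.2.1]
  · intro T hT
    simp only [mem_coe, mem_powersetCard] at hT ⊢
    have hiT : i ∉ T := fun h => by have := hT.1 h; simp [mem_erase] at this
    have hjT : j ∉ T := fun h => by have := hT.1 h; simp [mem_erase] at this
    rw [erase_insert (by simp [hiT, hij] : i ∉ insert j T), erase_insert hjT]

def rep (i j : ℕ) (A : Finset ℕ) : Finset ℕ := insert i (A.erase j)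

def moved (i j : ℕ) (F : Finset (Finset ℕ)) : Finset (Finset ℕ) :=
  F.filter (fun A => j ∈ A ∧ i ∉ A ∧ rep i j A ∉ F)

def comp (i j : ℕ) (F : Finset (Finset ℕ)) : Finset (Finset ℕ) :=
  (F \ moved i j F) ∪ (moved i j F).image (rep i j)

theorem mem_rep_i (i j : ℕ) (A : Finset ℕ) : i ∈ rep i j A := mem_insert_self _ _

theorem not_mem_rep_j {i j : ℕ} (hij : i ≠ j) (A : Finset ℕ) : j ∉ rep i j A := by
  simp [rep, hij.symm]

theorem rep_recover {i j : ℕ} {A : Finset ℕ} (hj : j ∈ A) (hi : i ∉ A) :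
    insert j ((rep i j A).erase i) = A := by
  have : i ∉ A.erase j := fun h => hi (mem_of_mem_erase h)
  rw [rep, erase_insert this, insert_erase hj]

theorem rep_card {i j : ℕ} {A : Finset ℕ} (hj : j ∈ A) (hi : i ∉ A) :
    (rep i j A).card = A.card := by
  have : i ∉ A.erase j := fun h => hi (mem_of_mem_erase h)
  rw [rep, card_insert_of_notMem this, card_erase_of_mem hj]
  have : 1 ≤ A.card := card_pos.2 ⟨j, hj⟩
  omega

theorem rep_subset {i j : ℕ} {V A : Finset ℕ} (hA : A ⊆ V) (hi : i ∈ V) :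
    rep i j A ⊆ V := by
  intro x hx
  rcases mem_insert.1 hx with rfl | hx
  · exact hi
  · exact hA (mem_of_mem_erase hx)

theorem mem_moved {i j : ℕ} {F : Finset (Finset ℕ)} {A : Finset ℕ} :
    A ∈ moved i j F ↔ A ∈ F ∧ j ∈ A ∧ i ∉ A ∧ rep i j A ∉ F := by
  simp [moved, mem_filter, and_assoc]

theorem rep_injOn {i j : ℕ} {F : Finset (Finset ℕ)} :
    Set.InjOn (rep i j) (moved i j F) := by
  intro A hA B hB h
  rw [mem_coe, mem_moved] at hA hB
  rw [← rep_recover hA.2.1 hA.2.2.1, ← rep_recover hB.2.1 hB.2.2.1, h]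

theorem comp_disj {i j : ℕ} {F : Finset (Finset ℕ)} :
    Disjoint (F \ moved i j F) ((moved i j F).image (rep i j)) := by
  rw [disjoint_right]
  intro X hX hX'
  obtain ⟨B, hB, rfl⟩ := mem_image.1 hX
  exact (mem_moved.1 hB).2.2.2 (mem_sdiff.1 hX').1

theorem comp_card (i j : ℕ) (F : Finset (Finset ℕ)) : (comp i j F).card = F.card := by
  have hsub : moved i j F ⊆ F := filter_subset _ _
  rw [comp, card_union_of_disjoint comp_disj, card_image_of_injOn rep_injOn,
    card_sdiff_of_subset hsub]
  have := card_le_card hsub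
  omega

theorem mem_comp {i j : ℕ} {F : Finset (Finset ℕ)} {X : Finset ℕ} :
    X ∈ comp i j F ↔ (X ∈ F ∧ X ∉ moved i j F) ∨ ∃ B ∈ moved i j F, X = rep i j B := by
  simp only [comp, mem_union, mem_sdiff, mem_image]
  constructor
  · rintro (h | ⟨B, hB, rfl⟩)
    · exact Or.inl h
    · exact Or.inr ⟨B, hB, rfl⟩
  · rintro (h | ⟨B, hB, rfl⟩)
    · exact Or.inl h
    · exact Or.inr ⟨B, hB, rfl⟩

theorem comp_sized {i j : ℕ} {V : Finset ℕ} {k : ℕ} {F : Finset (Finset ℕ)}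
    (hi : i ∈ V) (hF : ∀ A ∈ F, A ⊆ V ∧ A.card = k) :
    ∀ X ∈ comp i j F, X ⊆ V ∧ X.card = k := by
  intro X hX
  rcases mem_comp.1 hX with ⟨h, _⟩ | ⟨B, hB, rfl⟩
  · exact hF X h
  · rw [mem_moved] at hB
    exact ⟨rep_subset (hF B hB.1).1 hi, by rw [rep_card hB.2.1 hB.2.2.1, (hF B hB.1).2]⟩

theorem comp_intersecting {i j : ℕ} (hij : i ≠ j) {F : Finset (Finset ℕ)}
    (hint : ∀ A ∈ F, ∀ B ∈ F, (A ∩ B).Nonempty) :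
    ∀ X ∈ comp i j F, ∀ Y ∈ comp i j F, (X ∩ Y).Nonempty := by
  -- key fact: any surviving set meets the rep of any moved set
  have key : ∀ X ∈ F, X ∉ moved i j F → ∀ B ∈ moved i j F, (X ∩ rep i j B).Nonempty := by
    intro X hX hXm B hBm
    rw [mem_moved] at hBm
    obtain ⟨hBF, hjB, hiB, hrB⟩ := hBm
    obtain ⟨x, hx⟩ := hint X hX B hBF
    rw [mem_inter] at hx
    by_cases hxj : x = j
    · -- X ∩ B ∋ j
      rw [hxj] at hx
      by_cases hiX : i ∈ X
      · exact ⟨i, mem_inter.2 ⟨hiX, mem_rep_i _ _ _⟩⟩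
      · -- X contains j, not i; X not moved means rep X ∈ F
        have hrX : rep i j X ∈ F := by
          by_contra h
          exact hXm (mem_moved.2 ⟨hX, hx.1, hiX, h⟩)
        obtain ⟨y, hy⟩ := hint _ hrX B hBF
        rw [mem_inter] at hy
        have hyi : y ≠ i := fun h => hiB (h ▸ hy.2)
        have hyX : y ∈ X := by
          rcases mem_insert.1 hy.1 with rfl | h
          · exact absurd rfl hyi
          · exact mem_of_mem_erase h
        have hyj : y ≠ j := by
          rintro rfl
          exact (not_mem_rep_j hij X) hy.1
        exact ⟨y, mem_inter.2 ⟨hyX, mem_insert_of_mem (mem_erase.2 ⟨hyj, hy.2⟩)⟩⟩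
    · exact ⟨x, mem_inter.2 ⟨hx.1, mem_insert_of_mem (mem_erase.2 ⟨hxj, hx.2⟩)⟩⟩
  intro X hX Y hY
  rcases mem_comp.1 hX with ⟨hXF, hXm⟩ | ⟨B, hBm, rfl⟩
  · rcases mem_comp.1 hY with ⟨hYF, hYm⟩ | ⟨C, hCm, rfl⟩
    · exact hint X hXF Y hYF
    · exact key X hXF hXm C hCm
  · rcases mem_comp.1 hY with ⟨hYF, hYm⟩ | ⟨C, hCm, rfl⟩
    · obtain ⟨x, hx⟩ := key Y hYF hYm B hBm
      rw [mem_inter] at hx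
      exact ⟨x, mem_inter.2 ⟨hx.2, hx.1⟩⟩
    · -- both moved: B ∩ C nonempty
      rw [mem_moved] at hBm hCm
      obtain ⟨x, hx⟩ := hint B hBm.1 C hCm.1
      rw [mem_inter] at hx
      by_cases hxj : x = j
      · exact ⟨i, mem_inter.2 ⟨mem_rep_i _ _ _, mem_rep_i _ _ _⟩⟩
      · exact ⟨x, mem_inter.2 ⟨mem_insert_of_mem (mem_erase.2 ⟨hxj, hx.1⟩),
          mem_insert_of_mem (mem_erase.2 ⟨hxj, hx.2⟩)⟩⟩

def pot (F : Finset (Finset ℕ)) : ℕ := ∑ A ∈ F, ∑ a ∈ A, a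

theorem comp_pot_lt {i j : ℕ} (hij : i < j) {F : Finset (Finset ℕ)}
    (hne : (moved i j F).Nonempty) : pot (comp i j F) < pot F := by
  have hsub : moved i j F ⊆ F := filter_subset _ _
  have h1 : pot F = ∑ A ∈ F \ moved i j F, ∑ a ∈ A, a + ∑ A ∈ moved i j F, ∑ a ∈ A, a :=
    (sum_sdiff hsub).symm
  have h2 : pot (comp i j F)
      = ∑ A ∈ F \ moved i j F, ∑ a ∈ A, a + ∑ B ∈ moved i j F, ∑ a ∈ rep i j B, a := by
    rw [pot, comp, sum_union comp_disj, sum_image rep_injOn]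
  rw [h1, h2]
  apply Nat.add_lt_add_left
  apply Finset.sum_lt_sum_of_nonempty hne
  intro B hB
  rw [mem_moved] at hB
  obtain ⟨_, hjB, hiB, _⟩ := hB
  have hiB' : i ∉ B.erase j := fun h => hiB (mem_of_mem_erase h)
  have e1 : ∑ a ∈ rep i j B, a = i + ∑ a ∈ B.erase j, a := by
    rw [rep, sum_insert hiB']
  have e2 : ∑ a ∈ B, a = j + ∑ a ∈ B.erase j, a := by
    rw [add_comm, Finset.sum_erase_add _ _ hjB]
  omega

theorem comp_eq_of_moved_empty {i j : ℕ} {F : Finset (Finset ℕ)}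
    (h : moved i j F = ∅) : comp i j F = F := by
  rw [comp, h]
  simp

def Shifted (n : ℕ) (F : Finset (Finset ℕ)) : Prop :=
  ∀ i j : ℕ, i ∈ Icc 1 n → j ∈ Icc 1 n → i < j → moved i j F = ∅

theorem Shifted.closure {n : ℕ} {F : Finset (Finset ℕ)} (h : Shifted n F)
    {i j : ℕ} (hi : i ∈ Icc 1 n) (hj : j ∈ Icc 1 n) (hij : i < j)
    {A : Finset ℕ} (hA : A ∈ F) (hjA : j ∈ A) (hiA : i ∉ A) : rep i j A ∈ F := by
  by_contra hrep
  have : A ∈ moved i j F := mem_filter.2 ⟨hA, hjA, hiA, hrep⟩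
  rw [h i j hi hj hij] at this
  exact notMem_empty _ this

def Fbar (n : ℕ) (F : Finset (Finset ℕ)) : Finset (Finset ℕ) :=
  F.filter (fun A => n ∉ A)

def Ftop (n : ℕ) (F : Finset (Finset ℕ)) : Finset (Finset ℕ) :=
  (F.filter (fun A => n ∈ A)).image (fun A => A.erase n)

theorem erase_injOn' {n : ℕ} {F : Finset (Finset ℕ)} :
    Set.InjOn (fun A : Finset ℕ => A.erase n) (F.filter (fun A => n ∈ A)) := by
  intro A hA B hB h
  simp only [coe_filter, Set.mem_setOf_eq] at hA hB
  rw [← insert_erase hA.2, ← insert_erase hB.2]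
  simp only at h
  rw [h]

theorem card_slice (n : ℕ) (F : Finset (Finset ℕ)) :
    F.card = (Fbar n F).card + (Ftop n F).card := by
  rw [Ftop, card_image_of_injOn erase_injOn', Fbar]
  rw [← card_filter_add_card_filter_not (p := fun A => n ∈ A)]
  omega

theorem mem_Ftop {n : ℕ} {F : Finset (Finset ℕ)} {X : Finset ℕ} :
    X ∈ Ftop n F ↔ ∃ A ∈ F, n ∈ A ∧ A.erase n = X := by
  simp only [Ftop, mem_image, mem_filter]
  constructor
  · rintro ⟨A, ⟨hA, hn⟩, rfl⟩; exact ⟨A, hA, hn, rfl⟩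
  · rintro ⟨A, hA, hn, rfl⟩; exact ⟨A, ⟨hA, hn⟩, rfl⟩

theorem Ftop_sized {n k : ℕ} (hk : 1 ≤ k) {F : Finset (Finset ℕ)}
    (hF : ∀ A ∈ F, A ⊆ Icc 1 n ∧ A.card = k) :
    ∀ X ∈ Ftop n F, X ⊆ Icc 1 (n - 1) ∧ X.card = k - 1 := by
  intro X hX
  obtain ⟨A, hA, hn, rfl⟩ := mem_Ftop.1 hX
  obtain ⟨hAV, hAc⟩ := hF A hA
  constructor
  · intro x hx
    rw [mem_erase] at hx
    have := hAV hx.2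
    rw [mem_Icc] at this ⊢
    have hxn : x ≠ n := hx.1
    omega
  · rw [card_erase_of_mem hn, hAc]

theorem Fbar_sized {n k : ℕ} {F : Finset (Finset ℕ)}
    (hF : ∀ A ∈ F, A ⊆ Icc 1 n ∧ A.card = k) :
    ∀ X ∈ Fbar n F, X ⊆ Icc 1 (n - 1) ∧ X.card = k := by
  intro X hX
  rw [Fbar, mem_filter] at hX
  obtain ⟨hXV, hXc⟩ := hF X hX.1
  refine ⟨?_, hXc⟩
  intro x hx
  have h1 := hXV hx
  rw [mem_Icc] at h1 ⊢
  have hxn : x ≠ n := fun h => hX.2 (h ▸ hx)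
  omega
theorem Ftop_intersecting {n k : ℕ} (hnk : 2 * k ≤ n)
    {F : Finset (Finset ℕ)}
    (hF : ∀ A ∈ F, A ⊆ Icc 1 n ∧ A.card = k)
    (hint : ∀ A ∈ F, ∀ B ∈ F, (A ∩ B).Nonempty)
    (hsh : Shifted n F) :
    ∀ X ∈ Ftop n F, ∀ Y ∈ Ftop n F, (X ∩ Y).Nonempty := by
  intro X hX Y hY
  obtain ⟨A, hA, hnA, rfl⟩ := mem_Ftop.1 hX
  obtain ⟨B, hB, hnB, rfl⟩ := mem_Ftop.1 hY
  by_contra hempty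
  rw [not_nonempty_iff_eq_empty] at hempty
  have hk1 : 1 ≤ k := by
    have := (hF A hA).2
    have : 0 < A.card := card_pos.2 ⟨n, hnA⟩
    omega
  have hAB : (A ∪ B).card ≤ 2 * k - 1 := by
    have h1 := card_union_add_card_inter A B
    have h2 : 0 < (A ∩ B).card := card_pos.2 ⟨n, mem_inter.2 ⟨hnA, hnB⟩⟩
    have := (hF A hA).2
    have := (hF B hB).2
    omega
  have hUpos : 0 < (Icc 1 (n - 1) \ (A ∪ B).erase n).card := by
    have hle := le_card_sdiff ((A ∪ B).erase n) (Icc 1 (n - 1))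
    have h1 : ((A ∪ B).erase n).card = (A ∪ B).card - 1 :=
      card_erase_of_mem (mem_union_left _ hnA)
    have h2 : (Icc 1 (n - 1)).card = n - 1 := by rw [Nat.card_Icc]; omega
    omega
  obtain ⟨x, hx⟩ := card_pos.1 hUpos
  rw [mem_sdiff] at hx
  obtain ⟨hxI, hxAB⟩ := hx
  have hxn : x < n := by rw [mem_Icc] at hxI; omega
  have hxicc : x ∈ Icc 1 n := by rw [mem_Icc] at hxI ⊢; omega
  have hnicc : n ∈ Icc 1 n := by rw [mem_Icc]; omega
  have hxA : x ∉ A := fun h => hxAB (mem_erase.2 ⟨Nat.ne_of_lt hxn, mem_union_left _ h⟩)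
  have hxB : x ∉ B := fun h => hxAB (mem_erase.2 ⟨Nat.ne_of_lt hxn, mem_union_right _ h⟩)
  have hrA : rep x n A ∈ F := hsh.closure hxicc hnicc hxn hA hnA hxA
  obtain ⟨y, hy⟩ := hint _ hrA B hB
  rw [mem_inter] at hy
  rcases mem_insert.1 hy.1 with rfl | hyA
  · exact hxB hy.2
  · have hyn : y ≠ n := (mem_erase.1 hyA).1
    have : y ∈ A.erase n ∩ B.erase n := mem_inter.2 ⟨hyA, mem_erase.2 ⟨hyn, hy.2⟩⟩
    rw [hempty] at this
    exact notMem_empty _ this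

theorem Ftop_shifted {n : ℕ} {F : Finset (Finset ℕ)} (hsh : Shifted n F) :
    Shifted (n - 1) (Ftop n F) := by
  intro i j hi hj hij
  rw [eq_empty_iff_forall_notMem]
  intro X hX
  rw [mem_moved] at hX
  obtain ⟨hXF, hjX, hiX, hrX⟩ := hX
  obtain ⟨A, hA, hnA, rfl⟩ := mem_Ftop.1 hXF
  have hi' : i ∈ Icc 1 n := by rw [mem_Icc] at hi ⊢; omega
  have hj' : j ∈ Icc 1 n := by rw [mem_Icc] at hj ⊢; omega
  have hjA : j ∈ A := mem_of_mem_erase hjX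
  have hin : i ≠ n := by rw [mem_Icc] at hi; omega
  have hiA : i ∉ A := fun h => hiX (mem_erase.2 ⟨hin, h⟩)
  have hrA : rep i j A ∈ F := hsh.closure hi' hj' hij hA hjA hiA
  apply hrX
  rw [mem_Ftop]
  refine ⟨rep i j A, hrA, ?_, ?_⟩
  · have hnj : n ≠ j := by rw [mem_Icc] at hj; omega
    exact mem_insert_of_mem (mem_erase.2 ⟨hnj, hnA⟩)
  · rw [rep, rep, erase_insert_of_ne hin]
    congr 1
    ext x
    simp only [mem_erase]
    tauto

theorem shifted_unique : ∀ k : ℕ, 1 ≤ k → ∀ n : ℕ, 2 * k < n →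
    ∀ F : Finset (Finset ℕ),
    (∀ A ∈ F, A ⊆ Icc 1 n ∧ A.card = k) →
    (∀ A ∈ F, ∀ B ∈ F, (A ∩ B).Nonempty) →
    Shifted n F →
    F.card = (n - 1).choose (k - 1) →
    F = ((Icc 1 n).powersetCard k).filter (fun A => 1 ∈ A) := by
  intro k
  induction k with
  | zero => omega
  | succ k ih =>
    intro _ n hn F hF hint hsh hcard
    classical
    have hVn : (Icc 1 n).card = n := by rw [Nat.card_Icc]; omega
    have hV1 : (Icc 1 (n - 1)).card = n - 1 := by rw [Nat.card_Icc]; omega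
    have h1Icc : (1 : ℕ) ∈ Icc 1 n := by rw [mem_Icc]; omega
    rcases Nat.eq_zero_or_pos k with rfl | hk1
    · -- base case: k+1 = 1
      rw [Nat.choose_zero_right] at hcard
      obtain ⟨A, hAF⟩ := card_eq_one.1 hcard
      have hAmem : A ∈ F := hAF ▸ mem_singleton_self A
      obtain ⟨hAV, hAc⟩ := hF A hAmem
      obtain ⟨x, rfl⟩ := card_eq_one.1 hAc
      have hx : x ∈ Icc 1 n := hAV (mem_singleton_self x)
      have hx1 : x = 1 := by
        by_contra hne
        have hgt : 1 < x := by rw [mem_Icc] at hx; omega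
        have h1x : (1:ℕ) ∉ ({x} : Finset ℕ) := by
          rw [mem_singleton]; omega
        have := hsh.closure h1Icc hx hgt hAmem (mem_singleton_self x) h1x
        rw [hAF, mem_singleton] at this
        have h1mem : (1:ℕ) ∈ rep 1 x {x} := mem_insert_self _ _
        rw [this] at h1mem
        rw [mem_singleton] at h1mem
        omega
      subst hx1
      rw [hAF]
      ext B
      simp only [mem_singleton, mem_filter, mem_powersetCard]
      constructor
      · rintro rfl
        exact ⟨⟨hAV, hAc⟩, mem_singleton_self 1⟩
      · rintro ⟨⟨hBV, hBc⟩, h1B⟩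
        obtain ⟨y, rfl⟩ := card_eq_one.1 hBc
        rw [mem_singleton] at h1B
        rw [h1B]
    · -- inductive step: k ≥ 1
      have hFbar_sized := Fbar_sized hF
      have hFtop_sized := Ftop_sized (by omega) hF
      have hFbar_int : ∀ X ∈ Fbar n F, ∀ Y ∈ Fbar n F, (X ∩ Y).Nonempty :=
        fun X hX Y hY => hint X (filter_subset _ _ hX) Y (filter_subset _ _ hY)
      have hFtop_int := Ftop_intersecting (by omega) hF hint hsh
      have hbarle : (Fbar n F).card ≤ (n - 2).choose k := by
        have := ekr_ground hFbar_sized hFbar_int (by rw [hV1]; omega)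
        rw [hV1] at this
        have e : n - 1 - 1 = n - 2 := by omega
        rw [e] at this
        simpa using this
      have htople : (Ftop n F).card ≤ (n - 2).choose (k - 1) := by
        have := ekr_ground hFtop_sized hFtop_int (by rw [hV1]; omega)
        rw [hV1] at this
        have e : n - 1 - 1 = n - 2 := by omega
        have e2 : k + 1 - 1 = k := by omega
        rw [e, e2] at this
        exact this
      have hsplit := card_slice n F
      have hpascal : (n - 1).choose k = (n - 2).choose (k - 1) + (n - 2).choose k := by
        have e1 : n - 1 = (n - 2) + 1 := by omega
        have e2 : k = (k - 1) + 1 := by omega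
        rw [e1]
        conv_lhs => rw [e2]
        rw [Nat.choose_succ_succ]
        have e3 : (k - 1).succ = k := by omega
        rw [e3]
      have hcard' : F.card = (n - 1).choose k := by
        have e : k + 1 - 1 = k := by omega
        rwa [e] at hcard
      have htopeq : (Ftop n F).card = (n - 2).choose (k - 1) := by omega
      have hstar_top := ih hk1 (n - 1) (by omega) (Ftop n F)
        (fun X hX => ⟨(hFtop_sized X hX).1, by
          have := (hFtop_sized X hX).2; omega⟩)
        hFtop_int (Ftop_shifted hsh)
        (htopeq.trans (by congr 1))
      -- every member of F contains 1
      have h1all : ∀ B ∈ F, 1 ∈ B := by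
        intro B hB
        by_cases hnB : n ∈ B
        · have hmem : B.erase n ∈ Ftop n F := mem_Ftop.2 ⟨B, hB, hnB, rfl⟩
          rw [hstar_top, mem_filter] at hmem
          exact mem_of_mem_erase hmem.2
        · by_contra h1B
          have hBsub : B ⊆ Icc 1 (n - 1) := (Fbar_sized hF B (mem_filter.2 ⟨hB, hnB⟩)).1
          have hBc : B.card = k + 1 := (hF B hB).2
          have h1mem : (1:ℕ) ∈ Icc 1 (n - 1) := by rw [mem_Icc]; omega
          have hUcard : k - 1 ≤ (Icc 1 (n - 1) \ insert 1 B).card := by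
            have hle := le_card_sdiff (insert 1 B) (Icc 1 (n - 1))
            have : (insert 1 B).card = k + 2 := by
              rw [card_insert_of_notMem h1B]; omega
            omega
          obtain ⟨T, hTU, hTc⟩ := exists_subset_card_eq hUcard
          have h1T : (1:ℕ) ∉ T := fun h => (mem_sdiff.1 (hTU h)).2 (mem_insert_self _ _)
          have hA0card : (insert 1 T).card = k := by
            rw [card_insert_of_notMem h1T, hTc]; omega
          have hA0sub : insert 1 T ⊆ Icc 1 (n - 1) := by
            intro x hx
            rcases mem_insert.1 hx with rfl | hx
            · exact h1mem
            · exact (mem_sdiff.1 (hTU hx)).1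
          have hA0 : insert 1 T ∈ Ftop n F := by
            rw [hstar_top, mem_filter, mem_powersetCard]
            exact ⟨⟨hA0sub, hA0card⟩, mem_insert_self _ _⟩
          obtain ⟨C, hC, hnC, hCe⟩ := mem_Ftop.1 hA0
          obtain ⟨y, hy⟩ := hint B hB C hC
          rw [mem_inter] at hy
          have hCeq : C = insert n (insert 1 T) := by rw [← hCe, insert_erase hnC]
          have hyC : y ∈ insert n (insert 1 T) := hCeq ▸ hy.2
          rcases mem_insert.1 hyC with rfl | hyC
          · exact hnB hy.1
          rcases mem_insert.1 hyC with rfl | hyC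
          · exact h1B hy.1
          · exact (mem_sdiff.1 (hTU hyC)).2 (mem_insert_of_mem hy.1)
      have hsubstar : F ⊆ ((Icc 1 n).powersetCard (k+1)).filter (fun A => 1 ∈ A) := by
        intro A hA
        rw [mem_filter, mem_powersetCard]
        exact ⟨⟨(hF A hA).1, (hF A hA).2⟩, h1all A hA⟩
      apply eq_of_subset_of_card_le hsubstar
      rw [star_card h1Icc (by omega), hVn]
      rw [hcard]
def lam (W : Finset ℕ) (l : ℕ) (G : Finset (Finset ℕ)) : Finset (Finset ℕ) :=
  (W.powersetCard l).filter (fun B => ∃ A ∈ G, Disjoint A B)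

theorem mates_eq {W A : Finset ℕ} {l' : ℕ} (hA : A ⊆ W) :
    (W.powersetCard l').filter (fun B => Disjoint A B) = (W \ A).powersetCard l' := by
  ext B
  simp only [mem_filter, mem_powersetCard, subset_sdiff]
  constructor
  · rintro ⟨⟨h1, h2⟩, h3⟩
    exact ⟨⟨h1, h3.symm⟩, h2⟩
  · rintro ⟨⟨h1, h2⟩, h3⟩
    exact ⟨⟨h1, h3⟩, h2.symm⟩

theorem mates_card {W A : Finset ℕ} {l l' : ℕ} (hA : A ⊆ W) (hAc : A.card = l) :
    (((W.powersetCard l').filter (fun B => Disjoint A B))).card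
      = (W.card - l).choose l' := by
  rw [mates_eq hA, card_powersetCard, card_sdiff_of_subset hA, hAc]

theorem lam_ge {W : Finset ℕ} {l : ℕ} (hl : 2 * l ≤ W.card)
    {G : Finset (Finset ℕ)}
    (hG : ∀ A ∈ G, A ⊆ W ∧ A.card = l) :
    G.card ≤ (lam W l G).card ∧
    ((lam W l G).card ≤ G.card →
      ∀ B ∈ lam W l G, ∀ C ∈ W.powersetCard l, Disjoint B C → C ∈ G) := by
  classical
  set L := W.powersetCard l with hL
  set d := (W.card - l).choose l with hd
  have hdpos : 0 < d := Nat.choose_pos (by omega)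
  have hGL : G ⊆ L := fun A hA => mem_powersetCard.2 (hG A hA)
  have hswap : ∑ A ∈ G, (L.filter (fun B => Disjoint A B)).card
      = ∑ B ∈ L, (G.filter (fun A => Disjoint A B)).card := by
    simp only [card_filter]
    rw [Finset.sum_comm]
  have hLHS : ∑ A ∈ G, (L.filter (fun B => Disjoint A B)).card = G.card * d := by
    rw [Finset.sum_congr rfl (fun A hA => mates_card (hG A hA).1 (hG A hA).2),
      sum_const, smul_eq_mul]
  have hlamL : lam W l G ⊆ L := filter_subset _ _
  have hzero : ∀ B ∈ L, B ∉ lam W l G → (G.filter (fun A => Disjoint A B)).card = 0 := by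
    intro B hB hBlam
    rw [card_eq_zero, filter_eq_empty_iff]
    intro A hA hdisj
    exact hBlam (mem_filter.2 ⟨hB, A, hA, hdisj⟩)
  have hrestrict : ∑ B ∈ L, (G.filter (fun A => Disjoint A B)).card
      = ∑ B ∈ lam W l G, (G.filter (fun A => Disjoint A B)).card :=
    (Finset.sum_subset hlamL (fun B hB hB' => hzero B hB hB')).symm
  have hbound : ∀ B ∈ lam W l G, (G.filter (fun A => Disjoint A B)).card ≤ d := by
    intro B hB
    have hBW := mem_powersetCard.1 (hlamL hB)
    have hsub : G.filter (fun A => Disjoint A B) ⊆ L.filter (fun A => Disjoint B A) := by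
      intro A hA
      rw [mem_filter] at hA ⊢
      exact ⟨hGL hA.1, hA.2.symm⟩
    calc (G.filter (fun A => Disjoint A B)).card
        ≤ (L.filter (fun A => Disjoint B A)).card := card_le_card hsub
      _ = d := mates_card hBW.1 hBW.2
  have htotal : G.card * d = ∑ B ∈ lam W l G, (G.filter (fun A => Disjoint A B)).card := by
    rw [← hLHS, hswap, hrestrict]
  have hle : G.card * d ≤ (lam W l G).card * d := by
    rw [htotal]
    calc ∑ B ∈ lam W l G, (G.filter (fun A => Disjoint A B)).card
        ≤ ∑ _B ∈ lam W l G, d := Finset.sum_le_sum hbound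
      _ = (lam W l G).card * d := by rw [sum_const, smul_eq_mul]
  refine ⟨Nat.le_of_mul_le_mul_right hle hdpos, ?_⟩
  intro hcardle B hB C hC hdisj
  -- equality case: every B in lam has all its mates in G
  have hall : ∀ B' ∈ lam W l G, (G.filter (fun A => Disjoint A B')).card = d := by
    by_contra hcon
    push_neg at hcon
    obtain ⟨B0, hB0, hB0ne⟩ := hcon
    have hB0lt : (G.filter (fun A => Disjoint A B0)).card < d :=
      lt_of_le_of_ne (hbound B0 hB0) hB0ne
    have hstrict : ∑ B' ∈ lam W l G, (G.filter (fun A => Disjoint A B')).card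
        < ∑ _B ∈ lam W l G, d :=
      Finset.sum_lt_sum (fun b hb => hbound b hb) ⟨B0, hB0, hB0lt⟩
    rw [← htotal, sum_const, smul_eq_mul] at hstrict
    have : G.card * d ≥ (lam W l G).card * d := Nat.mul_le_mul_right d hcardle
    omega
  -- now show C ∈ G
  have hBW := mem_powersetCard.1 (hlamL hB)
  have hmateseq : G.filter (fun A => Disjoint A B) = L.filter (fun A => Disjoint B A) := by
    apply eq_of_subset_of_card_le
    · intro A hA
      rw [mem_filter] at hA ⊢
      exact ⟨hGL hA.1, hA.2.symm⟩
    · rw [mates_card hBW.1 hBW.2, hall B hB]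
  have : C ∈ L.filter (fun A => Disjoint B A) := mem_filter.2 ⟨hC, hdisj⟩
  rw [← hmateseq, mem_filter] at this
  exact this.1

theorem conn {W : Finset ℕ} {l : ℕ} (hl : 1 ≤ l) (hm : 2 * l < W.card)
    {U : Finset (Finset ℕ)} (hUL : U ⊆ W.powersetCard l)
    (hcl : ∀ A ∈ U, ∀ B ∈ W.powersetCard l, Disjoint A B → B ∈ U)
    (hne : U.Nonempty) : U = W.powersetCard l := by
  classical
  obtain ⟨A0, hA0⟩ := hne
  have hstep : ∀ A ∈ U, ∀ A' ∈ W.powersetCard l, (A' \ A).card ≤ 1 → A' ∈ U := by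
    intro A hA A' hA' hd
    have hAW := mem_powersetCard.1 (hUL hA)
    have hA'W := mem_powersetCard.1 hA'
    have hun : (A ∪ A').card ≤ l + 1 := by
      have : A ∪ A' = A ∪ (A' \ A) := by
        ext x; simp only [mem_union, mem_sdiff]; tauto
      rw [this]
      calc (A ∪ (A' \ A)).card ≤ A.card + (A' \ A).card := card_union_le _ _
        _ ≤ l + 1 := by rw [hAW.2]; omega
    have hBex : l ≤ (W \ (A ∪ A')).card := by
      have h1 := le_card_sdiff (A ∪ A') W
      omega
    obtain ⟨B, hBsub, hBc⟩ := exists_subset_card_eq hBex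
    have hBW : B ∈ W.powersetCard l := mem_powersetCard.2
      ⟨hBsub.trans (sdiff_subset), hBc⟩
    have hdisjAB : Disjoint A B := by
      rw [disjoint_right]
      intro x hxB hxA
      exact (mem_sdiff.1 (hBsub hxB)).2 (mem_union_left _ hxA)
    have hBU : B ∈ U := hcl A hA B hBW hdisjAB
    have hdisjBA' : Disjoint B A' := by
      rw [disjoint_left]
      intro x hxB hxA'
      exact (mem_sdiff.1 (hBsub hxB)).2 (mem_union_right _ hxA')
    exact hcl B hBU A' hA' hdisjBA'
  have hmain : ∀ t : ℕ, ∀ A ∈ U, ∀ A' ∈ W.powersetCard l, (A' \ A).card = t → A' ∈ U := by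
    intro t
    induction t with
    | zero =>
      intro A hA A' hA' hd
      have hsub : A' ⊆ A := by
        intro x hx
        by_contra hxa
        have : x ∈ A' \ A := mem_sdiff.2 ⟨hx, hxa⟩
        rw [card_eq_zero.1 hd] at this
        exact notMem_empty _ this
      have hAW := mem_powersetCard.1 (hUL hA)
      have hA'W := mem_powersetCard.1 hA'
      have : A' = A := eq_of_subset_of_card_le hsub (by omega)
      rwa [this]
    | succ t iht =>
      intro A hA A' hA' hd
      have hAW := mem_powersetCard.1 (hUL hA)
      have hA'W := mem_powersetCard.1 hA'
      have hx : (A' \ A).Nonempty := card_pos.1 (by omega)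
      obtain ⟨x, hx⟩ := hx
      rw [mem_sdiff] at hx
      have hy : (A \ A').Nonempty := by
        apply card_pos.1
        have h1 := card_sdiff_add_card_inter A' A
        have h2 := card_sdiff_add_card_inter A A'
        rw [inter_comm] at h2
        omega
      obtain ⟨y, hy⟩ := hy
      rw [mem_sdiff] at hy
      have hxy : x ≠ y := fun h => hy.2 (h ▸ hx.1)
      -- A1 = insert x (A.erase y)
      have hxAe : x ∉ A.erase y := fun h => hx.2 (mem_of_mem_erase h)
      have hA1card : (insert x (A.erase y)).card = l := by
        rw [card_insert_of_notMem hxAe, card_erase_of_mem hy.1, hAW.2]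
        omega
      have hA1W : insert x (A.erase y) ∈ W.powersetCard l := by
        rw [mem_powersetCard]
        refine ⟨?_, hA1card⟩
        intro z hz
        rcases mem_insert.1 hz with rfl | hz
        · exact hA'W.1 hx.1
        · exact hAW.1 (mem_of_mem_erase hz)
      have hA1diff : ((insert x (A.erase y)) \ A).card ≤ 1 := by
        apply card_le_one.2
        intro a ha b hb
        rw [mem_sdiff] at ha hb
        rcases mem_insert.1 ha.1 with rfl | ha'
        · rcases mem_insert.1 hb.1 with rfl | hb'
          · rfl
          · exact absurd (mem_of_mem_erase hb') hb.2
        · exact absurd (mem_of_mem_erase ha') ha.2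
      have hA1U : insert x (A.erase y) ∈ U := hstep A hA _ hA1W hA1diff
      have hdiff : (A' \ insert x (A.erase y)).card = t := by
        have heq : A' \ insert x (A.erase y) = (A' \ A).erase x := by
          ext z
          simp only [mem_sdiff, mem_erase, mem_insert, not_or]
          constructor
          · rintro ⟨hzA', hzx, hz2⟩
            have hzy : z ≠ y := fun h => hy.2 (h ▸ hzA')
            exact ⟨hzx, hzA', fun hzA => hz2 ⟨hzy, hzA⟩⟩
          · rintro ⟨hzx, hzA', hzA⟩
            exact ⟨hzA', hzx, fun h => hzA h.2⟩
        rw [heq, card_erase_of_mem (mem_sdiff.2 hx), hd]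
        omega
      exact iht _ hA1U A' hA' hdiff
  apply Finset.Subset.antisymm hUL
  intro A' hA'
  exact hmain _ A0 hA0 A' hA' rfl
theorem cross_lemma {W : Finset ℕ} {l : ℕ} (hl : 1 ≤ l) (hm : 2 * l < W.card)
    {G H : Finset (Finset ℕ)}
    (hG : ∀ A ∈ G, A ⊆ W ∧ A.card = l) (hH : ∀ A ∈ H, A ⊆ W ∧ A.card = l)
    (hGne : G.Nonempty) (hHne : H.Nonempty)
    (cross : ∀ A ∈ G, ∀ B ∈ H, (A ∩ B).Nonempty)
    (hsum : G.card + H.card = W.card.choose l) : False := by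
  classical
  set L := W.powersetCard l with hLdef
  have hLcard : L.card = W.card.choose l := card_powersetCard _ _
  have hGL : G ⊆ L := fun A hA => mem_powersetCard.2 (hG A hA)
  have hHL : H ⊆ L := fun A hA => mem_powersetCard.2 (hH A hA)
  -- H is disjoint from lam G, and G from lam H
  have hHlam : Disjoint H (lam W l G) := by
    rw [disjoint_left]
    intro B hB hBlam
    obtain ⟨A, hA, hdisj⟩ := (mem_filter.1 hBlam).2
    obtain ⟨x, hx⟩ := cross A hA B hB
    rw [mem_inter] at hx
    exact (disjoint_left.1 hdisj hx.1) hx.2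
  have hGlam : Disjoint G (lam W l H) := by
    rw [disjoint_left]
    intro A hA hAlam
    obtain ⟨B, hB, hdisj⟩ := (mem_filter.1 hAlam).2
    obtain ⟨x, hx⟩ := cross A hA B hB
    rw [mem_inter] at hx
    exact (disjoint_left.1 hdisj hx.2) hx.1
  have hlamGL : lam W l G ⊆ L := filter_subset _ _
  have hlamHL : lam W l H ⊆ L := filter_subset _ _
  obtain ⟨hGge, hGcl⟩ := lam_ge (by omega) hG
  obtain ⟨hHge, hHcl⟩ := lam_ge (by omega) hH
  -- card bounds
  have hunion1 : H.card + (lam W l G).card ≤ L.card := by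
    rw [← card_union_of_disjoint hHlam]
    exact card_le_card (union_subset hHL hlamGL)
  have hlamGcard : (lam W l G).card ≤ G.card := by omega
  have hunion2 : G.card + (lam W l H).card ≤ L.card := by
    rw [← card_union_of_disjoint hGlam]
    exact card_le_card (union_subset hGL hlamHL)
  have hlamHcard : (lam W l H).card ≤ H.card := by omega
  -- closure properties give that G ∪ lam G is all of L
  have hGclosed := hGcl hlamGcard
  have hHclosed := hHcl hlamHcard
  have hUG : G ∪ lam W l G = L := by
    apply conn hl hm (union_subset hGL hlamGL)
    · intro A hA B hB hdisj
      rcases mem_union.1 hA with hA | hA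
      · exact mem_union_right _ (mem_filter.2 ⟨hB, A, hA, hdisj⟩)
      · exact mem_union_left _ (hGclosed A hA B hB hdisj)
    · exact hGne.mono subset_union_left
  have hUH : H ∪ lam W l H = L := by
    apply conn hl hm (union_subset hHL hlamHL)
    · intro A hA B hB hdisj
      rcases mem_union.1 hA with hA | hA
      · exact mem_union_right _ (mem_filter.2 ⟨hB, A, hA, hdisj⟩)
      · exact mem_union_left _ (hHclosed A hA B hB hdisj)
    · exact hHne.mono subset_union_left
  -- hence H ⊆ G and G ⊆ H
  have hHG : H ⊆ G := by
    intro B hB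
    have : B ∈ G ∪ lam W l G := hUG ▸ hHL hB
    rcases mem_union.1 this with h | h
    · exact h
    · exact absurd h (disjoint_left.1 hHlam hB)
  have hGH : G ⊆ H := by
    intro A hA
    have : A ∈ H ∪ lam W l H := hUH ▸ hGL hA
    rcases mem_union.1 this with h | h
    · exact h
    · exact absurd h (disjoint_left.1 hGlam hA)
  have hGeqH : G = H := Finset.Subset.antisymm hGH hHG
  -- G is intersecting with 2|G| = C(m,l); EKR gives contradiction
  have hint : ∀ A ∈ G, ∀ B ∈ G, (A ∩ B).Nonempty := by
    intro A hA B hB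
    exact cross A hA B (hGH hB)
  have hekr : G.card ≤ (W.card - 1).choose (l - 1) := ekr_ground hG hint (by omega)
  have h2G : 2 * G.card = W.card.choose l := by
    rw [hGeqH] at hsum ⊢
    omega
  have hchoosepos : 0 < (W.card - 1).choose (l - 1) := Nat.choose_pos (by omega)
  have hid : W.card * ((W.card - 1).choose (l - 1)) = W.card.choose l * l := by
    have := Nat.add_one_mul_choose_eq (W.card - 1) (l - 1)
    have e1 : W.card - 1 + 1 = W.card := by omega
    have e2 : l - 1 + 1 = l := by omega
    rw [e1, e2] at this
    exact this
  -- from 2|G| = C and |G| ≤ C(m-1,l-1): m * C(m-1,l-1) = C*l = 2l*|G| ≤ 2l*C(m-1,l-1)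
  have hfin : W.card * ((W.card - 1).choose (l - 1)) ≤ 2 * l * ((W.card - 1).choose (l - 1)) := by
    calc W.card * ((W.card - 1).choose (l - 1)) = W.card.choose l * l := hid
      _ = 2 * G.card * l := by rw [h2G]
      _ = 2 * l * G.card := by ring
      _ ≤ 2 * l * ((W.card - 1).choose (l - 1)) := Nat.mul_le_mul_left _ hekr
  nlinarith [hfin, hchoosepos, hm]
theorem main_star (n k : ℕ) (hk : 1 ≤ k) (hn : 2 * k < n) :
    ∀ N : ℕ, ∀ F : Finset (Finset ℕ), pot F = N →
    (∀ A ∈ F, A ⊆ Icc 1 n ∧ A.card = k) →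
    (∀ A ∈ F, ∀ B ∈ F, (A ∩ B).Nonempty) →
    F.card = (n - 1).choose (k - 1) →
    ∃ p ∈ Icc 1 n, F = ((Icc 1 n).powersetCard k).filter (fun A => p ∈ A) := by
  intro N
  induction N using Nat.strong_induction_on with
  | _ N ihN =>
    intro F hpot hF hint hcard
    classical
    have hVn : (Icc 1 n).card = n := by rw [Nat.card_Icc]; omega
    -- dispatch k = 1
    rcases eq_or_lt_of_le hk with h1 | hk2
    · -- k = 1
      have hcard1 : F.card = 1 := by
        rw [← h1] at hcard
        simpa using hcard
      obtain ⟨A, hAF⟩ := card_eq_one.1 hcard1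
      have hAmem : A ∈ F := hAF ▸ mem_singleton_self A
      have hAc : A.card = k := (hF A hAmem).2
      obtain ⟨x, rfl⟩ := card_eq_one.1 (show A.card = 1 by omega)
      have hx : x ∈ Icc 1 n := (hF _ hAmem).1 (mem_singleton_self x)
      refine ⟨x, hx, ?_⟩
      rw [hAF]
      ext B
      simp only [mem_singleton, mem_filter, mem_powersetCard]
      constructor
      · rintro rfl
        exact ⟨⟨(hF _ hAmem).1, hAc⟩, mem_singleton_self x⟩
      · rintro ⟨⟨hBV, hBc⟩, hxB⟩
        obtain ⟨y, rfl⟩ := card_eq_one.1 (show B.card = 1 by omega)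
        rw [mem_singleton] at hxB
        rw [hxB]
    -- now k ≥ 2
    by_cases hsh : Shifted n F
    · exact ⟨1, by rw [mem_Icc]; omega,
        shifted_unique k hk n hn F hF hint hsh hcard⟩
    · simp only [Shifted, not_forall] at hsh
      obtain ⟨i, j, hiIcc, hjIcc, hij, hmv⟩ := hsh
      have hmvne : (moved i j F).Nonempty := nonempty_iff_ne_empty.2 hmv
      have hijne : i ≠ j := Nat.ne_of_lt hij
      set F' := comp i j F with hF'def
      have hF'card : F'.card = F.card := comp_card i j F
      have hF'sized : ∀ X ∈ F', X ⊆ Icc 1 n ∧ X.card = k := comp_sized hiIcc hF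
      have hF'int := comp_intersecting hijne hint
      have hF'pot : pot F' < N := hpot ▸ comp_pot_lt hij hmvne
      obtain ⟨p, hpIcc, hstar⟩ := ihN (pot F') hF'pot F' rfl hF'sized hF'int
        (by rw [hF'card]; exact hcard)
      by_cases hpij : p ≠ i ∧ p ≠ j
      · -- compression doesn't touch p : F is the star at p
        refine ⟨p, hpIcc, ?_⟩
        have hsub : F ⊆ ((Icc 1 n).powersetCard k).filter (fun A => p ∈ A) := by
          intro A hA
          rw [mem_filter, mem_powersetCard]
          refine ⟨⟨(hF A hA).1, (hF A hA).2⟩, ?_⟩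
          by_cases hAm : A ∈ moved i j F
          · have : rep i j A ∈ F' := mem_comp.2 (Or.inr ⟨A, hAm, rfl⟩)
            rw [hstar, mem_filter] at this
            rcases mem_insert.1 this.2 with h | h
            · exact absurd h hpij.1
            · exact mem_of_mem_erase h
          · have : A ∈ F' := mem_comp.2 (Or.inl ⟨hA, hAm⟩)
            rw [hstar, mem_filter] at this
            exact this.2
        apply eq_of_subset_of_card_le hsub
        rw [star_card (hpIcc) hk, hVn, hcard]
      · push_neg at hpij
        by_cases hpj : p = j
        · -- impossible
          exfalso
          rw [hpj] at hstar hpIcc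
          -- build A = insert j T with i ∉ A
          have hsub2 : ({i, j} : Finset ℕ) ⊆ Icc 1 n := by
            intro z hz
            rcases mem_insert.1 hz with rfl | hz
            · exact hiIcc
            · rw [mem_singleton] at hz; exact hz ▸ hpIcc
          have hc2 : ({i, j} : Finset ℕ).card = 2 := by
            rw [card_insert_of_notMem (by rw [mem_singleton]; exact hijne), card_singleton]
          have hTcard : k - 1 ≤ (Icc 1 n \ {i, j}).card := by
            have := le_card_sdiff ({i, j} : Finset ℕ) (Icc 1 n)
            omega
          obtain ⟨T, hTsub, hTc⟩ := exists_subset_card_eq hTcard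
          have hiT : i ∉ T := fun h => (mem_sdiff.1 (hTsub h)).2 (mem_insert_self _ _)
          have hpT : j ∉ T := fun h =>
            (mem_sdiff.1 (hTsub h)).2 (mem_insert_of_mem (mem_singleton_self _))
          have hAcard : (insert j T).card = k := by
            rw [card_insert_of_notMem hpT, hTc]; omega
          have hAsub : insert j T ⊆ Icc 1 n := by
            intro z hz
            rcases mem_insert.1 hz with rfl | hz
            · exact hpIcc
            · exact (mem_sdiff.1 (hTsub hz)).1
          have hAF' : insert j T ∈ F' := by
            rw [hstar, mem_filter, mem_powersetCard]
            exact ⟨⟨hAsub, hAcard⟩, mem_insert_self _ _⟩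
          have hiA : i ∉ insert j T := by
            intro h
            rcases mem_insert.1 h with h | h
            · exact hijne h
            · exact hiT h
          have hAmem : insert j T ∈ F ∧ insert j T ∉ moved i j F := by
            rcases mem_comp.1 hAF' with h | ⟨B, hB, hrep⟩
            · exact h
            · exact absurd (hrep ▸ mem_rep_i i j B) hiA
          have hrepF : rep i j (insert j T) ∈ F := by
            by_contra h
            exact hAmem.2 (mem_moved.2 ⟨hAmem.1, mem_insert_self _ _, hiA, h⟩)
          have hrepnm : rep i j (insert j T) ∉ moved i j F := by
            intro h
            exact (mem_moved.1 h).2.2.1 (mem_rep_i i j _)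
          have : rep i j (insert j T) ∈ F' := mem_comp.2 (Or.inl ⟨hrepF, hrepnm⟩)
          rw [hstar, mem_filter] at this
          exact not_mem_rep_j hijne _ this.2
        · -- p = i
          have hpi : p = i := by tauto
          rw [hpi] at hstar
          -- F0 / F1 split
          have hF1 : ∀ A ∈ F, i ∉ A → (j ∈ A ∧ A ∈ moved i j F) := by
            intro A hA hiA
            by_cases hAm : A ∈ moved i j F
            · exact ⟨(mem_moved.1 hAm).2.1, hAm⟩
            · have : A ∈ F' := mem_comp.2 (Or.inl ⟨hA, hAm⟩)
              rw [hstar, mem_filter] at this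
              exact absurd this.2 hiA
          have hijall : ∀ C, C ⊆ Icc 1 n → C.card = k → i ∈ C → j ∈ C → C ∈ F := by
            intro C hCsub hCc hiC hjC
            have hCF' : C ∈ F' := by
              rw [hstar, mem_filter, mem_powersetCard]
              exact ⟨⟨hCsub, hCc⟩, hiC⟩
            rcases mem_comp.1 hCF' with h | ⟨B, hB, hrep⟩
            · exact h.1
            · exact absurd (hrep ▸ hjC) (not_mem_rep_j hijne B)
          obtain ⟨B0, hB0m⟩ := hmvne
          have hB0 := mem_moved.1 hB0m
          by_cases hFj : ∀ E ∈ F, i ∈ E → j ∈ E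
          · -- F = star at j
            refine ⟨j, hjIcc, ?_⟩
            have hsub : F ⊆ ((Icc 1 n).powersetCard k).filter (fun A => j ∈ A) := by
              intro A hA
              rw [mem_filter, mem_powersetCard]
              refine ⟨⟨(hF A hA).1, (hF A hA).2⟩, ?_⟩
              by_cases hiA : i ∈ A
              · exact hFj A hA hiA
              · exact (hF1 A hA hiA).1
            apply eq_of_subset_of_card_le hsub
            rw [star_card hjIcc hk, hVn, hcard]
          · -- contradiction via the cross-intersecting lemma
            exfalso
            push_neg at hFj
            obtain ⟨E0, hE0F, hiE0, hjE0⟩ := hFj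
            set W := Icc 1 n \ ({i, j} : Finset ℕ) with hWdef
            have hsub2 : ({i, j} : Finset ℕ) ⊆ Icc 1 n := by
              intro z hz
              rcases mem_insert.1 hz with rfl | hz
              · exact hiIcc
              · rw [mem_singleton] at hz; exact hz ▸ hjIcc
            have hc2 : ({i, j} : Finset ℕ).card = 2 := by
              rw [card_insert_of_notMem (by rw [mem_singleton]; exact hijne), card_singleton]
            have hWcard : W.card = n - 2 := by
              rw [hWdef, card_sdiff_of_subset hsub2, hc2, hVn]
            set G := ((F.filter (fun E => i ∈ E ∧ j ∉ E)).image (fun E => E.erase i))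
              with hGdef
            set H := ((F.filter (fun A => i ∉ A)).image (fun A => A.erase j)) with hHdef
            have hGprop : ∀ X ∈ G, X ⊆ W ∧ X.card = k - 1 := by
              intro X hX
              obtain ⟨E, hE, rfl⟩ := mem_image.1 hX
              rw [mem_filter] at hE
              obtain ⟨hEF, hiE, hjE⟩ := hE
              constructor
              · intro z hz
                rw [mem_erase] at hz
                rw [hWdef, mem_sdiff]
                refine ⟨(hF E hEF).1 hz.2, ?_⟩
                intro hmem
                rcases mem_insert.1 hmem with rfl | hmem
                · exact hz.1 rfl
                · rw [mem_singleton] at hmem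
                  subst hmem
                  exact hjE hz.2
              · rw [card_erase_of_mem hiE, (hF E hEF).2]
            have hHprop : ∀ X ∈ H, X ⊆ W ∧ X.card = k - 1 := by
              intro X hX
              obtain ⟨A, hA, rfl⟩ := mem_image.1 hX
              rw [mem_filter] at hA
              obtain ⟨hAF, hiA⟩ := hA
              have hjA : j ∈ A := (hF1 A hAF hiA).1
              constructor
              · intro z hz
                rw [mem_erase] at hz
                rw [hWdef, mem_sdiff]
                refine ⟨(hF A hAF).1 hz.2, ?_⟩
                intro hmem
                rcases mem_insert.1 hmem with rfl | hmem
                · exact hiA hz.2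
                · rw [mem_singleton] at hmem
                  exact hz.1 hmem
              · rw [card_erase_of_mem hjA, (hF A hAF).2]
            have hGne : G.Nonempty :=
              ⟨E0.erase i, mem_image.2 ⟨E0, mem_filter.2 ⟨hE0F, hiE0, hjE0⟩, rfl⟩⟩
            have hHne : H.Nonempty :=
              ⟨B0.erase j, mem_image.2 ⟨B0, mem_filter.2 ⟨hB0.1, hB0.2.2.1⟩, rfl⟩⟩
            have hcross : ∀ X ∈ G, ∀ Y ∈ H, (X ∩ Y).Nonempty := by
              intro X hX Y hY
              obtain ⟨E, hE, rfl⟩ := mem_image.1 hX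
              obtain ⟨A, hA, rfl⟩ := mem_image.1 hY
              rw [mem_filter] at hE hA
              obtain ⟨x, hx⟩ := hint E hE.1 A hA.1
              rw [mem_inter] at hx
              have hxi : x ≠ i := fun h => hA.2 (h ▸ hx.2)
              have hxj : x ≠ j := fun h => hE.2.2 (h ▸ hx.1)
              exact ⟨x, mem_inter.2 ⟨mem_erase.2 ⟨hxi, hx.1⟩, mem_erase.2 ⟨hxj, hx.2⟩⟩⟩
            -- cardinalities
            have hGcard : G.card = (F.filter (fun E => i ∈ E ∧ j ∉ E)).card := by
              rw [hGdef]
              apply card_image_of_injOn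
              intro A hA B hB h
              simp only [coe_filter, Set.mem_setOf_eq] at hA hB
              have h' : A.erase i = B.erase i := h
              rw [← insert_erase hA.2.1, ← insert_erase hB.2.1, h']
            have hHcard : H.card = (F.filter (fun A => i ∉ A)).card := by
              rw [hHdef]
              apply card_image_of_injOn
              intro A hA B hB h
              simp only [coe_filter, Set.mem_setOf_eq] at hA hB
              have hjA : j ∈ A := (hF1 A hA.1 hA.2).1
              have hjB : j ∈ B := (hF1 B hB.1 hB.2).1
              have h' : A.erase j = B.erase j := h
              rw [← insert_erase hjA, ← insert_erase hjB, h']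
            -- the pair sets: filter (i ∈ · ∧ j ∈ ·) F = all pair sets
            have hpairs : F.filter (fun E => i ∈ E ∧ j ∈ E)
                = ((Icc 1 n).powersetCard k).filter (fun C => i ∈ C ∧ j ∈ C) := by
              apply Finset.Subset.antisymm
              · intro E hE
                rw [mem_filter] at hE ⊢
                exact ⟨mem_powersetCard.2 ⟨(hF E hE.1).1, (hF E hE.1).2⟩, hE.2⟩
              · intro C hC
                rw [mem_filter, mem_powersetCard] at hC
                rw [mem_filter]
                exact ⟨hijall C hC.1.1 hC.1.2 hC.2.1 hC.2.2, hC.2⟩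
            have hpairscard : (F.filter (fun E => i ∈ E ∧ j ∈ E)).card
                = (n - 2).choose (k - 2) := by
              rw [hpairs, pair_card hiIcc hjIcc hijne (by omega), hVn]
            -- splits
            have hsplit1 : (F.filter (fun E => i ∈ E)).card
                = (F.filter (fun E => i ∈ E ∧ j ∈ E)).card
                  + (F.filter (fun E => i ∈ E ∧ j ∉ E)).card := by
              rw [← filter_filter, ← filter_filter,
                card_filter_add_card_filter_not (p := fun E => j ∈ E)]
            have hsplit2 : F.card = (F.filter (fun E => i ∈ E)).card
                + (F.filter (fun E => i ∉ E)).card := by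
              rw [card_filter_add_card_filter_not (p := fun E => i ∈ E)]
            have hpascal : (n - 1).choose (k - 1)
                = (n - 2).choose (k - 2) + (n - 2).choose (k - 1) := by
              have e1 : n - 1 = (n - 2) + 1 := by omega
              have e2 : k - 1 = (k - 2) + 1 := by omega
              rw [e1, e2, Nat.choose_succ_succ]
            have hsum : G.card + H.card = W.card.choose (k - 1) := by
              rw [hGcard, hHcard, hWcard]
              omega
            exact cross_lemma (by omega) (by omega) hGprop hHprop hGne hHne hcross
              (by rwa [hWcard] at hsum ⊢)

theorem EKR_extremal (n k : ℕ) (hk : 1 ≤ k) (hn : 2 * k < n)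
    (F : Finset (Finset ℕ))
    (hF : ∀ A ∈ F, A ∈ (Finset.Icc 1 n).powersetCard k)
    (hint : ∀ A ∈ F, ∀ B ∈ F, (A ∩ B).Nonempty)
    (hcard : F.card = (n - 1).choose (k - 1)) :
    ∃ p ∈ Finset.Icc 1 n,
      F = ((Finset.Icc 1 n).powersetCard k).filter (fun A => p ∈ A) := by
  exact main_star n k hk hn (pot F) F rfl
    (fun A hA => mem_powersetCard.1 (hF A hA)) hint hcard
end

section
/- For 3 ≤ i ≤ k+1, the family M_i = {F ∈ ([n] choose k) : 1 ∈ F and F ∩ [2,i] ≠ ∅} ∪ {F ∈ ([n] choose k) : 1 ∉ F and [2,i] ⊆ F} is intersecting and has size |M_i| = Σ_{j=2}^{i} C(n-j, k-2) + C(n-i, k-i+1). -/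
open Finset

/-- The family `M_i` on ground set `[n] = {1,…,n}`. -/
def familyM (n k i : ℕ) : Finset (Finset ℕ) :=
  ((Finset.Icc 1 n).powersetCard k).filter
    (fun F => (1 ∈ F ∧ (F ∩ Finset.Icc 2 i).Nonempty) ∨
              (1 ∉ F ∧ Finset.Icc 2 i ⊆ F))

/-- Family of sets with min of `F ∩ [2,i]` equal to `j`. -/
private def famA (n k i j : ℕ) : Finset (Finset ℕ) :=
  ((Finset.Icc 1 n).powersetCard k).filter
    (fun F => 1 ∈ F ∧ j ∈ F ∧ ∀ x ∈ F, x ∈ Finset.Icc 2 i → j ≤ x)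

private lemma famA_card (n k i j : ℕ) (hk : 3 ≤ i) (hik : i ≤ k + 1)
    (hn : 2 * k ≤ n) (hj : j ∈ Finset.Icc 2 i) :
    (famA n k i j).card = (n - j).choose (k - 2) := by
  rw [mem_Icc] at hj
  have hk2 : 2 ≤ k := by omega
  have hjn : j ≤ n := by omega
  have : (famA n k i j).card = ((Finset.Icc (j+1) n).powersetCard (k - 2)).card := by
    apply Finset.card_nbij' (fun F => F \ {1, j}) (fun S => insert 1 (insert j S))
    · intro F hF
      simp only [mem_coe, famA, mem_filter, mem_powersetCard] at hF
      obtain ⟨⟨hFs, hFc⟩, h1, hjF, hmin⟩ := hF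
      rw [mem_coe, mem_powersetCard]
      constructor
      · intro x hx
        simp only [mem_sdiff, mem_insert, mem_singleton, not_or] at hx
        obtain ⟨hxF, hx1, hxj⟩ := hx
        have hxn := mem_Icc.1 (hFs hxF)
        rw [mem_Icc]
        rcases le_or_gt x i with hxi | hxi
        · have := hmin x hxF (mem_Icc.2 ⟨by omega, hxi⟩)
          omega
        · omega
      · have hsub : {1, j} ⊆ F := by
          intro x hx
          simp only [mem_insert, mem_singleton] at hx
          rcases hx with rfl | rfl <;> assumption
        have h1j : (1:ℕ) ∉ ({j} : Finset ℕ) := by simp; omega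
        rw [card_sdiff_of_subset hsub, hFc, card_insert_of_notMem h1j, card_singleton]
    · intro S hS
      rw [mem_coe, mem_powersetCard] at hS
      obtain ⟨hSs, hSc⟩ := hS
      have h1S : (1:ℕ) ∉ S := fun h => by have := mem_Icc.1 (hSs h); omega
      have hjS : j ∉ S := fun h => by have := mem_Icc.1 (hSs h); omega
      simp only [mem_coe, famA, mem_filter, mem_powersetCard]
      refine ⟨⟨?_, ?_⟩, ?_, ?_, ?_⟩
      · intro x hx
        simp only [mem_insert] at hx
        rcases hx with rfl | rfl | hx
        · rw [mem_Icc]; omega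
        · rw [mem_Icc]; omega
        · have := mem_Icc.1 (hSs hx); rw [mem_Icc]; omega
      · have h1 : (1:ℕ) ∉ insert j S := by
          simp only [mem_insert]
          push_neg
          exact ⟨by omega, h1S⟩
        rw [card_insert_of_notMem h1, card_insert_of_notMem hjS, hSc]
        omega
      · simp
      · simp
      · intro x hx hxi
        simp only [mem_insert] at hx
        rw [mem_Icc] at hxi
        rcases hx with rfl | rfl | hx
        · omega
        · omega
        · have := mem_Icc.1 (hSs hx); omega
    · intro F hF
      simp only [mem_coe, famA, mem_filter, mem_powersetCard] at hF
      obtain ⟨⟨hFs, hFc⟩, h1, hjF, hmin⟩ := hF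
      ext x
      simp only [mem_insert, mem_sdiff, mem_singleton, not_or]
      constructor
      · rintro (rfl | rfl | ⟨h, _, _⟩) <;> assumption
      · intro hx
        by_cases hx1 : x = 1
        · left; exact hx1
        by_cases hxj : x = j
        · right; left; exact hxj
        · right; right; exact ⟨hx, hx1, hxj⟩
    · intro S hS
      rw [mem_coe, mem_powersetCard] at hS
      obtain ⟨hSs, _⟩ := hS
      have h1S : (1:ℕ) ∉ S := fun h => by have := mem_Icc.1 (hSs h); omega
      have hjS : j ∉ S := fun h => by have := mem_Icc.1 (hSs h); omega
      ext x
      simp only [mem_sdiff, mem_insert, mem_singleton, not_or]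
      constructor
      · rintro ⟨rfl | rfl | hx, hx1, hxj⟩ <;> first | omega | exact hx
      · intro hx
        refine ⟨Or.inr (Or.inr hx), fun h => h1S (h ▸ hx), fun h => hjS (h ▸ hx)⟩
  rw [this, card_powersetCard, Nat.card_Icc]
  congr 1
  omega

theorem familyM_intersecting_and_card (n k i : ℕ) (hk : 3 ≤ i) (hik : i ≤ k + 1)
    (hn : 2 * k ≤ n) :
    (∀ A ∈ familyM n k i, ∀ B ∈ familyM n k i, (A ∩ B).Nonempty) ∧
    (familyM n k i).card =
      (∑ j ∈ Finset.Icc 2 i, (n - j).choose (k - 2)) + (n - i).choose (k + 1 - i) := by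
  have hk2 : 2 ≤ k := by omega
  have hin : i ≤ n := by omega
  constructor
  · intro A hA B hB
    simp only [familyM, mem_filter, mem_powersetCard] at hA hB
    obtain ⟨⟨hAs, hAc⟩, hA⟩ := hA
    obtain ⟨⟨hBs, hBc⟩, hB⟩ := hB
    rcases hA with ⟨h1A, hAi⟩ | ⟨h1A, hAi⟩ <;> rcases hB with ⟨h1B, hBi⟩ | ⟨h1B, hBi⟩
    · exact ⟨1, mem_inter.2 ⟨h1A, h1B⟩⟩
    · obtain ⟨x, hx⟩ := hAi
      rw [mem_inter] at hx
      exact ⟨x, mem_inter.2 ⟨hx.1, hBi hx.2⟩⟩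
    · obtain ⟨x, hx⟩ := hBi
      rw [mem_inter] at hx
      exact ⟨x, mem_inter.2 ⟨hAi hx.2, hx.1⟩⟩
    · exact ⟨2, mem_inter.2 ⟨hAi (mem_Icc.2 (by omega)), hBi (mem_Icc.2 (by omega))⟩⟩
  · -- cardinality
    have hsplit : familyM n k i =
        (((Finset.Icc 1 n).powersetCard k).filter
          (fun F => 1 ∈ F ∧ (F ∩ Finset.Icc 2 i).Nonempty)) ∪
        (((Finset.Icc 1 n).powersetCard k).filter
          (fun F => 1 ∉ F ∧ Finset.Icc 2 i ⊆ F)) := by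
      rw [familyM, filter_or]
    have hdisj : Disjoint
        (((Finset.Icc 1 n).powersetCard k).filter
          (fun F => 1 ∈ F ∧ (F ∩ Finset.Icc 2 i).Nonempty))
        (((Finset.Icc 1 n).powersetCard k).filter
          (fun F => 1 ∉ F ∧ Finset.Icc 2 i ⊆ F)) := by
      rw [disjoint_left]
      intro F hF hF'
      rw [mem_filter] at hF hF'
      exact hF'.2.1 hF.2.1
    rw [hsplit, card_union_of_disjoint hdisj]
    congr 1
    · -- type A count
      have hbiUnion : (((Finset.Icc 1 n).powersetCard k).filter
          (fun F => 1 ∈ F ∧ (F ∩ Finset.Icc 2 i).Nonempty)) =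
          (Finset.Icc 2 i).biUnion (famA n k i) := by
        ext F
        simp only [mem_filter, mem_biUnion, famA, mem_powersetCard]
        constructor
        · rintro ⟨⟨hFs, hFc⟩, h1, hne⟩
          set m := (F ∩ Finset.Icc 2 i).min' hne with hm
          have hmF : m ∈ F ∩ Finset.Icc 2 i := Finset.min'_mem _ hne
          rw [mem_inter] at hmF
          refine ⟨m, hmF.2, ⟨hFs, hFc⟩, h1, hmF.1, ?_⟩
          intro x hx hxi
          exact Finset.min'_le _ _ (mem_inter.2 ⟨hx, hxi⟩)
        · rintro ⟨j, hj, ⟨hFs, hFc⟩, h1, hjF, _⟩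
          exact ⟨⟨hFs, hFc⟩, h1, ⟨j, mem_inter.2 ⟨hjF, hj⟩⟩⟩
      rw [hbiUnion, card_biUnion]
      · exact Finset.sum_congr rfl (fun j hj => famA_card n k i j hk hik hn hj)
      · intro a ha b hb hab
        simp only [disjoint_left, famA, mem_filter]
        rintro F ⟨_, _, haF, hamin⟩ ⟨_, _, hbF, hbmin⟩
        rw [mem_coe, mem_Icc] at ha hb
        have h1 := hamin b hbF (mem_Icc.2 ⟨by omega, by omega⟩)
        have h2 := hbmin a haF (mem_Icc.2 ⟨by omega, by omega⟩)
        omega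
    · -- type B count
      have : (((Finset.Icc 1 n).powersetCard k).filter
          (fun F => 1 ∉ F ∧ Finset.Icc 2 i ⊆ F)).card =
          ((Finset.Icc (i+1) n).powersetCard (k + 1 - i)).card := by
        apply Finset.card_nbij' (fun F => F \ Finset.Icc 2 i)
          (fun S => S ∪ Finset.Icc 2 i)
        · intro F hF
          simp only [mem_coe, mem_filter, mem_powersetCard] at hF
          obtain ⟨⟨hFs, hFc⟩, h1, hsub⟩ := hF
          rw [mem_coe, mem_powersetCard]
          constructor
          · intro x hx
            rw [mem_sdiff, mem_Icc] at hx
            have := mem_Icc.1 (hFs hx.1)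
            rw [mem_Icc]
            have hx1 : x ≠ 1 := fun h => h1 (h ▸ hx.1)
            omega
          · rw [card_sdiff_of_subset hsub, hFc, Nat.card_Icc]
            omega
        · intro S hS
          rw [mem_coe, mem_powersetCard] at hS
          obtain ⟨hSs, hSc⟩ := hS
          simp only [mem_coe, mem_filter, mem_powersetCard]
          have hdisj2 : Disjoint S (Finset.Icc 2 i) := by
            rw [disjoint_left]
            intro x hx hx2
            have := mem_Icc.1 (hSs hx)
            have := mem_Icc.1 hx2
            omega
          refine ⟨⟨?_, ?_⟩, ?_, ?_⟩
          · intro x hx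
            rw [mem_union] at hx
            rw [mem_Icc]
            rcases hx with hx | hx
            · have := mem_Icc.1 (hSs hx); omega
            · have := mem_Icc.1 hx; omega
          · rw [card_union_of_disjoint hdisj2, hSc, Nat.card_Icc]
            omega
          · rw [mem_union]
            push_neg
            constructor
            · intro h; have := mem_Icc.1 (hSs h); omega
            · rw [mem_Icc]; omega
          · exact subset_union_right
        · intro F hF
          simp only [mem_coe, mem_filter, mem_powersetCard] at hF
          exact sdiff_union_of_subset hF.2.2
        · intro S hS
          rw [mem_coe, mem_powersetCard] at hS
          apply union_sdiff_cancel_right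
          rw [disjoint_left]
          intro x hx hx2
          have := mem_Icc.1 (hS.1 hx)
          have := mem_Icc.1 hx2
          omega
      rw [this, card_powersetCard, Nat.card_Icc]
      congr 1
      omega
end

section
/- Let F = {F₁,...,F_m} ⊆ 2^[n]. Suppose for each F_i one can choose a set X_i ⊆ [n] and a collection R_i of s intersection properties (pairs (P, β) with P ⊆ [n], β a nonnegative integer, where a set X satisfies (P,β) iff |X ∩ P| = β) such that: (1) X_i satisfies no condition in R_i; (2) X_i satisfies at least one condition in R_j for every j > i. Then m ≤ Σ_{h=0}^{s} C(n, h). -/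
open Finset

set_option maxHeartbeats 1000000 in
theorem intersection_properties_bound (n m s : ℕ)
    (F : Fin m → Finset ℕ) (hFinj : Function.Injective F)
    (hFsub : ∀ i, F i ⊆ Finset.Icc 1 n)
    (X : Fin m → Finset ℕ) (hXsub : ∀ i, X i ⊆ Finset.Icc 1 n)
    (R : Fin m → Fin s → Finset ℕ × ℕ)
    (hRsub : ∀ i a, (R i a).1 ⊆ Finset.Icc 1 n)
    (h1 : ∀ i, ∀ a, (X i ∩ (R i a).1).card ≠ (R i a).2)
    (h2 : ∀ i j : Fin m, i < j → ∃ a, (X i ∩ (R j a).1).card = (R j a).2) :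
    m ≤ ∑ h ∈ Finset.range (s + 1), n.choose h := by
  classical
  -- indicator vectors
  set e : Finset ℕ → (Fin m → ℝ) := fun T i => if T ⊆ X i then 1 else 0 with he
  set 𝒯 : Finset (Finset ℕ) := (Finset.Icc 1 n).powerset.filter (fun T => T.card ≤ s) with h𝒯
  set W : Submodule ℝ (Fin m → ℝ) := Submodule.span ℝ (↑(𝒯.image e)) with hW
  set f : Fin m → (Fin m → ℝ) :=
    fun j i => ∏ a : Fin s, (((X i ∩ (R j a).1).card : ℝ) - ((R j a).2 : ℝ)) with hf
  -- pointwise key identity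
  have key : ∀ (P : Finset ℕ) (β : ℕ) (T : Finset ℕ) (i : Fin m),
      e T i * (((X i ∩ P).card : ℝ) - (β : ℝ)) =
        (∑ b ∈ P, e (insert b T) i) - (β : ℝ) * e T i := by
    intro P β T i
    have hcard : ((X i ∩ P).card : ℝ) = ∑ b ∈ P, (if b ∈ X i then (1:ℝ) else 0) := by
      rw [Finset.inter_comm, ← Finset.filter_mem_eq_inter, Finset.card_filter]
      push_cast
      rfl
    rw [hcard, mul_sub, Finset.mul_sum]
    congr 1
    · apply Finset.sum_congr rfl
      intro b hb
      simp only [he, Finset.insert_subset_iff]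
      by_cases hT : T ⊆ X i <;> by_cases hbX : b ∈ X i <;> simp [hT, hbX]
    · ring
  -- membership: products of linear forms times indicators lie in W
  have mem_claim : ∀ (j : Fin m) (A : Finset (Fin s)) (T : Finset ℕ),
      T ⊆ Finset.Icc 1 n → T.card + A.card ≤ s →
      (fun i => e T i * ∏ a ∈ A, (((X i ∩ (R j a).1).card : ℝ) - ((R j a).2 : ℝ))) ∈ W := by
    intro j A
    induction A using Finset.induction_on with
    | empty =>
        intro T hTsub hTcard
        simp only [Finset.prod_empty, mul_one]
        apply Submodule.subset_span
        simp only [Finset.coe_image, Set.mem_image, Finset.mem_coe]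
        refine ⟨T, ?_, rfl⟩
        simp only [h𝒯, Finset.mem_filter, Finset.mem_powerset]
        exact ⟨hTsub, by simpa using hTcard⟩
    | @insert a A ha ih =>
        intro T hTsub hTcard
        rw [Finset.card_insert_of_notMem ha] at hTcard
        have heq : (fun i => e T i * ∏ a' ∈ insert a A,
            (((X i ∩ (R j a').1).card : ℝ) - ((R j a').2 : ℝ))) =
            (∑ b ∈ (R j a).1, fun i => e (insert b T) i *
              ∏ a' ∈ A, (((X i ∩ (R j a').1).card : ℝ) - ((R j a').2 : ℝ))) -
            ((R j a).2 : ℝ) • (fun i => e T i *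
              ∏ a' ∈ A, (((X i ∩ (R j a').1).card : ℝ) - ((R j a').2 : ℝ))) := by
          funext i
          simp only [Pi.sub_apply, Pi.smul_apply, Finset.sum_apply, smul_eq_mul]
          rw [Finset.prod_insert ha, ← mul_assoc,
            key (R j a).1 (R j a).2 T i, sub_mul, Finset.sum_mul]
          congr 1
          ring
        rw [heq]
        apply Submodule.sub_mem
        · apply Submodule.sum_mem
          intro b hb
          apply ih
          · exact Finset.insert_subset (hRsub j a hb) hTsub
          · calc (insert b T).card + A.card ≤ T.card + 1 + A.card := by
                  have := Finset.card_insert_le b T; omega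
              _ ≤ s := by omega
        · exact Submodule.smul_mem _ _ (ih T hTsub (by omega))
  have hfW : ∀ j, f j ∈ W := by
    intro j
    have := mem_claim j Finset.univ ∅ (by simp) (by simp)
    convert this using 1
    funext i
    simp [hf, he]
  -- triangular structure
  have hdiag : ∀ i, f i i ≠ 0 := by
    intro i
    apply Finset.prod_ne_zero_iff.mpr
    intro a _
    have := h1 i a
    intro hzero
    apply this
    have : ((X i ∩ (R i a).1).card : ℝ) = ((R i a).2 : ℝ) := by linarith [sub_eq_zero.mp hzero]
    exact_mod_cast this
  have hupper : ∀ i j : Fin m, i < j → f j i = 0 := by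
    intro i j hij
    obtain ⟨a, ha⟩ := h2 i j hij
    apply Finset.prod_eq_zero (Finset.mem_univ a)
    rw [ha]; ring
  -- linear independence
  have hli : LinearIndependent ℝ f := by
    rw [Fintype.linearIndependent_iff]
    intro g hg
    by_contra hne
    push_neg at hne
    obtain ⟨i₀, hi₀⟩ := hne
    set S : Finset (Fin m) := Finset.univ.filter (fun i => g i ≠ 0) with hS
    have hSne : S.Nonempty := ⟨i₀, by simp [hS, hi₀]⟩
    set i := S.min' hSne with hi
    have higne : g i ≠ 0 := (Finset.mem_filter.mp (S.min'_mem hSne)).2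
    have heval : ∑ j, g j * f j i = 0 := by
      have := congrFun hg i
      simpa [Finset.sum_apply] using this
    have hzero : ∀ j, j ≠ i → g j * f j i = 0 := by
      intro j hj
      by_cases hgj : g j = 0
      · rw [hgj, zero_mul]
      · have hjS : j ∈ S := by simp [hS, hgj]
        have : i ≤ j := S.min'_le j hjS
        have hij : i < j := lt_of_le_of_ne this (Ne.symm hj)
        rw [hupper i j hij, mul_zero]
    rw [Finset.sum_eq_single i (fun j _ hj => hzero j hj) (by simp)] at heval
    exact higne (by
      rcases mul_eq_zero.mp heval with h | h
      · exact h
      · exact absurd h (hdiag i))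
  -- dimension count
  haveI hWfin : Module.Finite ℝ ↥W := Module.Finite.span_of_finite ℝ (Finset.finite_toSet _)
  have hspan : Submodule.span ℝ (Set.range f) ≤ W :=
    Submodule.span_le.mpr (Set.range_subset_iff.mpr hfW)
  have hdim : m ≤ Module.finrank ℝ W := by
    have h2' := Submodule.finrank_mono (R := ℝ) hspan
    rwa [finrank_span_eq_card hli, Fintype.card_fin] at h2'
  have hdim2 : Module.finrank ℝ W ≤ 𝒯.card := by
    calc Module.finrank ℝ W ≤ (𝒯.image e).card := finrank_span_finset_le_card _
      _ ≤ 𝒯.card := Finset.card_image_le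
  have hcardT : 𝒯.card = ∑ h ∈ Finset.range (s + 1), n.choose h := by
    have hT : 𝒯 = (Finset.range (s + 1)).biUnion
        (fun h => Finset.powersetCard h (Finset.Icc 1 n)) := by
      ext T
      simp only [h𝒯, Finset.mem_filter, Finset.mem_powerset, Finset.mem_biUnion,
        Finset.mem_range, Finset.mem_powersetCard]
      constructor
      · rintro ⟨hsub, hcard⟩; exact ⟨T.card, by omega, hsub, rfl⟩
      · rintro ⟨h, hh, hsub, hcard⟩; exact ⟨hsub, by omega⟩
    rw [hT, Finset.card_biUnion]
    · apply Finset.sum_congr rfl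
      intro h _
      rw [Finset.card_powersetCard, Nat.card_Icc]
      simp
    · intro a _ b _ hab
      apply Finset.disjoint_left.mpr
      intro T hTa hTb
      rw [Finset.mem_powersetCard] at hTa hTb
      exact hab (hTa.2 ▸ hTb.2)
  omega
end

section
/- Let F ⊆ ([n] choose k) be a maximal non-trivial intersecting family with n ≥ 2k+1, let p be an element of maximum degree in F, F₀ = {F ∈ F : p ∉ F} = {F₁,...,F_x} with x ≥ 1, F₁' = {F ∈ F : p ∈ F}, and let S = {S ∈ ([n] choose k-1) : S ∉ ∂_{k-1}F₁', p ∉ S, and S ∩ F = ∅ for some F ∈ F₀}. Then S = ⋃_{i=1}^{x} ([n]∖(F_i ∪ {p}) choose k-1). -/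
open Finset

/-- `F` is a non-trivial intersecting family: every two members meet and
no element lies in all members. -/
def NontrivIntersecting (F : Finset (Finset ℕ)) : Prop :=
  (∀ A ∈ F, ∀ B ∈ F, (A ∩ B).Nonempty) ∧ ¬ ∃ p, ∀ A ∈ F, p ∈ A

theorem S_eq_union_of_complements (n k : ℕ) (hk : 2 ≤ k) (hn : 2 * k + 1 ≤ n)
    (F : Finset (Finset ℕ))
    (hF : ∀ A ∈ F, A ∈ (Finset.Icc 1 n).powersetCard k)
    (hnt : NontrivIntersecting F)
    (hmax : ∀ A ∈ (Finset.Icc 1 n).powersetCard k, A ∉ F →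
      ¬ NontrivIntersecting (insert A F))
    (p : ℕ) (hp : p ∈ Finset.Icc 1 n)
    (hpmax : ∀ q ∈ Finset.Icc 1 n,
      (F.filter (fun A => q ∈ A)).card ≤ (F.filter (fun A => p ∈ A)).card)
    (F0 : Finset (Finset ℕ)) (hF0 : F0 = F.filter (fun A => p ∉ A))
    (hF0ne : 1 ≤ F0.card)
    (F1 : Finset (Finset ℕ)) (hF1 : F1 = F.filter (fun A => p ∈ A))
    (S : Finset (Finset ℕ))
    (hS : S = ((Finset.Icc 1 n).powersetCard (k - 1)).filter
      (fun T => (¬ ∃ G ∈ F1, T ⊆ G) ∧ p ∉ T ∧ ∃ A ∈ F0, T ∩ A = ∅)) :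
    S = F0.biUnion (fun A => ((Finset.Icc 1 n \ insert p A).powersetCard (k - 1))) := by
  subst hS hF0 hF1
  -- key lemma: if T has card k-1, p ∉ T, T ∩ A = ∅ with A ∈ F, p ∉ A,
  -- then no G ∈ F with p ∈ G contains T.
  have key : ∀ T : Finset ℕ, T.card = k - 1 → p ∉ T →
      ∀ A ∈ F, p ∉ A → T ∩ A = ∅ →
      ¬ ∃ G ∈ F.filter (fun A => p ∈ A), T ⊆ G := by
    rintro T hTcard hpT A hA hpA hTA ⟨G, hG, hTG⟩
    simp only [mem_filter] at hG
    obtain ⟨hGF, hpG⟩ := hG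
    have hGcard : G.card = k := (mem_powersetCard.mp (hF G hGF)).2
    have hsub : insert p T ⊆ G := insert_subset hpG hTG
    have hcard : (insert p T).card = k := by
      rw [card_insert_of_notMem hpT, hTcard]
      omega
    have hGeq : G = insert p T := by
      apply (eq_of_subset_of_card_le hsub (by omega)).symm
    obtain ⟨x, hx⟩ := hnt.1 G hGF A hA
    rw [mem_inter, hGeq, mem_insert] at hx
    rcases hx.1 with rfl | hxT
    · exact hpA hx.2
    · have : x ∈ T ∩ A := mem_inter.mpr ⟨hxT, hx.2⟩
      rw [hTA] at this
      exact notMem_empty x this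
  ext T
  simp only [mem_filter, mem_biUnion, mem_powersetCard, mem_filter]
  constructor
  · rintro ⟨⟨hTsub, hTcard⟩, _, hpT, A, ⟨hAF, hpA⟩, hTA⟩
    refine ⟨A, ⟨hAF, hpA⟩, ?_, hTcard⟩
    intro x hxT
    rw [mem_sdiff, mem_insert]
    refine ⟨hTsub hxT, ?_⟩
    rintro (rfl | hxA)
    · exact hpT hxT
    · have : x ∈ T ∩ A := mem_inter.mpr ⟨hxT, hxA⟩
      rw [hTA] at this
      exact notMem_empty x this
  · rintro ⟨A, ⟨hAF, hpA⟩, hTsub, hTcard⟩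
    have hTsub' : T ⊆ Finset.Icc 1 n := fun x hx => (mem_sdiff.mp (hTsub hx)).1
    have hpT : p ∉ T := fun h => (mem_sdiff.mp (hTsub h)).2 (mem_insert_self p A)
    have hTA : T ∩ A = ∅ := by
      rw [eq_empty_iff_forall_notMem]
      intro x hx
      rw [mem_inter] at hx
      exact (mem_sdiff.mp (hTsub hx.1)).2 (mem_insert_of_mem hx.2)
    exact ⟨⟨hTsub', hTcard⟩, (by simpa using key T hTcard hpT A hAF hpA hTA), hpT, A, ⟨hAF, hpA⟩, hTA⟩
end

section
/- Let F₁,...,F_x be distinct k-subsets of [n]∖{p} for some p ∈ [n], with 1 ≤ x ≤ k and n ≥ 2k+1. Then |⋃_{i=1}^{x} ([n]∖(F_i ∪ {p}) choose k-1)| ≥ Σ_{j=1}^{x} C(n-k-j, k-j). -/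
open Finset

theorem union_complements_lower_bound (n k x p : ℕ) (hk : 1 ≤ k)
    (hn : 2 * k + 1 ≤ n) (hp : p ∈ Finset.Icc 1 n)
    (hx1 : 1 ≤ x) (hxk : x ≤ k)
    (G : Finset (Finset ℕ)) (hGcard : G.card = x)
    (hGsub : ∀ A ∈ G, A ⊆ Finset.Icc 1 n \ {p} ∧ A.card = k) :
    ∑ j ∈ Finset.Icc 1 x, (n - k - j).choose (k - j) ≤
      (G.biUnion (fun A => (Finset.Icc 1 n \ insert p A).powersetCard (k - 1))).card := by
  classical
  -- enumerate G
  obtain ⟨F, hFinj, hFmem⟩ : ∃ F : Fin x → Finset ℕ, Function.Injective F ∧ ∀ i, F i ∈ G := by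
    let e := G.equivFin
    refine ⟨fun i => (e.symm (Fin.cast hGcard.symm i) : Finset ℕ), ?_, fun i =>
      (e.symm (Fin.cast hGcard.symm i)).2⟩
    intro a b hab
    have := e.symm.injective (Subtype.ext hab)
    exact Fin.cast_injective _ this
  have hFsub : ∀ i, F i ⊆ Finset.Icc 1 n \ {p} := fun i => (hGsub _ (hFmem i)).1
  have hFcard : ∀ i, (F i).card = k := fun i => (hGsub _ (hFmem i)).2
  -- complements
  set comp : Fin x → Finset ℕ := fun i => Finset.Icc 1 n \ insert p (F i) with hcomp
  have hpF : ∀ i, p ∉ F i := by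
    intro i hpi
    have := hFsub i hpi
    simp at this
  have hcompcard : ∀ i, (comp i).card = n - (k + 1) := by
    intro i
    rw [hcomp]
    rw [card_sdiff_of_subset]
    · rw [card_insert_of_notMem (hpF i), hFcard i, Nat.card_Icc]
      omega
    · intro a ha
      rcases mem_insert.1 ha with h | h
      · exact h ▸ hp
      · exact (mem_sdiff.1 (hFsub i h)).1
  -- transversal elements
  have hpick : ∀ i j : Fin x, ∃ a, i ≠ j → a ∈ F i \ F j := by
    intro i j
    by_cases h : i = j
    · exact ⟨0, fun h' => absurd h h'⟩
    · have : ¬ F i ⊆ F j := by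
        intro hsub
        exact h (hFinj (Finset.eq_of_subset_of_card_le hsub (by rw [hFcard, hFcard])))
      obtain ⟨a, ha⟩ := not_subset.1 this
      exact ⟨a, fun _ => mem_sdiff.2 ha⟩
  choose t ht using hpick
  -- padded transversal sets
  have hTex : ∀ j : Fin x, ∃ T : Finset ℕ,
      ((Finset.Iio j).image (fun i => t i j)) ⊆ T ∧ T ⊆ comp j ∧ T.card = j.val := by
    intro j
    apply Finset.exists_subsuperset_card_eq
    · intro a ha
      obtain ⟨i, hi, rfl⟩ := mem_image.1 ha
      have hij : i ≠ j := ne_of_lt (mem_Iio.1 hi)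
      have hmem := ht i j hij
      have h1 := mem_sdiff.1 hmem
      rw [hcomp]
      have h2 := mem_sdiff.1 (hFsub i h1.1)
      refine mem_sdiff.2 ⟨h2.1, ?_⟩
      intro hc
      rcases mem_insert.1 hc with h | h
      · exact h2.2 (mem_singleton.2 h)
      · exact h1.2 h
    · calc ((Finset.Iio j).image (fun i => t i j)).card ≤ (Finset.Iio j).card :=
            card_image_le
        _ = j.val := by rw [Fin.card_Iio]
    · rw [hcompcard]
      have := j.isLt
      omega
  choose T hT0 hTsub hTcard using hTex
  -- the families
  set S : Fin x → Finset (Finset ℕ) := fun j =>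
    ((comp j \ T j).powersetCard (k - 1 - j.val)).image (fun A => A ∪ T j) with hS
  -- each S j is inside the powersetCard (k-1) of comp j
  have hSsub : ∀ j, S j ⊆ (comp j).powersetCard (k - 1) := by
    intro j s hs
    obtain ⟨A, hA, rfl⟩ := mem_image.1 hs
    obtain ⟨hA1, hA2⟩ := mem_powersetCard.1 hA
    refine mem_powersetCard.2 ⟨?_, ?_⟩
    · exact union_subset (hA1.trans sdiff_subset) (hTsub j)
    · rw [card_union_of_disjoint (sdiff_disjoint.mono_left hA1), hA2, hTcard]
      have := j.isLt
      omega
  -- card of S j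
  have hScard : ∀ j : Fin x, (S j).card = (n - k - (j.val + 1)).choose (k - (j.val + 1)) := by
    intro j
    rw [hS]
    rw [card_image_of_injOn]
    · rw [card_powersetCard, card_sdiff_of_subset (hTsub j), hcompcard, hTcard]
      congr 1 <;> omega
    · intro A hA B hB hAB
      simp only [mem_coe, mem_powersetCard] at hA hB
      have dA : Disjoint A (T j) := sdiff_disjoint.mono_left hA.1
      have dB : Disjoint B (T j) := sdiff_disjoint.mono_left hB.1
      have : (A ∪ T j) \ T j = (B ∪ T j) \ T j := by
        rw [show A ∪ T j = B ∪ T j from hAB]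
      rwa [union_sdiff_right, union_sdiff_right, dA.sdiff_eq_left, dB.sdiff_eq_left] at this
  -- pairwise disjoint
  have hdisj : ∀ i j : Fin x, i ≠ j → Disjoint (S i) (S j) := by
    have key : ∀ i j : Fin x, i < j → Disjoint (S i) (S j) := by
      intro i j hij
      rw [disjoint_left]
      intro s hsi hsj
      -- s ∈ S i : s ⊆ comp i, so s ∩ F i = ∅
      have h1 : s ⊆ comp i := (mem_powersetCard.1 (hSsub i hsi)).1
      -- s ∈ S j : T j ⊆ s
      obtain ⟨A, hA, rfl⟩ := mem_image.1 hsj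
      have h2 : t i j ∈ A ∪ T j :=
        mem_union_right _ (hT0 j (mem_image.2 ⟨i, mem_Iio.2 hij, rfl⟩))
      have h3 : t i j ∈ F i := (mem_sdiff.1 (ht i j hij.ne)).1
      have h4 := h1 h2
      rw [hcomp] at h4
      exact (mem_sdiff.1 h4).2 (mem_insert_of_mem h3)
    intro i j hij
    rcases lt_or_gt_of_ne hij with h | h
    · exact key i j h
    · exact (key j i h).symm
  -- combine
  have hbig : (Finset.univ : Finset (Fin x)).biUnion S ⊆
      G.biUnion (fun A => (Finset.Icc 1 n \ insert p A).powersetCard (k - 1)) := by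
    intro s hs
    obtain ⟨j, _, hsj⟩ := mem_biUnion.1 hs
    exact mem_biUnion.2 ⟨F j, hFmem j, hSsub j hsj⟩
  calc ∑ j ∈ Finset.Icc 1 x, (n - k - j).choose (k - j)
      = ∑ j ∈ Finset.range x, (n - k - (j + 1)).choose (k - (j + 1)) := by
        rw [← Finset.Ico_add_one_right_eq_Icc, Finset.sum_Ico_eq_sum_range]
        have hxx : x + 1 - 1 = x := by omega
        rw [hxx]
        exact Finset.sum_congr rfl (fun i _ => by rw [Nat.add_comm 1 i])
    _ = ∑ j : Fin x, (n - k - (j.val + 1)).choose (k - (j.val + 1)) :=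
        (Fin.sum_univ_eq_sum_range _ _).symm
    _ = ∑ j : Fin x, (S j).card := by
        exact Finset.sum_congr rfl (fun j _ => (hScard j).symm)
    _ = ((Finset.univ : Finset (Fin x)).biUnion S).card := by
        rw [Finset.card_biUnion]
        intro i _ j _ hij
        exact hdisj i j hij
    _ ≤ _ := Finset.card_le_card hbig
end

section
/- Let F₁,...,F_x be distinct k-subsets of [n]∖{p}, pairwise intersecting, with 1 ≤ x ≤ k and n ≥ 2k+1. Then |⋃_{i=1}^{x} ([n]∖(F_i ∪ {p}) choose k-1)| = Σ_{j=1}^{x} C(n-k-j, k-j) if and only if {F₁,...,F_x} forms a sunflower with k-1 common elements (i.e., there is a set A of size k-1 with F_i ∩ F_j = A for all i ≠ j). -/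
open Finset

namespace SunflowerAux

def pc (n k p : ℕ) (A : Finset ℕ) : Finset (Finset ℕ) :=
  (Finset.Icc 1 n \ insert p A).powersetCard (k - 1)

def NN (n k p : ℕ) (G : Finset (Finset ℕ)) (F : Finset ℕ) : Finset (Finset ℕ) :=
  (pc n k p F).filter (fun T => ∀ B ∈ G.erase F, (T ∩ B).Nonempty)

lemma choose_symm_add (c b : ℕ) : (c + b).choose b = (c + b).choose c := by
  have := Nat.choose_symm (Nat.le_add_left b c)
  simpa [Nat.add_sub_cancel] using this.symm

lemma choose_mono_diag {c b b' : ℕ} (h : b' ≤ b) : (c + b').choose b' ≤ (c + b).choose b := by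
  rw [choose_symm_add, choose_symm_add]
  exact Nat.choose_le_choose c (by omega)

lemma choose_strict_diag {c b b' : ℕ} (hc : 1 ≤ c) (h : b' < b) :
    (c + b').choose b' < (c + b).choose b := by
  rw [choose_symm_add, choose_symm_add]
  have h1 : (c + b' + 1).choose c ≤ (c + b).choose c := Nat.choose_le_choose c (by omega)
  refine lt_of_lt_of_le ?_ h1
  obtain ⟨c', rfl⟩ : ∃ c', c = c' + 1 := ⟨c - 1, by omega⟩
  have h2 : (c' + 1 + b' + 1) = (c' + b' + 1) + 1 := by omega
  have h3 : (c' + 1 + b') = (c' + b') + 1 := by omega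
  rw [h2, h3]
  have h4 : ((c' + b' + 1) + 1).choose (c' + 1)
      = (c' + b' + 1).choose c' + (c' + b' + 1).choose (c' + 1) :=
    Nat.choose_succ_succ _ _
  rw [h4]
  have : 0 < (c' + b' + 1).choose c' := Nat.choose_pos (by omega)
  omega

lemma card_compl (n p : ℕ) (hp : p ∈ Finset.Icc 1 n) {D : Finset ℕ}
    (hD : D ⊆ Finset.Icc 1 n \ {p}) :
    (Finset.Icc 1 n \ insert p D).card = n - 1 - D.card := by
  have hDV : D ⊆ Finset.Icc 1 n := fun a ha => (Finset.mem_sdiff.mp (hD ha)).1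
  have hpD : p ∉ D := fun h => (Finset.mem_sdiff.mp (hD h)).2 (Finset.mem_singleton_self p)
  have hsub : insert p D ⊆ Finset.Icc 1 n := Finset.insert_subset hp hDV
  rw [Finset.card_sdiff_of_subset hsub, Finset.card_insert_of_notMem hpD, Nat.card_Icc]
  omega

lemma decomp (n k p : ℕ) (G : Finset (Finset ℕ)) (F : Finset ℕ) (hF : F ∈ G) :
    (G.biUnion (pc n k p)).card
      = ((G.erase F).biUnion (pc n k p)).card + (NN n k p G F).card := by
  have hU : G.biUnion (pc n k p) = (G.erase F).biUnion (pc n k p) ∪ NN n k p G F := by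
    apply Finset.Subset.antisymm
    · intro T hT
      rw [Finset.mem_biUnion] at hT
      obtain ⟨A, hA, hTA⟩ := hT
      by_cases hall : ∀ B ∈ G.erase F, (T ∩ B).Nonempty
      · rcases eq_or_ne A F with rfl | hAF
        · exact Finset.mem_union_right _ (Finset.mem_filter.mpr ⟨hTA, hall⟩)
        · exfalso
          have hAe : A ∈ G.erase F := Finset.mem_erase.mpr ⟨hAF, hA⟩
          obtain ⟨a, ha⟩ := hall A hAe
          rw [Finset.mem_inter] at ha
          rw [pc, Finset.mem_powersetCard] at hTA
          have h2 := hTA.1 ha.1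
          rw [Finset.mem_sdiff, Finset.mem_insert] at h2
          exact h2.2 (Or.inr ha.2)
      · push_neg at hall
        obtain ⟨B, hB, hTB⟩ := hall
        apply Finset.mem_union_left
        rw [Finset.mem_biUnion]
        refine ⟨B, hB, ?_⟩
        rw [pc, Finset.mem_powersetCard] at hTA ⊢
        refine ⟨?_, hTA.2⟩
        intro a haT
        have h2 := hTA.1 haT
        rw [Finset.mem_sdiff, Finset.mem_insert] at h2 ⊢
        refine ⟨h2.1, ?_⟩
        rintro (rfl | haB)
        · exact h2.2 (Or.inl rfl)
        · have : a ∈ T ∩ B := Finset.mem_inter.mpr ⟨haT, haB⟩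
          simp [hTB] at this
    · intro T hT
      rcases Finset.mem_union.mp hT with h | h
      · exact Finset.biUnion_subset_biUnion_of_subset_left _ (Finset.erase_subset _ _) h
      · rw [Finset.mem_biUnion]
        exact ⟨F, hF, (Finset.mem_filter.mp h).1⟩
  rw [hU, Finset.card_union_of_disjoint]
  rw [Finset.disjoint_left]
  intro T hT hTN
  rw [Finset.mem_biUnion] at hT
  obtain ⟨B, hB, hTB⟩ := hT
  obtain ⟨a, ha⟩ := (Finset.mem_filter.mp hTN).2 B hB
  rw [Finset.mem_inter] at ha
  rw [pc, Finset.mem_powersetCard] at hTB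
  have h2 := hTB.1 ha.1
  rw [Finset.mem_sdiff, Finset.mem_insert] at h2
  exact h2.2 (Or.inr ha.2)

lemma img_subset_NN (n k p : ℕ)
    (G : Finset (Finset ℕ)) (F : Finset ℕ)
    (hFsub : F ⊆ Finset.Icc 1 n \ {p})
    (R : Finset ℕ) (hRsub : R ⊆ Finset.Icc 1 n \ {p}) (hRF : ∀ a ∈ R, a ∉ F)
    (hm : R.card ≤ k - 1)
    (hmeets : ∀ B ∈ G.erase F, (R ∩ B).Nonempty) :
    ((Finset.Icc 1 n \ insert p (F ∪ R)).powersetCard (k - 1 - R.card)).image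
        (fun S => R ∪ S) ⊆ NN n k p G F := by
  intro T hT
  simp only [Finset.mem_image] at hT
  obtain ⟨S, hS, rfl⟩ := hT
  rw [Finset.mem_powersetCard] at hS
  have hSR : ∀ a ∈ S, a ∉ R := by
    intro a haS haR
    have := hS.1 haS
    rw [Finset.mem_sdiff] at this
    exact this.2 (Finset.mem_insert_of_mem (Finset.mem_union_right _ haR))
  refine Finset.mem_filter.mpr ⟨?_, ?_⟩
  · rw [pc, Finset.mem_powersetCard]
    constructor
    · intro a ha
      rw [Finset.mem_union] at ha
      rw [Finset.mem_sdiff, Finset.mem_insert]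
      rcases ha with ha | ha
      · have h1 := Finset.mem_sdiff.mp (hRsub ha)
        refine ⟨h1.1, ?_⟩
        rintro (rfl | haF)
        · exact h1.2 (Finset.mem_singleton_self _)
        · exact hRF a ha haF
      · have h1 := Finset.mem_sdiff.mp (hS.1 ha)
        rw [Finset.mem_insert] at h1
        refine ⟨h1.1, ?_⟩
        rintro (rfl | haF)
        · exact h1.2 (Or.inl rfl)
        · exact h1.2 (Or.inr (Finset.mem_union_left _ haF))
    · rw [Finset.card_union_of_disjoint (Finset.disjoint_right.mpr hSR), hS.2]
      omega
  · intro B hB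
    obtain ⟨a, ha⟩ := hmeets B hB
    rw [Finset.mem_inter] at ha
    exact ⟨a, Finset.mem_inter.mpr ⟨Finset.mem_union_left _ ha.1, ha.2⟩⟩

lemma img_card (n k p : ℕ) (hp : p ∈ Finset.Icc 1 n)
    (F : Finset ℕ)
    (hFsub : F ⊆ Finset.Icc 1 n \ {p}) (hFcard : F.card = k)
    (R : Finset ℕ) (hRsub : R ⊆ Finset.Icc 1 n \ {p}) (hRF : ∀ a ∈ R, a ∉ F) :
    (((Finset.Icc 1 n \ insert p (F ∪ R)).powersetCard (k - 1 - R.card)).image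
        (fun S => R ∪ S)).card = (n - 1 - k - R.card).choose (k - 1 - R.card) := by
  rw [Finset.card_image_of_injOn]
  · rw [Finset.card_powersetCard]
    have hD : F ∪ R ⊆ Finset.Icc 1 n \ {p} := Finset.union_subset hFsub hRsub
    rw [card_compl n p hp hD]
    have hFR : Disjoint F R := Finset.disjoint_right.mpr hRF
    rw [Finset.card_union_of_disjoint hFR, hFcard]
    congr 1
    omega
  · intro S1 hS1 S2 hS2 heq
    rw [Finset.mem_coe, Finset.mem_powersetCard] at hS1 hS2
    have key : ∀ S : Finset ℕ, S ⊆ Finset.Icc 1 n \ insert p (F ∪ R) → (R ∪ S) \ R = S := by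
      intro S hSsub
      apply Finset.union_sdiff_cancel_left
      rw [Finset.disjoint_right]
      intro a haS haR
      have := Finset.mem_sdiff.mp (hSsub haS)
      exact this.2 (Finset.mem_insert_of_mem (Finset.mem_union_right _ haR))
    have heq2 : R ∪ S1 = R ∪ S2 := heq
    rw [← key S1 hS1.1, ← key S2 hS2.1, heq2]

lemma card_NN_ge' (n k p : ℕ) (hp : p ∈ Finset.Icc 1 n) (hn : 2*k+1 ≤ n)
    (G : Finset (Finset ℕ)) (hG : ∀ A ∈ G, A ⊆ Finset.Icc 1 n \ {p} ∧ A.card = k)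
    (hGk : G.card ≤ k) (F : Finset ℕ) (hF : F ∈ G) :
    (n - k - G.card).choose (k - G.card) ≤ (NN n k p G F).card := by
  classical
  have hG1 : 1 ≤ G.card := Finset.card_pos.mpr ⟨F, hF⟩
  set R : Finset ℕ := (G.erase F).biUnion
      (fun B => if h : (B \ F).Nonempty then {h.choose} else ∅) with hR
  have hmem : ∀ a ∈ R, ∃ B ∈ G.erase F, a ∈ B \ F := by
    intro a ha
    rw [hR, Finset.mem_biUnion] at ha
    obtain ⟨B, hB, haB⟩ := ha
    refine ⟨B, hB, ?_⟩
    split_ifs at haB with h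
    · rw [Finset.mem_singleton] at haB; subst haB; exact h.choose_spec
    · simp at haB
  have hRsub : R ⊆ Finset.Icc 1 n \ {p} := by
    intro a ha
    obtain ⟨B, hB, haB⟩ := hmem a ha
    exact (hG B (Finset.mem_of_mem_erase hB)).1 (Finset.mem_sdiff.mp haB).1
  have hRF : ∀ a ∈ R, a ∉ F := by
    intro a ha
    obtain ⟨B, hB, haB⟩ := hmem a ha
    exact (Finset.mem_sdiff.mp haB).2
  have hmcard : R.card ≤ G.card - 1 := by
    calc R.card ≤ ∑ B ∈ G.erase F,
        (if h : (B \ F).Nonempty then ({h.choose} : Finset ℕ) else ∅).card :=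
          Finset.card_biUnion_le
      _ ≤ ∑ _B ∈ G.erase F, 1 := by
          refine Finset.sum_le_sum ?_
          intro B _
          split_ifs <;> simp
      _ = (G.erase F).card := by simp
      _ = G.card - 1 := by rw [Finset.card_erase_of_mem hF]
  have hm : R.card ≤ k - 1 := by omega
  have hmeets : ∀ B ∈ G.erase F, (R ∩ B).Nonempty := by
    intro B hB
    have hBG := Finset.mem_of_mem_erase hB
    have hBne : (B \ F).Nonempty := by
      rw [Finset.sdiff_nonempty]
      intro hsub
      have : B = F := Finset.eq_of_subset_of_card_le hsub
        (by rw [(hG F hF).2, (hG B hBG).2])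
      exact (Finset.mem_erase.mp hB).1 this
    refine ⟨hBne.choose, Finset.mem_inter.mpr
      ⟨?_, (Finset.mem_sdiff.mp hBne.choose_spec).1⟩⟩
    rw [hR, Finset.mem_biUnion]
    exact ⟨B, hB, by rw [dif_pos hBne]; exact Finset.mem_singleton_self _⟩
  have h1 := img_subset_NN n k p G F (hG F hF).1 R hRsub hRF hm hmeets
  have h2 := img_card n k p hp F (hG F hF).1 (hG F hF).2 R hRsub hRF
  have h3 : (n - 1 - k - R.card).choose (k - 1 - R.card) ≤ (NN n k p G F).card := by
    rw [← h2]; exact Finset.card_le_card h1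
  refine le_trans ?_ h3
  have e1 : n - 1 - k - R.card = (n - 2*k) + (k - 1 - R.card) := by omega
  have e2 : n - k - G.card = (n - 2*k) + (k - G.card) := by omega
  rw [e1, e2]
  exact choose_mono_diag (by omega)

lemma LB (n k p : ℕ) (hp : p ∈ Finset.Icc 1 n) (hn : 2*k+1 ≤ n) :
    ∀ x : ℕ, ∀ G : Finset (Finset ℕ), G.card = x →
    (∀ A ∈ G, A ⊆ Finset.Icc 1 n \ {p} ∧ A.card = k) → G.card ≤ k →
    ∑ j ∈ Finset.Icc 1 G.card, (n - k - j).choose (k - j) ≤ (G.biUnion (pc n k p)).card := by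
  intro x
  induction x with
  | zero =>
      intro G hGx _ _
      rw [hGx]
      simp
  | succ m ih =>
      intro G hGx hG hGk
      obtain ⟨F, hF⟩ := Finset.card_pos.mp (show 0 < G.card by omega)
      rw [decomp n k p G F hF, hGx]
      have herase : (G.erase F).card = m := by
        rw [Finset.card_erase_of_mem hF, hGx]
        omega
      have h1 := ih (G.erase F) herase
        (fun A hA => hG A (Finset.mem_of_mem_erase hA)) (by omega)
      rw [herase] at h1
      have h2 := card_NN_ge' n k p hp hn G hG hGk F hF
      rw [hGx] at h2
      rw [Finset.sum_Icc_succ_top (by omega : 1 ≤ m + 1)]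
      omega

lemma tight (n k p : ℕ) (hp : p ∈ Finset.Icc 1 n) (hn : 2*k+1 ≤ n)
    (G : Finset (Finset ℕ)) (hG : ∀ A ∈ G, A ⊆ Finset.Icc 1 n \ {p} ∧ A.card = k)
    (hGk : G.card ≤ k)
    (heq : (G.biUnion (pc n k p)).card
      = ∑ j ∈ Finset.Icc 1 G.card, (n - k - j).choose (k - j))
    (F : Finset ℕ) (hF : F ∈ G) :
    ((G.erase F).biUnion (pc n k p)).card
        = ∑ j ∈ Finset.Icc 1 (G.card - 1), (n - k - j).choose (k - j)
    ∧ (NN n k p G F).card = (n - k - G.card).choose (k - G.card) := by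
  obtain ⟨m, hm⟩ : ∃ m, G.card = m + 1 :=
    ⟨G.card - 1, by have := Finset.card_pos.mpr ⟨F, hF⟩; omega⟩
  have herase : (G.erase F).card = m := by
    rw [Finset.card_erase_of_mem hF, hm]
    omega
  have h1 := LB n k p hp hn m (G.erase F) herase
    (fun A hA => hG A (Finset.mem_of_mem_erase hA)) (by omega)
  rw [herase] at h1
  have h2 := card_NN_ge' n k p hp hn G hG hGk F hF
  have hd := decomp n k p G F hF
  rw [hm] at heq h2 ⊢
  simp only [Nat.add_sub_cancel]
  rw [Finset.sum_Icc_succ_top (by omega : 1 ≤ m + 1)] at heq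
  omega

lemma eq_subset (n k p : ℕ) (hp : p ∈ Finset.Icc 1 n) (hn : 2*k+1 ≤ n) :
    ∀ x : ℕ, ∀ G : Finset (Finset ℕ), G.card = x →
    (∀ A ∈ G, A ⊆ Finset.Icc 1 n \ {p} ∧ A.card = k) → G.card ≤ k →
    (G.biUnion (pc n k p)).card
      = ∑ j ∈ Finset.Icc 1 G.card, (n - k - j).choose (k - j) →
    ∀ H ⊆ G, (H.biUnion (pc n k p)).card
      = ∑ j ∈ Finset.Icc 1 H.card, (n - k - j).choose (k - j) := by
  intro x
  induction x with
  | zero =>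
      intro G hGx hG hGk heq H hH
      have hG0 : G = ∅ := Finset.card_eq_zero.mp hGx
      rw [hG0, Finset.subset_empty] at hH
      rw [hH]
      rw [hG0] at heq
      exact heq
  | succ m ih =>
      intro G hGx hG hGk heq H hH
      by_cases hHG : H = G
      · rw [hHG]; exact heq
      · have hss : H ⊂ G := ssubset_of_subset_of_ne hH hHG
        obtain ⟨F, hFG, hFH⟩ := Finset.exists_of_ssubset hss
        have ht := (tight n k p hp hn G hG hGk heq F hFG).1
        have herase : (G.erase F).card = m := by
          rw [Finset.card_erase_of_mem hFG, hGx]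
          omega
        have heq2 : ((G.erase F).biUnion (pc n k p)).card
            = ∑ j ∈ Finset.Icc 1 (G.erase F).card, (n - k - j).choose (k - j) := by
          rw [herase, ht, hGx]
          simp only [Nat.add_sub_cancel]
        refine ih (G.erase F) herase
          (fun A hA => hG A (Finset.mem_of_mem_erase hA)) (by omega) heq2 H ?_
        intro a ha
        exact Finset.mem_erase.mpr ⟨fun h => hFH (h ▸ ha), hH ha⟩

lemma sunflower_NN_card (n k p : ℕ) (hp : p ∈ Finset.Icc 1 n) (hn : 2*k+1 ≤ n)
    (hk : 1 ≤ k) {C : Finset ℕ} (hC : C.card = k - 1)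
    (G : Finset (Finset ℕ)) (hG : ∀ A ∈ G, A ⊆ Finset.Icc 1 n \ {p} ∧ A.card = k)
    (hsun : ∀ A ∈ G, ∀ B ∈ G, A ≠ B → A ∩ B = C)
    (hGk : G.card ≤ k) (F : Finset ℕ) (hF : F ∈ G) :
    (NN n k p G F).card = (n - k - G.card).choose (k - G.card) := by
  have hG1 : 1 ≤ G.card := Finset.card_pos.mpr ⟨F, hF⟩
  set R : Finset ℕ := (G.erase F).biUnion (fun B => B \ C) with hR
  have hbprop : ∀ B ∈ G.erase F, C ⊆ B ∧ (B \ C).card = 1 ∧ F ∩ B = C := by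
    intro B hB
    have hBG := Finset.mem_of_mem_erase hB
    have hBF : B ≠ F := (Finset.mem_erase.mp hB).1
    have hFB : F ∩ B = C := hsun F hF B hBG (Ne.symm hBF)
    have hCB : C ⊆ B := hFB ▸ Finset.inter_subset_right
    refine ⟨hCB, ?_, hFB⟩
    rw [Finset.card_sdiff_of_subset hCB, (hG B hBG).2, hC]
    omega
  have hmem : ∀ a ∈ R, ∃ B ∈ G.erase F, a ∈ B \ C := by
    intro a ha
    rw [hR, Finset.mem_biUnion] at ha
    exact ha
  have hRsub : R ⊆ Finset.Icc 1 n \ {p} := by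
    intro a ha
    obtain ⟨B, hB, haB⟩ := hmem a ha
    exact (hG B (Finset.mem_of_mem_erase hB)).1 (Finset.mem_sdiff.mp haB).1
  have hRF : ∀ a ∈ R, a ∉ F := by
    intro a ha haF
    obtain ⟨B, hB, haB⟩ := hmem a ha
    rw [Finset.mem_sdiff] at haB
    have h2 : a ∈ F ∩ B := Finset.mem_inter.mpr ⟨haF, haB.1⟩
    rw [(hbprop B hB).2.2] at h2
    exact haB.2 h2
  have hmcard : R.card = G.card - 1 := by
    rw [hR, Finset.card_biUnion]
    · calc ∑ B ∈ G.erase F, (B \ C).card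
          = ∑ _B ∈ G.erase F, 1 :=
            Finset.sum_congr rfl (fun B hB => (hbprop B hB).2.1)
        _ = (G.erase F).card := by simp
        _ = G.card - 1 := Finset.card_erase_of_mem hF
    · intro B hB B' hB' hne
      rw [Function.onFun, Finset.disjoint_left]
      intro a haB haB'
      obtain ⟨b, hb⟩ := Finset.card_eq_one.mp (hbprop B hB).2.1
      obtain ⟨b', hb'⟩ := Finset.card_eq_one.mp (hbprop B' hB').2.1
      rw [hb, Finset.mem_singleton] at haB
      rw [hb', Finset.mem_singleton] at haB'
      apply hne
      have e1 : B = C ∪ (B \ C) :=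
        (Finset.union_sdiff_of_subset (hbprop B hB).1).symm
      have e2 : B' = C ∪ (B' \ C) :=
        (Finset.union_sdiff_of_subset (hbprop B' hB').1).symm
      rw [e1, e2, hb, hb', ← haB, ← haB']
  have hm : R.card ≤ k - 1 := by omega
  have hmeets : ∀ B ∈ G.erase F, (R ∩ B).Nonempty := by
    intro B hB
    obtain ⟨b, hb⟩ := Finset.card_eq_one.mp (hbprop B hB).2.1
    have hbmem : b ∈ B \ C := by rw [hb]; exact Finset.mem_singleton_self _
    refine ⟨b, Finset.mem_inter.mpr ⟨?_, (Finset.mem_sdiff.mp hbmem).1⟩⟩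
    rw [hR, Finset.mem_biUnion]
    exact ⟨B, hB, hbmem⟩
  have himg := img_subset_NN n k p G F (hG F hF).1 R hRsub hRF hm hmeets
  have hsup : NN n k p G F ⊆
      ((Finset.Icc 1 n \ insert p (F ∪ R)).powersetCard (k - 1 - R.card)).image
        (fun S => R ∪ S) := by
    intro T hT
    rw [NN, Finset.mem_filter, pc, Finset.mem_powersetCard] at hT
    obtain ⟨⟨hTsub, hTcard⟩, hTmeets⟩ := hT
    have hTF : ∀ a ∈ T, a ∉ F ∧ a ≠ p ∧ a ∈ Finset.Icc 1 n := by
      intro a ha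
      have h2 := Finset.mem_sdiff.mp (hTsub ha)
      rw [Finset.mem_insert] at h2
      exact ⟨fun h => h2.2 (Or.inr h), fun h => h2.2 (Or.inl h), h2.1⟩
    have hRT : R ⊆ T := by
      intro a ha
      obtain ⟨B, hB, haB⟩ := hmem a ha
      obtain ⟨b, hb⟩ := Finset.card_eq_one.mp (hbprop B hB).2.1
      obtain ⟨t, ht⟩ := hTmeets B hB
      rw [Finset.mem_inter] at ht
      have hCF : C ⊆ F := (hbprop B hB).2.2 ▸ Finset.inter_subset_left
      have htC : t ∉ C := fun h => (hTF t ht.1).1 (hCF h)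
      have htB : t ∈ B \ C := Finset.mem_sdiff.mpr ⟨ht.2, htC⟩
      rw [hb, Finset.mem_singleton] at htB haB
      rw [haB, ← htB]
      exact ht.1
    refine Finset.mem_image.mpr ⟨T \ R, ?_, Finset.union_sdiff_of_subset hRT⟩
    rw [Finset.mem_powersetCard]
    constructor
    · intro a ha
      rw [Finset.mem_sdiff] at ha
      rw [Finset.mem_sdiff, Finset.mem_insert]
      obtain ⟨haF, hap, haI⟩ := hTF a ha.1
      refine ⟨haI, ?_⟩
      rintro (rfl | hmem2)
      · exact hap rfl
      · rcases Finset.mem_union.mp hmem2 with h | h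
        · exact haF h
        · exact ha.2 h
    · rw [Finset.card_sdiff_of_subset hRT, hTcard]
  have hcard := img_card n k p hp F (hG F hF).1 (hG F hF).2 R hRsub hRF
  rw [Finset.Subset.antisymm hsup himg, hcard]
  congr 1 <;> omega

lemma sunflower_union_card (n k p : ℕ) (hp : p ∈ Finset.Icc 1 n) (hn : 2*k+1 ≤ n)
    (hk : 1 ≤ k) {C : Finset ℕ} (hC : C.card = k - 1) :
    ∀ x : ℕ, ∀ G : Finset (Finset ℕ), G.card = x →
    (∀ A ∈ G, A ⊆ Finset.Icc 1 n \ {p} ∧ A.card = k) → G.card ≤ k →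
    (∀ A ∈ G, ∀ B ∈ G, A ≠ B → A ∩ B = C) →
    (G.biUnion (pc n k p)).card
      = ∑ j ∈ Finset.Icc 1 G.card, (n - k - j).choose (k - j) := by
  intro x
  induction x with
  | zero =>
      intro G hGx _ _ _
      rw [Finset.card_eq_zero.mp hGx]
      simp
  | succ m ih =>
      intro G hGx hG hGk hsun
      obtain ⟨F, hF⟩ := Finset.card_pos.mp (show 0 < G.card by omega)
      rw [decomp n k p G F hF, hGx]
      have herase : (G.erase F).card = m := by
        rw [Finset.card_erase_of_mem hF, hGx]
        omega
      have h1 := ih (G.erase F) herase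
        (fun A hA => hG A (Finset.mem_of_mem_erase hA)) (by omega)
        (fun A hA B hB hne => hsun A (Finset.mem_of_mem_erase hA)
          B (Finset.mem_of_mem_erase hB) hne)
      rw [herase] at h1
      have h2 := sunflower_NN_card n k p hp hn hk hC G hG hsun hGk F hF
      rw [hGx] at h2
      rw [Finset.sum_Icc_succ_top (by omega : 1 ≤ m + 1), h1, h2]

lemma pair_lemma (n k p : ℕ) (hp : p ∈ Finset.Icc 1 n) (hn : 2*k+1 ≤ n) (hk2 : 2 ≤ k)
    {A B : Finset ℕ} (hAB : A ≠ B)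
    (hA : A ⊆ Finset.Icc 1 n \ {p}) (hAc : A.card = k)
    (hB : B ⊆ Finset.Icc 1 n \ {p}) (hBc : B.card = k)
    (hint : (A ∩ B).Nonempty)
    (hNN : (NN n k p {A, B} B).card = (n - k - 2).choose (k - 2)) :
    (A ∩ B).card = k - 1 := by
  classical
  have herase : ({A, B} : Finset (Finset ℕ)).erase B = {A} := by
    ext X
    simp only [Finset.mem_erase, Finset.mem_insert, Finset.mem_singleton]
    constructor
    · rintro ⟨hXB, (rfl | rfl)⟩
      · rfl
      · exact absurd rfl hXB
    · rintro rfl; exact ⟨hAB, Or.inl rfl⟩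
  have hNNeq : NN n k p {A, B} B
      = pc n k p B \ (Finset.Icc 1 n \ insert p (A ∪ B)).powersetCard (k-1) := by
    ext T
    rw [NN, Finset.mem_filter, herase, Finset.mem_sdiff]
    simp only [Finset.mem_singleton, forall_eq]
    constructor
    · rintro ⟨hTpc, hTA⟩
      refine ⟨hTpc, ?_⟩
      intro hTmem
      rw [Finset.mem_powersetCard] at hTmem
      obtain ⟨a, ha⟩ := hTA
      rw [Finset.mem_inter] at ha
      have h2 := hTmem.1 ha.1
      rw [Finset.mem_sdiff, Finset.mem_insert] at h2
      exact h2.2 (Or.inr (Finset.mem_union_left _ ha.2))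
    · rintro ⟨hTpc, hTnot⟩
      refine ⟨hTpc, ?_⟩
      by_contra hempty
      rw [Finset.not_nonempty_iff_eq_empty] at hempty
      apply hTnot
      rw [pc, Finset.mem_powersetCard] at hTpc
      rw [Finset.mem_powersetCard]
      refine ⟨?_, hTpc.2⟩
      intro a ha
      have h2 := hTpc.1 ha
      rw [Finset.mem_sdiff, Finset.mem_insert] at h2
      rw [Finset.mem_sdiff, Finset.mem_insert]
      refine ⟨h2.1, ?_⟩
      rintro (rfl | hmem2)
      · exact h2.2 (Or.inl rfl)
      · rcases Finset.mem_union.mp hmem2 with h | h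
        · have : a ∈ T ∩ A := Finset.mem_inter.mpr ⟨ha, h⟩
          rw [hempty] at this
          simp at this
        · exact h2.2 (Or.inr h)
  have hsub : (Finset.Icc 1 n \ insert p (A ∪ B)).powersetCard (k-1) ⊆ pc n k p B := by
    rw [pc]
    apply Finset.powersetCard_mono
    exact Finset.sdiff_subset_sdiff (Finset.Subset.refl _)
      (Finset.insert_subset_insert _ Finset.subset_union_right)
  have hABsub : A ∪ B ⊆ Finset.Icc 1 n \ {p} := Finset.union_subset hA hB
  have hcard1 : (pc n k p B).card = (n - 1 - k).choose (k-1) := by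
    rw [pc, Finset.card_powersetCard, card_compl n p hp hB, hBc]
  have hcard2 : ((Finset.Icc 1 n \ insert p (A ∪ B)).powersetCard (k-1)).card
      = (n - 1 - (A ∪ B).card).choose (k-1) := by
    rw [Finset.card_powersetCard, card_compl n p hp hABsub]
  have hNN2 : (NN n k p {A, B} B).card
      = (n-1-k).choose (k-1) - (n - 1 - (A ∪ B).card).choose (k-1) := by
    rw [hNNeq, Finset.card_sdiff_of_subset hsub, hcard1, hcard2]
  have hiu : (A ∪ B).card + (A ∩ B).card = 2*k := by
    have h2 := Finset.card_union_add_card_inter A B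
    rw [hAc, hBc] at h2
    omega
  have hi1 : 1 ≤ (A ∩ B).card := Finset.card_pos.mpr hint
  have hik : (A ∩ B).card ≤ k := by
    rw [← hAc]; exact Finset.card_le_card Finset.inter_subset_left
  have hink : (A ∩ B).card ≠ k := by
    intro h
    apply hAB
    have h1 : A ∩ B = A := Finset.eq_of_subset_of_card_le
      Finset.inter_subset_left (by omega)
    have h2 : A ∩ B = B := Finset.eq_of_subset_of_card_le
      Finset.inter_subset_right (by rw [hBc]; omega)
    rw [← h1, h2]
  by_contra hne
  have hile : (A ∩ B).card ≤ k - 2 := by omega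
  have f1 : (n-1-k).choose (k-1) = (n-k-2).choose (k-2) + (n-k-2).choose (k-1) := by
    have e1 : n-1-k = (n-k-2)+1 := by omega
    have e2 : k-1 = (k-2)+1 := by omega
    rw [e1, e2, Nat.choose_succ_succ]
  have f2 : (n - 1 - (A ∪ B).card).choose (k-1) ≤ (n-k-3).choose (k-1) :=
    Nat.choose_le_choose _ (by omega)
  have f3 : (n-k-3).choose (k-1) < (n-k-2).choose (k-1) := by
    have e1 : n-k-2 = (n-k-3)+1 := by omega
    have e2 : k-1 = (k-2)+1 := by omega
    rw [e1, e2, Nat.choose_succ_succ]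
    simp only [Nat.succ_eq_add_one]
    have hpos : 0 < (n-k-3).choose (k-2) := Nat.choose_pos (by omega)
    omega
  omega

lemma triple_lemma (n k p : ℕ) (hp : p ∈ Finset.Icc 1 n) (hn : 2*k+1 ≤ n) (hk3 : 3 ≤ k)
    {F1 F2 F3 : Finset ℕ}
    (hF3 : F3 ⊆ Finset.Icc 1 n \ {p}) (hF3c : F3.card = k)
    {c : ℕ} (hc1 : c ∈ F1) (hc1' : F1 ⊆ Finset.Icc 1 n \ {p}) (hc2 : c ∈ F2) (hc3 : c ∉ F3)
    (hNN : (NN n k p {F1, F2, F3} F3).card = (n - k - 3).choose (k - 3)) : False := by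
  have hRsub : ({c} : Finset ℕ) ⊆ Finset.Icc 1 n \ {p} := by
    intro a ha; rw [Finset.mem_singleton] at ha; subst ha; exact hc1' hc1
  have hRF : ∀ a ∈ ({c} : Finset ℕ), a ∉ F3 := by
    intro a ha; rw [Finset.mem_singleton] at ha; subst ha; exact hc3
  have hm : ({c} : Finset ℕ).card ≤ k - 1 := by
    rw [Finset.card_singleton]; omega
  have hmeets : ∀ B ∈ ({F1, F2, F3} : Finset (Finset ℕ)).erase F3,
      (({c} : Finset ℕ) ∩ B).Nonempty := by
    intro B hB
    have hBmem := Finset.mem_of_mem_erase hB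
    have hBne := (Finset.mem_erase.mp hB).1
    simp only [Finset.mem_insert, Finset.mem_singleton] at hBmem
    have hcB : c ∈ B := by
      rcases hBmem with rfl | rfl | rfl
      · exact hc1
      · exact hc2
      · exact absurd rfl hBne
    exact ⟨c, Finset.mem_inter.mpr ⟨Finset.mem_singleton_self _, hcB⟩⟩
  have h1 := img_subset_NN n k p {F1, F2, F3} F3 hF3 {c} hRsub hRF hm hmeets
  have h2 := img_card n k p hp F3 hF3 hF3c {c} hRsub hRF
  simp only [Finset.card_singleton] at h1 h2 hm
  have h3 : (n-1-k-1).choose (k-1-1) ≤ (NN n k p {F1, F2, F3} F3).card := by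
    rw [← h2]
    exact Finset.card_le_card h1
  have h4 : (n-k-3).choose (k-3) < (n-1-k-1).choose (k-1-1) := by
    have e1 : n-1-k-1 = (n-2*k) + (k-2) := by omega
    have e2 : k-1-1 = k-2 := by omega
    have e3 : n-k-3 = (n-2*k) + (k-3) := by omega
    rw [e1, e2, e3]
    exact choose_strict_diag (by omega) (by omega)
  omega

end SunflowerAux

open SunflowerAux

theorem union_complements_eq_iff_sunflower (n k x p : ℕ) (hk : 1 ≤ k)
    (hn : 2 * k + 1 ≤ n) (hp : p ∈ Finset.Icc 1 n)
    (hx1 : 1 ≤ x) (hxk : x ≤ k)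
    (G : Finset (Finset ℕ)) (hGcard : G.card = x)
    (hGsub : ∀ A ∈ G, A ⊆ Finset.Icc 1 n \ {p} ∧ A.card = k)
    (hGint : ∀ A ∈ G, ∀ B ∈ G, (A ∩ B).Nonempty) :
    (G.biUnion (fun A => (Finset.Icc 1 n \ insert p A).powersetCard (k - 1))).card =
        ∑ j ∈ Finset.Icc 1 x, (n - k - j).choose (k - j) ↔
      ∃ C : Finset ℕ, C.card = k - 1 ∧
        ∀ A ∈ G, ∀ B ∈ G, A ≠ B → A ∩ B = C := by
  have hpc : (G.biUnion fun A => (Finset.Icc 1 n \ insert p A).powersetCard (k - 1))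
      = G.biUnion (pc n k p) := rfl
  constructor
  · intro heq
    rw [hpc] at heq
    rw [← hGcard] at heq
    by_cases hx2 : x = 1
    · refine ⟨Finset.Icc 1 (k-1), by rw [Nat.card_Icc]; omega, ?_⟩
      intro A hA B hB hne
      exfalso
      apply hne
      exact Finset.card_le_one.mp (by omega) A hA B hB
    · have hk2 : 2 ≤ k := by omega
      have hpair : ∀ A ∈ G, ∀ B ∈ G, A ≠ B → (A ∩ B).card = k - 1 := by
        intro A hA B hB hne
        have hH : ({A, B} : Finset (Finset ℕ)) ⊆ G := by
          intro Y hY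
          rcases Finset.mem_insert.mp hY with rfl | hY2
          · exact hA
          · rw [Finset.mem_singleton] at hY2; subst hY2; exact hB
        have hHsub : ∀ A' ∈ ({A, B} : Finset (Finset ℕ)),
            A' ⊆ Finset.Icc 1 n \ {p} ∧ A'.card = k := fun A' hA' => hGsub A' (hH hA')
        have hcard2 : ({A, B} : Finset (Finset ℕ)).card = 2 := Finset.card_pair hne
        have heqH := eq_subset n k p hp hn x G hGcard hGsub (by omega) heq {A, B} hH
        have hBmem : B ∈ ({A, B} : Finset (Finset ℕ)) := by simp
        have ht := (tight n k p hp hn {A, B} hHsub (by rw [hcard2]; omega) heqH B hBmem).2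
        rw [hcard2] at ht
        exact pair_lemma n k p hp hn hk2 hne (hGsub A hA).1 (hGsub A hA).2
          (hGsub B hB).1 (hGsub B hB).2 (hGint A hA B hB) ht
      have htrip : ∀ A ∈ G, ∀ B ∈ G, ∀ D ∈ G, A ≠ B → A ≠ D → B ≠ D →
          A ∩ B = A ∩ D := by
        intro A hA B hB D hD hABne hADne hBDne
        by_contra hne
        have hsubD : ¬ (A ∩ B ⊆ D) := by
          intro hsub
          apply hne
          have h1 : A ∩ B ⊆ A ∩ D :=
            Finset.subset_inter Finset.inter_subset_left hsub
          exact Finset.eq_of_subset_of_card_le h1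
            (by rw [hpair A hA B hB hABne, hpair A hA D hD hADne])
        obtain ⟨c, hcAB, hcD⟩ := Finset.not_subset.mp hsubD
        have hH : ({A, B, D} : Finset (Finset ℕ)) ⊆ G := by
          intro Y hY
          simp only [Finset.mem_insert, Finset.mem_singleton] at hY
          rcases hY with rfl | rfl | rfl <;> assumption
        have hAnot : A ∉ ({B, D} : Finset (Finset ℕ)) := by
          simp only [Finset.mem_insert, Finset.mem_singleton]
          push_neg
          exact ⟨hABne, hADne⟩
        have hcard3 : ({A, B, D} : Finset (Finset ℕ)).card = 3 := by
          rw [show ({A, B, D} : Finset (Finset ℕ)) = insert A {B, D} from rfl,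
            Finset.card_insert_of_notMem hAnot, Finset.card_pair hBDne]
        have hk3 : 3 ≤ k := by
          have h3 := Finset.card_le_card hH
          rw [hcard3] at h3
          omega
        have hHsub : ∀ A' ∈ ({A, B, D} : Finset (Finset ℕ)),
            A' ⊆ Finset.Icc 1 n \ {p} ∧ A'.card = k := fun A' hA' => hGsub A' (hH hA')
        have heqH := eq_subset n k p hp hn x G hGcard hGsub (by omega) heq {A, B, D} hH
        have hDmem : D ∈ ({A, B, D} : Finset (Finset ℕ)) := by simp
        have ht := (tight n k p hp hn {A, B, D} hHsub (by rw [hcard3]; omega) heqH D hDmem).2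
        rw [hcard3] at ht
        exact triple_lemma n k p hp hn hk3 (hGsub D hD).1 (hGsub D hD).2
          (Finset.mem_inter.mp hcAB).1 (hGsub A hA).1 (Finset.mem_inter.mp hcAB).2 hcD ht
      obtain ⟨F, hF, F', hF', hFF'⟩ := Finset.one_lt_card.mp (show 1 < G.card by omega)
      refine ⟨F ∩ F', hpair F hF F' hF' hFF', ?_⟩
      intro A hA B hB hABne
      by_cases hAF : A = F
      · subst hAF
        by_cases hBF' : B = F'
        · subst hBF'; rfl
        · exact (htrip A hA F' hF' B hB hFF' hABne (fun h => hBF' h.symm)).symm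
      · by_cases hAF' : A = F'
        · subst hAF'
          by_cases hBF : B = F
          · subst hBF; exact Finset.inter_comm _ _
          · rw [htrip A hA B hB F hF hABne (Ne.symm hFF') (fun h => hBF h)]
            exact Finset.inter_comm _ _
        · by_cases hBF : B = F
          · subst hBF
            rw [Finset.inter_comm]
            exact htrip B hB A hA F' hF' (fun h => hAF h.symm) hFF' hAF'
          · by_cases hBF' : B = F'
            · subst hBF'
              rw [Finset.inter_comm]
              rw [htrip B hB A hA F hF (fun h => hAF' h.symm) (Ne.symm hFF') hAF]
              exact Finset.inter_comm _ _
            · rw [htrip A hA B hB F hF hABne (fun h => hAF h) (fun h => hBF h)]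
              rw [Finset.inter_comm]
              exact htrip F hF A hA F' hF' (fun h => hAF h.symm) hFF' hAF'
  · rintro ⟨C, hC, hsun⟩
    rw [hpc, ← hGcard]
    exact sunflower_union_card n k p hp hn hk hC x G hGcard hGsub (by omega) hsun
end

section
/- Let F₁,...,F_x be distinct pairwise-intersecting k-subsets of [n]∖{p} with 1 ≤ x ≤ k and n ≥ 2k+1. If {F₁,...,F_x} is not a sunflower with k-1 common elements, then |⋃_{i=1}^{x} ([n]∖(F_i ∪ {p}) choose k-1)| ≥ Σ_{j=1}^{x} C(n-k-j, k-j) + C(n-k-3, k-2). -/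
open Finset

-- step monotone lemma
lemma choose_step (M r : ℕ) (h : r ≤ M) : Nat.choose (M-1) (r-1) ≤ Nat.choose M r := by
  match M, r with
  | M, 0 => simp
  | M+1, r+1 => simp [Nat.choose_succ_succ]
  | 0, r+1 => omega

lemma choose_mono_sub (M r : ℕ) (hr : r ≤ M) : ∀ s t, s ≤ t → Nat.choose (M - t) (r - t) ≤ Nat.choose (M - s) (r - s) := by
  intro s t hst
  induction t with
  | zero => simp_all
  | succ t ih =>
    rcases Nat.lt_or_ge s (t+1) with h | h
    · have h1 : Nat.choose (M - (t+1)) (r - (t+1)) ≤ Nat.choose (M - t) (r - t) := by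
        have : M - (t+1) = (M - t) - 1 := by omega
        have h2 : r - (t+1) = (r - t) - 1 := by omega
        rw [this, h2]
        exact choose_step _ _ (by omega)
      exact h1.trans (ih (by omega))
    · have : s = t+1 := by omega
      subst this; exact le_refl _

lemma card_filter_superset (Y S : Finset ℕ) (r : ℕ) (hS : S ⊆ Y) (hr : S.card ≤ r) :
    ((Y.powersetCard r).filter (fun T => S ⊆ T)).card = Nat.choose (Y.card - S.card) (r - S.card) := by
  rw [← card_sdiff_of_subset hS, ← card_powersetCard]
  apply Finset.card_bij' (fun T _ => T \ S) (fun T _ => T ∪ S)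
  · intro T hT
    simp only [mem_filter, mem_powersetCard] at hT
    simp only [mem_powersetCard]
    exact ⟨sdiff_subset_sdiff hT.1.1 (le_refl _), by rw [card_sdiff_of_subset hT.2, hT.1.2]⟩
  · intro T hT
    simp only [mem_powersetCard] at hT
    simp only [mem_filter, mem_powersetCard]
    have hTS : Disjoint T S := disjoint_of_subset_left hT.1 sdiff_disjoint
    refine ⟨⟨union_subset (hT.1.trans sdiff_subset) hS, ?_⟩, subset_union_right⟩
    rw [card_union_of_disjoint hTS, hT.2]
    omega
  · intro T hT
    simp only [mem_filter, mem_powersetCard] at hT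
    exact sdiff_union_of_subset hT.2
  · intro T hT
    simp only [mem_powersetCard] at hT
    have hTS : Disjoint T S := disjoint_of_subset_left hT.1 sdiff_disjoint
    exact union_sdiff_cancel_right hTS

lemma powersetCard_inter (Y₁ Y₂ : Finset ℕ) (r : ℕ) :
    (Y₁ ∩ Y₂).powersetCard r = Y₁.powersetCard r ∩ Y₂.powersetCard r := by
  ext T
  simp only [mem_powersetCard, mem_inter, subset_inter_iff]
  tauto

def CC (n k p : ℕ) (A : Finset ℕ) : Finset (Finset ℕ) :=
  (Finset.Icc 1 n \ insert p A).powersetCard (k - 1)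

lemma ground_card (n k p : ℕ) (hp : p ∈ Finset.Icc 1 n) (A : Finset ℕ)
    (hA : A ⊆ Finset.Icc 1 n \ {p}) (hAk : A.card = k) :
    (Finset.Icc 1 n \ insert p A).card = n - k - 1 := by
  have hpA : p ∉ A := fun h => by simpa using (hA h)
  have hsub : insert p A ⊆ Finset.Icc 1 n :=
    insert_subset hp (hA.trans sdiff_subset)
  rw [card_sdiff_of_subset hsub, card_insert_of_notMem hpA, hAk, Nat.card_Icc]
  omega

lemma card_CC (n k p : ℕ) (hp : p ∈ Finset.Icc 1 n) (A : Finset ℕ)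
    (hA : A ⊆ Finset.Icc 1 n \ {p}) (hAk : A.card = k) :
    (CC n k p A).card = Nat.choose (n - k - 1) (k - 1) := by
  rw [CC, card_powersetCard, ground_card n k p hp A hA hAk]

-- Step lemma
lemma step_lemma (n k p : ℕ) (hp : p ∈ Finset.Icc 1 n) (hn : 2 * k + 1 ≤ n)
    (H : Finset (Finset ℕ)) (B : Finset ℕ)
    (hB : B ⊆ Finset.Icc 1 n \ {p}) (hBk : B.card = k)
    (hH : ∀ A ∈ H, A ⊆ Finset.Icc 1 n \ {p} ∧ A.card = k)
    (hBH : B ∉ H) (hc : H.card ≤ k - 1) :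
    (H.biUnion (CC n k p)).card + Nat.choose (n - k - 1 - H.card) (k - 1 - H.card)
      ≤ ((insert B H).biUnion (CC n k p)).card := by
  classical
  -- nonempty difference A \ B for A ∈ H
  have hdiff : ∀ A ∈ H, (A \ B).Nonempty := by
    intro A hA
    rw [sdiff_nonempty]
    intro hsub
    exact hBH (by rwa [eq_of_subset_of_card_le hsub (by rw [hBk, (hH A hA).2])] at hA)
  -- transversal S
  set S : Finset ℕ := H.attach.image (fun A => (A.1 \ B).min' (hdiff A.1 A.2)) with hSdef
  have hSmem : ∀ A : {x // x ∈ H}, (A.1 \ B).min' (hdiff A.1 A.2) ∈ A.1 \ B := fun A =>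
    min'_mem _ _
  have hScard : S.card ≤ H.card := (card_image_le).trans (by rw [card_attach])
  have hSsub : S ⊆ Finset.Icc 1 n \ insert p B := by
    intro a ha
    rw [hSdef, mem_image] at ha
    obtain ⟨A, hA, rfl⟩ := ha
    have h1 := hSmem A
    rw [mem_sdiff] at h1
    have h2 := (hH A.1 A.2).1 h1.1
    rw [mem_sdiff, mem_singleton] at h2
    rw [mem_sdiff, mem_insert]
    exact ⟨h2.1, by tauto⟩
  -- D = sets in CC B containing S
  set D : Finset (Finset ℕ) := (CC n k p B).filter (fun T => S ⊆ T) with hDdef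
  have hDcard : D.card = Nat.choose (n - k - 1 - S.card) (k - 1 - S.card) := by
    rw [hDdef, CC, card_filter_superset _ _ _ hSsub (hScard.trans hc),
      ground_card n k p hp B hB hBk]
  have hDbound : Nat.choose (n - k - 1 - H.card) (k - 1 - H.card) ≤ D.card := by
    rw [hDcard]
    exact choose_mono_sub (n - k - 1) (k - 1) (by omega) S.card H.card hScard
  -- D disjoint from biUnion H
  have hdisj : Disjoint D (H.biUnion (CC n k p)) := by
    rw [disjoint_left]
    intro T hT hT'
    rw [hDdef, mem_filter] at hT
    rw [mem_biUnion] at hT'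
    obtain ⟨A, hA, hTA⟩ := hT'
    rw [CC, mem_powersetCard] at hTA
    -- T contains the representative of A, which lies in A, but T avoids A
    have h1 := hSmem ⟨A, hA⟩
    rw [mem_sdiff] at h1
    have h2 : (A \ B).min' (hdiff A hA) ∈ S := by
      rw [hSdef, mem_image]; exact ⟨⟨A, hA⟩, mem_attach _ _, rfl⟩
    have h3 := hTA.1 (hT.2 h2)
    rw [mem_sdiff, mem_insert] at h3
    exact h3.2 (Or.inr h1.1)
  calc (H.biUnion (CC n k p)).card + Nat.choose (n - k - 1 - H.card) (k - 1 - H.card)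
      ≤ (H.biUnion (CC n k p)).card + D.card := by omega
    _ = (D ∪ H.biUnion (CC n k p)).card := by
        rw [card_union_of_disjoint hdisj]; omega
    _ ≤ ((insert B H).biUnion (CC n k p)).card := by
        apply card_le_card
        rw [biUnion_insert]
        apply union_subset_union_left
        rw [hDdef]; exact filter_subset _ _
lemma tail_lemma (n k p : ℕ) (hp : p ∈ Finset.Icc 1 n) (hn : 2 * k + 1 ≤ n) :
    ∀ (r : ℕ) (R P : Finset (Finset ℕ)), R.card = r → Disjoint P R →
    (∀ A ∈ P ∪ R, A ⊆ Finset.Icc 1 n \ {p} ∧ A.card = k) →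
    P.card + R.card ≤ k →
    (P.biUnion (CC n k p)).card
      + ∑ j ∈ Finset.Icc (P.card + 1) (P.card + R.card), Nat.choose (n - k - j) (k - j)
      ≤ ((P ∪ R).biUnion (CC n k p)).card := by
  intro r
  induction r with
  | zero =>
    intro R P hR _ _ _
    rw [card_eq_zero] at hR
    subst hR
    simp
  | succ r ih =>
    intro R P hR hdisj hmem hcard
    have hRne : R.Nonempty := card_pos.mp (by omega)
    obtain ⟨B, hB⟩ := hRne
    have hBP : B ∉ P := disjoint_right.mp hdisj hB
    set R' := R.erase B with hR'def
    set P' := insert B P with hP'def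
    have hR'card : R'.card = r := by rw [hR'def, card_erase_of_mem hB, hR]; omega
    have hP'card : P'.card = P.card + 1 := card_insert_of_notMem hBP
    have hunion : P' ∪ R' = P ∪ R := by
      rw [hP'def, hR'def, insert_union, ← union_insert, insert_erase hB]
    have hdisj' : Disjoint P' R' := by
      rw [hP'def, hR'def]
      apply disjoint_insert_left.mpr
      exact ⟨notMem_erase _ _, disjoint_of_subset_right (erase_subset _ _) hdisj⟩
    have hmem' : ∀ A ∈ P' ∪ R', A ⊆ Finset.Icc 1 n \ {p} ∧ A.card = k := by
      rw [hunion]; exact hmem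
    -- step: from P to P'
    have hBmem := hmem B (mem_union_right _ hB)
    have hstep := step_lemma n k p hp hn P B hBmem.1 hBmem.2
      (fun A hA => hmem A (mem_union_left _ hA)) hBP (by omega)
    rw [← hP'def] at hstep
    -- IH: from P' to P' ∪ R'
    have hih := ih R' P' hR'card hdisj' hmem' (by omega)
    rw [hunion, hP'card, hR'card] at hih
    -- sum splitting
    have hsplit : Finset.Icc (P.card + 1) (P.card + (r + 1))
        = insert (P.card + 1) (Finset.Icc (P.card + 1 + 1) (P.card + 1 + r)) := by
      ext j
      simp only [mem_Icc, mem_insert]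
      omega
    have hnotmem : P.card + 1 ∉ Finset.Icc (P.card + 1 + 1) (P.card + 1 + r) := by
      simp only [mem_Icc]; omega
    rw [hR, hsplit, sum_insert hnotmem]
    have hterm : Nat.choose (n - k - 1 - P.card) (k - 1 - P.card)
        = Nat.choose (n - k - (P.card + 1)) (k - (P.card + 1)) := by
      congr 1 <;> omega
    omega
lemma pascal_chain (m k : ℕ) (hk : 2 ≤ k) (hm : k ≤ m) :
    Nat.choose (m-1) (k-2) + Nat.choose (m-2) (k-2) + Nat.choose (m-2) (k-1)
      = Nat.choose m (k-1) := by
  obtain ⟨k2, rfl⟩ : ∃ k2, k = k2 + 2 := ⟨k-2, by omega⟩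
  obtain ⟨m2, rfl⟩ : ∃ m2, m = m2 + 2 := ⟨m-2, by omega⟩
  have h1 : (m2+2).choose (k2+1) = (m2+1).choose k2 + (m2+1).choose (k2+1) :=
    Nat.choose_succ_succ _ _
  have h2 : (m2+1).choose (k2+1) = m2.choose k2 + m2.choose (k2+1) :=
    Nat.choose_succ_succ _ _
  have h3 : (m2+1).choose k2 = (m2+1).choose (k2+2-2) := rfl
  have h4 : m2+2-1 = m2+1 := rfl
  have h5 : m2+2-2 = m2 := by omega
  have h6 : k2+2-2 = k2 := rfl
  have h7 : k2+2-1 = k2+1 := rfl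
  rw [h4, h5, h6, h7]
  omega

lemma base1 (n k p : ℕ) (hp : p ∈ Finset.Icc 1 n) (hn : 2 * k + 1 ≤ n) (hk : 2 ≤ k)
    (A B : Finset ℕ) (hA : A ⊆ Finset.Icc 1 n \ {p}) (hAk : A.card = k)
    (hB : B ⊆ Finset.Icc 1 n \ {p}) (hBk : B.card = k) (hAB : A ≠ B)
    (hsmall : (A ∩ B).card ≤ k - 2) :
    Nat.choose (n-k-1) (k-1) + Nat.choose (n-k-2) (k-2) + Nat.choose (n-k-3) (k-2)
      ≤ (({A, B} : Finset (Finset ℕ)).biUnion (CC n k p)).card := by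
  classical
  have hbi : ({A, B} : Finset (Finset ℕ)).biUnion (CC n k p) = CC n k p A ∪ CC n k p B := by
    rw [show ({A, B} : Finset (Finset ℕ)) = insert A {B} from rfl, biUnion_insert, singleton_biUnion]
  rw [hbi]
  have hcardA := card_CC n k p hp A hA hAk
  have hcardB := card_CC n k p hp B hB hBk
  have hpA : p ∉ A := fun h => by simpa using (hA h)
  have hpB : p ∉ B := fun h => by simpa using (hB h)
  have hinter : CC n k p A ∩ CC n k p B
      = (Finset.Icc 1 n \ insert p (A ∪ B)).powersetCard (k-1) := by
    rw [CC, CC, ← powersetCard_inter]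
    congr 1
    ext a
    simp only [mem_inter, mem_sdiff, mem_insert, mem_union]
    tauto
  have hABsub : insert p (A ∪ B) ⊆ Finset.Icc 1 n := by
    apply insert_subset hp
    apply union_subset (hA.trans sdiff_subset) (hB.trans sdiff_subset)
  have hpAB : p ∉ A ∪ B := by simp [hpA, hpB]
  have hucard : (A ∪ B).card + (A ∩ B).card = k + k := by
    rw [card_union_add_card_inter, hAk, hBk]
  have hground : (Finset.Icc 1 n \ insert p (A ∪ B)).card = n - ((A ∪ B).card + 1) := by
    rw [card_sdiff_of_subset hABsub, card_insert_of_notMem hpAB, Nat.card_Icc]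
    omega
  have hineq : (CC n k p A ∩ CC n k p B).card ≤ Nat.choose ((n-k-1)-2) (k-1) := by
    rw [hinter, card_powersetCard, hground]
    apply Nat.choose_le_choose
    omega
  have huni : (CC n k p A ∪ CC n k p B).card + (CC n k p A ∩ CC n k p B).card
      = (CC n k p A).card + (CC n k p B).card := card_union_add_card_inter _ _
  have hpc := pascal_chain (n-k-1) k hk (by omega)
  rw [show n-k-2 = (n-k-1)-1 by omega, show n-k-3 = (n-k-1)-2 by omega]
  omega
lemma pascal2 (m k : ℕ) (hk : 3 ≤ k) (hm : k ≤ m) :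
    Nat.choose (m-2) (k-3) + Nat.choose (m-2) (k-2) = Nat.choose (m-1) (k-2) := by
  obtain ⟨k3, rfl⟩ : ∃ k3, k = k3 + 3 := ⟨k-3, by omega⟩
  obtain ⟨m3, rfl⟩ : ∃ m3, m = m3 + 3 := ⟨m-3, by omega⟩
  have h5 : m3+3-2 = m3+1 := by omega
  have h6 : m3+3-1 = m3+2 := by omega
  have h7 : k3+3-3 = k3 := by omega
  have h8 : k3+3-2 = k3+1 := by omega
  rw [h5, h6, h7, h8]
  exact (Nat.choose_succ_succ _ _).symm

lemma mem_CC_avoid (n k p : ℕ) (A T : Finset ℕ) (c : ℕ) (hT : T ∈ CC n k p A)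
    (hc : c ∈ A) : c ∉ T := by
  rw [CC, mem_powersetCard] at hT
  intro h
  have := hT.1 h
  rw [mem_sdiff, mem_insert] at this
  exact this.2 (Or.inr hc)

lemma base2 (n k p : ℕ) (hp : p ∈ Finset.Icc 1 n) (hn : 2 * k + 1 ≤ n) (hk : 2 ≤ k)
    (F1 F2 F3 : Finset ℕ)
    (h1 : F1 ⊆ Finset.Icc 1 n \ {p}) (h1k : F1.card = k)
    (h2 : F2 ⊆ Finset.Icc 1 n \ {p}) (h2k : F2.card = k)
    (h3 : F3 ⊆ Finset.Icc 1 n \ {p}) (h3k : F3.card = k)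
    (a b : ℕ) (ha : a ∈ F1 \ F2) (hb : b ∈ (F1 ∩ F2) \ F3) :
    Nat.choose (n-k-1) (k-1) + Nat.choose (n-k-2) (k-2) + Nat.choose (n-k-2) (k-2)
      ≤ (({F1, F2, F3} : Finset (Finset ℕ)).biUnion (CC n k p)).card := by
  classical
  rw [mem_sdiff] at ha
  rw [mem_sdiff, mem_inter] at hb
  set D2 : Finset (Finset ℕ) := (CC n k p F2).filter (fun T => {a} ⊆ T) with hD2
  set D3 : Finset (Finset ℕ) := (CC n k p F3).filter (fun T => {b} ⊆ T) with hD3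
  -- cardinalities
  have hsub2 : ({a} : Finset ℕ) ⊆ Finset.Icc 1 n \ insert p F2 := by
    rw [singleton_subset_iff, mem_sdiff, mem_insert]
    have := h1 ha.1
    rw [mem_sdiff, mem_singleton] at this
    exact ⟨this.1, by tauto⟩
  have hsub3 : ({b} : Finset ℕ) ⊆ Finset.Icc 1 n \ insert p F3 := by
    rw [singleton_subset_iff, mem_sdiff, mem_insert]
    have := h1 hb.1.1
    rw [mem_sdiff, mem_singleton] at this
    exact ⟨this.1, by tauto⟩
  have hD2card : D2.card = Nat.choose (n-k-2) (k-2) := by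
    rw [hD2, CC, card_filter_superset _ _ _ hsub2 (by simp; omega),
      ground_card n k p hp F2 h2 h2k, card_singleton]
    congr 1 <;> omega
  have hD3card : D3.card = Nat.choose (n-k-2) (k-2) := by
    rw [hD3, CC, card_filter_superset _ _ _ hsub3 (by simp; omega),
      ground_card n k p hp F3 h3 h3k, card_singleton]
    congr 1 <;> omega
  -- disjointness
  have hd21 : Disjoint (CC n k p F1) D2 := by
    rw [disjoint_right]
    intro T hT hT1
    rw [hD2, mem_filter, singleton_subset_iff] at hT
    exact mem_CC_avoid n k p F1 T a hT1 ha.1 hT.2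
  have hd31 : Disjoint (CC n k p F1) D3 := by
    rw [disjoint_right]
    intro T hT hT1
    rw [hD3, mem_filter, singleton_subset_iff] at hT
    exact mem_CC_avoid n k p F1 T b hT1 hb.1.1 hT.2
  have hd32 : Disjoint D2 D3 := by
    rw [disjoint_right]
    intro T hT hT2
    rw [hD3, mem_filter, singleton_subset_iff] at hT
    rw [hD2, mem_filter] at hT2
    exact mem_CC_avoid n k p F2 T b hT2.1 hb.1.2 hT.2
  -- union subset of biUnion
  have hsub : CC n k p F1 ∪ (D2 ∪ D3) ⊆ ({F1, F2, F3} : Finset (Finset ℕ)).biUnion (CC n k p) := by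
    intro T hT
    rw [mem_union, mem_union] at hT
    rw [mem_biUnion]
    rcases hT with h | h | h
    · exact ⟨F1, by simp, h⟩
    · exact ⟨F2, by simp, (mem_filter.mp h).1⟩
    · exact ⟨F3, by simp, (mem_filter.mp h).1⟩
  have hcard : (CC n k p F1 ∪ (D2 ∪ D3)).card
      = (CC n k p F1).card + (D2.card + D3.card) := by
    rw [card_union_of_disjoint (by
      rw [disjoint_union_right]; exact ⟨hd21, hd31⟩),
      card_union_of_disjoint hd32]
  calc Nat.choose (n-k-1) (k-1) + Nat.choose (n-k-2) (k-2) + Nat.choose (n-k-2) (k-2)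
      = (CC n k p F1).card + (D2.card + D3.card) := by
        rw [card_CC n k p hp F1 h1 h1k, hD2card, hD3card]; omega
    _ = (CC n k p F1 ∪ (D2 ∪ D3)).card := hcard.symm
    _ ≤ _ := card_le_card hsub
lemma find_triple (G : Finset (Finset ℕ)) (A0 B0 A B : Finset ℕ)
    (hA0 : A0 ∈ G) (hB0 : B0 ∈ G) (hA : A ∈ G) (hB : B ∈ G)
    (h1 : A0 ≠ B0) (h2 : A ≠ B) (hne : A0 ∩ B0 ≠ A ∩ B) :
    ∃ Z ∈ G, ∃ X ∈ G, ∃ Y ∈ G, Z ≠ X ∧ Z ≠ Y ∧ X ≠ Y ∧ Z ∩ X ≠ Z ∩ Y := by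
  have hswap : ¬(A0 = B ∧ B0 = A) := by
    rintro ⟨rfl, rfl⟩; exact hne (inter_comm _ _)
  by_cases hAA0 : A = A0
  · subst hAA0
    exact ⟨A, hA, B0, hB0, B, hB, h1, h2, fun h => hne (by rw [h]), hne⟩
  · by_cases hAB0 : A = B0
    · subst hAB0
      refine ⟨A, hA, A0, hA0, B, hB, hAA0, h2, fun h => hswap ⟨h, rfl⟩, ?_⟩
      rw [inter_comm]
      exact hne
    · by_cases hBA0 : B = A0
      · subst hBA0
        refine ⟨B, hB, B0, hB0, A, hA, h1, h2.symm, fun h => hswap ⟨rfl, h⟩, ?_⟩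
        rw [inter_comm B A]
        exact hne
      · by_cases hBB0 : B = B0
        · subst hBB0
          refine ⟨B, hB, A0, hA0, A, hA, hBA0, h2.symm,
            fun h => hne (by rw [h]), ?_⟩
          rw [inter_comm B A0, inter_comm B A]
          exact hne
        · by_cases hc : A ∩ A0 = A ∩ B
          · refine ⟨A0, hA0, A, hA, B0, hB0, fun h => hAA0 h.symm, h1,
              hAB0, ?_⟩
            rw [inter_comm A0 A, hc]
            exact hne.symm
          · exact ⟨A, hA, A0, hA0, B, hB, hAA0, h2, fun h => hBA0 h.symm, hc⟩
theorem union_complements_not_sunflower (n k x p : ℕ) (hk : 1 ≤ k)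
    (hn : 2 * k + 1 ≤ n) (hp : p ∈ Finset.Icc 1 n)
    (hx1 : 1 ≤ x) (hxk : x ≤ k)
    (G : Finset (Finset ℕ)) (hGcard : G.card = x)
    (hGsub : ∀ A ∈ G, A ⊆ Finset.Icc 1 n \ {p} ∧ A.card = k)
    (hGint : ∀ A ∈ G, ∀ B ∈ G, (A ∩ B).Nonempty)
    (hnotsun : ¬ ∃ C : Finset ℕ, C.card = k - 1 ∧
      ∀ A ∈ G, ∀ B ∈ G, A ≠ B → A ∩ B = C) :
    (∑ j ∈ Finset.Icc 1 x, (n - k - j).choose (k - j)) + (n - k - 3).choose (k - 2) ≤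
      (G.biUnion (fun A => (Finset.Icc 1 n \ insert p A).powersetCard (k - 1))).card := by
  classical
  have hCC : (fun A => (Finset.Icc 1 n \ insert p A).powersetCard (k - 1)) = CC n k p := rfl
  rw [hCC]
  -- x = 1 is impossible
  rcases eq_or_lt_of_le hx1 with hx1' | hx2
  · exfalso
    apply hnotsun
    refine ⟨Finset.range (k-1), Finset.card_range _, ?_⟩
    intro A hA B hB hne
    exfalso
    have hG1 : G.card = 1 := by omega
    rw [card_eq_one] at hG1
    obtain ⟨c, rfl⟩ := hG1
    rw [mem_singleton] at hA hB
    exact hne (hA.trans hB.symm)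
  have hk2 : 2 ≤ k := le_trans hx2 hxk
  by_cases hcase : ∃ A ∈ G, ∃ B ∈ G, A ≠ B ∧ (A ∩ B).card ≤ k - 2
  · -- Case 1: a pair with small intersection
    obtain ⟨A, hAG, B, hBG, hABne, hABsmall⟩ := hcase
    have hA := hGsub A hAG
    have hB := hGsub B hBG
    set P : Finset (Finset ℕ) := {A, B} with hPdef
    have hPG : P ⊆ G := insert_subset hAG (singleton_subset_iff.mpr hBG)
    have hPcard : P.card = 2 := card_pair hABne
    have hRx : (G \ P).card = x - 2 := by rw [card_sdiff_of_subset hPG, hGcard, hPcard]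
    have hPR : P ∪ (G \ P) = G := union_sdiff_of_subset hPG
    have ht := tail_lemma n k p hp hn (G \ P).card (G \ P) P rfl disjoint_sdiff
      (by rw [hPR]; exact hGsub) (by rw [hPcard, hRx]; omega)
    rw [hPR, hPcard, hRx] at ht
    have hb1 := base1 n k p hp hn hk2 A B hA.1 hA.2 hB.1 hB.2 hABne hABsmall
    rw [← hPdef] at hb1
    have hsplit : Finset.Icc 1 x = insert 1 (insert 2 (Finset.Icc (2+1) (2+(x-2)))) := by
      ext j; simp only [mem_Icc, mem_insert]; omega
    rw [hsplit, sum_insert (by simp only [mem_insert, mem_Icc]; omega),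
      sum_insert (by simp only [mem_Icc]; omega)]
    omega
  · -- Case 2: all pairwise intersections have size k-1
    push_neg at hcase
    have hall : ∀ A ∈ G, ∀ B ∈ G, A ≠ B → (A ∩ B).card = k - 1 := by
      intro A hA B hB hne
      have hle : (A ∩ B).card ≤ k := by
        calc (A ∩ B).card ≤ A.card := card_le_card inter_subset_left
          _ = k := (hGsub A hA).2
      have hnk : (A ∩ B).card ≠ k := by
        intro h
        apply hne
        have h1 : A ⊆ B := by
          have : A ∩ B = A := eq_of_subset_of_card_le inter_subset_left
            (by rw [h, (hGsub A hA).2])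
          rw [← this]; exact inter_subset_right
        exact eq_of_subset_of_card_le h1 (by rw [(hGsub A hA).2, (hGsub B hB).2])
      have := hcase A hA B hB hne
      omega
    -- find two pairs with different intersections
    obtain ⟨A0, hA0, B0, hB0, h1⟩ := one_lt_card.mp (show 1 < G.card by omega)
    obtain ⟨A, hA, B, hB, h2, hne⟩ : ∃ A ∈ G, ∃ B ∈ G, A ≠ B ∧ A ∩ B ≠ A0 ∩ B0 := by
      by_contra h
      push_neg at h
      exact hnotsun ⟨A0 ∩ B0, hall A0 hA0 B0 hB0 h1, fun A hA B hB hne => h A hA B hB hne⟩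
    obtain ⟨Z, hZ, X, hX, Y, hY, hZX, hZY, hXY, hZne⟩ :=
      find_triple G A B A0 B0 hA hB hA0 hB0 h2 h1 hne
    have hZp := hGsub Z hZ
    have hXp := hGsub X hX
    have hYp := hGsub Y hY
    set P : Finset (Finset ℕ) := {Z, X, Y} with hPdef
    have hPG : P ⊆ G := insert_subset hZ (insert_subset hX (singleton_subset_iff.mpr hY))
    have hPcard : P.card = 3 := by
      rw [hPdef, card_insert_of_notMem (by simp [hZX, hZY]), card_pair hXY]
    have hk3 : 3 ≤ k := by
      have := card_le_card hPG
      omega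
    -- extract a and b
    obtain ⟨a, haZX⟩ : (Z \ X).Nonempty := by
      rw [sdiff_nonempty]
      intro hsub
      exact hZX (eq_of_subset_of_card_le hsub (by rw [hXp.2, hZp.2]))
    obtain ⟨b, hbZY⟩ : (Z \ Y).Nonempty := by
      rw [sdiff_nonempty]
      intro hsub
      exact hZY (eq_of_subset_of_card_le hsub (by rw [hYp.2, hZp.2]))
    have hbZ : b ∈ Z := (mem_sdiff.mp hbZY).1
    have hbY : b ∉ Y := (mem_sdiff.mp hbZY).2
    have hbX : b ∈ X := by
      by_contra hbX
      have e1 : Z ∩ X = Z.erase b := by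
        apply eq_of_subset_of_card_le
        · intro c hc
          rw [mem_inter] at hc
          rw [mem_erase]
          exact ⟨fun h => hbX (h ▸ hc.2), hc.1⟩
        · rw [card_erase_of_mem hbZ, hZp.2, hall Z hZ X hX hZX]
      have e2 : Z ∩ Y = Z.erase b := by
        apply eq_of_subset_of_card_le
        · intro c hc
          rw [mem_inter] at hc
          rw [mem_erase]
          exact ⟨fun h => hbY (h ▸ hc.2), hc.1⟩
        · rw [card_erase_of_mem hbZ, hZp.2, hall Z hZ Y hY hZY]
      exact hZne (e1.trans e2.symm)
    have hb : b ∈ (Z ∩ X) \ Y := by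
      rw [mem_sdiff, mem_inter]; exact ⟨⟨hbZ, hbX⟩, hbY⟩
    have hb2 := base2 n k p hp hn hk2 Z X Y hZp.1 hZp.2 hXp.1 hXp.2 hYp.1 hYp.2 a b haZX hb
    rw [← hPdef] at hb2
    have hRx : (G \ P).card = x - 3 := by rw [card_sdiff_of_subset hPG, hGcard, hPcard]
    have hPR : P ∪ (G \ P) = G := union_sdiff_of_subset hPG
    have ht := tail_lemma n k p hp hn (G \ P).card (G \ P) P rfl disjoint_sdiff
      (by rw [hPR]; exact hGsub) (by rw [hPcard, hRx]; omega)
    rw [hPR, hPcard, hRx] at ht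
    have hx3 : 3 ≤ x := by
      have := card_le_card hPG
      omega
    have hpc := pascal2 (n-k-1) k hk3 (by omega)
    rw [show n-k-1-2 = n-k-3 by omega, show n-k-1-1 = n-k-2 by omega] at hpc
    have hsplit : Finset.Icc 1 x = insert 1 (insert 2 (insert 3 (Finset.Icc (3+1) (3+(x-3))))) := by
      ext j; simp only [mem_Icc, mem_insert]; omega
    rw [hsplit, sum_insert (by simp only [mem_insert, mem_Icc]; omega),
      sum_insert (by simp only [mem_insert, mem_Icc]; omega),
      sum_insert (by simp only [mem_Icc]; omega)]
    omega
end

section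
/- Define g(x) = Σ_{j=1}^{x} C(n-k-j, k-j) for 1 ≤ x ≤ k and g(x) = Σ_{j=1}^{k} C(n-k-j, k-j) for k+1 ≤ x ≤ n-k, and f(x) = g(x) - x. Then f is monotonically increasing on [1,k] and monotonically decreasing on [k, n-k], and f(n-k) - f(t) = C(n-k-t, k-t-1) - (n-k-t) for 1 ≤ t ≤ k. -/
open Finset

/-- Binomial coefficient on integers, with `C(a,b) = 0` for `b < 0`. -/
def intChoose (a b : ℤ) : ℤ := if 0 ≤ b then ((a.toNat).choose b.toNat : ℤ) else 0

private lemma hockey (r : ℕ) : ∀ m : ℕ, ∑ i ∈ Finset.range (m+1), (r + i).choose i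
    = (r + m + 1).choose m := by
  intro m
  induction m with
  | zero => simp
  | succ m ih =>
      rw [Finset.sum_range_succ, ih,
        show r + (m+1) + 1 = (r + m + 1) + 1 from by ring,
        Nat.choose_succ_succ (r + m + 1) m,
        show r + (m+1) = r + m + 1 from by ring]

private lemma sum_reindex (n k t : ℕ) (hn : 2*k+1 ≤ n) (ht : t ≤ k) :
    ∑ j ∈ Finset.Ioc t k, ((n-k-j).choose (k-j)) =
    ∑ i ∈ Finset.range (k-t), ((n-2*k) + i).choose i := by
  apply Finset.sum_nbij' (fun j => k - j) (fun i => k - i)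
  · intro j hj; simp only [Finset.mem_Ioc] at hj; simp only [Finset.mem_range]; omega
  · intro i hi; simp only [Finset.mem_range] at hi; simp only [Finset.mem_Ioc]; omega
  · intro j hj; simp only [Finset.mem_Ioc] at hj; omega
  · intro i hi; simp only [Finset.mem_range] at hi; omega
  · intro j hj; simp only [Finset.mem_Ioc] at hj
    congr 1 <;> omega

theorem f_monotone_and_difference (n k : ℕ) (hk : 1 ≤ k) (hn : 2 * k + 1 ≤ n)
    (g : ℕ → ℤ)
    (hg : ∀ x, g x = ∑ j ∈ Finset.Icc 1 (min x k), ((n - k - j).choose (k - j) : ℤ))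
    (f : ℕ → ℤ) (hf : ∀ x, f x = g x - x) :
    (∀ x y : ℕ, 1 ≤ x → x ≤ y → y ≤ k → f x ≤ f y) ∧
    (∀ x y : ℕ, k ≤ x → x ≤ y → y ≤ n - k → f y ≤ f x) ∧
    (∀ t : ℕ, 1 ≤ t → t ≤ k →
      f (n - k) - f t = intChoose ((n : ℤ) - k - t) ((k : ℤ) - t - 1) - ((n : ℤ) - k - t)) := by
  have hterm : ∀ j : ℕ, j ≤ k → (1 : ℤ) ≤ ((n - k - j).choose (k - j) : ℤ) := by
    intro j hj
    have h1 : k - j ≤ n - k - j := by omega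
    have := Nat.choose_pos h1
    exact_mod_cast this
  have hsplit : ∀ x y : ℕ, x ≤ y → y ≤ k →
      (∑ j ∈ Finset.Icc 1 y, ((n - k - j).choose (k - j) : ℤ)) =
      (∑ j ∈ Finset.Icc 1 x, ((n - k - j).choose (k - j) : ℤ)) +
      (∑ j ∈ Finset.Ioc x y, ((n - k - j).choose (k - j) : ℤ)) := by
    intro x y hxy hyk
    rw [show Finset.Icc 1 y = Finset.Ioc 0 y by rfl,
        show Finset.Icc 1 x = Finset.Ioc 0 x by rfl]
    exact (Finset.sum_Ioc_consecutive _ (Nat.zero_le x) hxy).symm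
  have hlow : ∀ j : ℕ, j ∈ Finset.Ioc 0 k → True := by intro _ _; trivial
  have hIocge : ∀ x y : ℕ, x ≤ y → y ≤ k →
      ((y : ℤ) - x) ≤ ∑ j ∈ Finset.Ioc x y, ((n - k - j).choose (k - j) : ℤ) := by
    intro x y hxy hyk
    have hcard : (Finset.Ioc x y).card = y - x := Nat.card_Ioc x y
    calc ((y : ℤ) - x) = ((Finset.Ioc x y).card : ℤ) := by rw [hcard]; push_cast; omega
    _ = ∑ j ∈ Finset.Ioc x y, (1 : ℤ) := by simp
    _ ≤ _ := by
        apply Finset.sum_le_sum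
        intro j hj
        simp only [Finset.mem_Ioc] at hj
        exact hterm j (le_trans hj.2 hyk)
  refine ⟨?_, ?_, ?_⟩
  · intro x y hx hxy hyk
    rw [hf, hf, hg, hg, min_eq_left (le_trans hxy hyk), min_eq_left hyk,
        hsplit x y hxy hyk]
    have := hIocge x y hxy hyk
    linarith
  · intro x y hkx hxy hynk
    rw [hf, hf, hg, hg, min_eq_right (le_trans hkx hxy), min_eq_right hkx]
    have : (x : ℤ) ≤ y := by exact_mod_cast hxy
    linarith
  · intro t ht1 htk
    have hnk : k ≤ n - k := by omega
    rw [hf, hf, hg, hg, min_eq_right hnk, min_eq_left htk, hsplit t k htk le_rfl]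
    have hcast : ((n - k : ℕ) : ℤ) = (n : ℤ) - k := by push_cast; omega
    have hsum : (∑ j ∈ Finset.Ioc t k, ((n - k - j).choose (k - j) : ℤ)) =
        intChoose ((n : ℤ) - k - t) ((k : ℤ) - t - 1) := by
      rcases eq_or_lt_of_le htk with rfl | hlt
      · simp [intChoose, show ¬ (0:ℤ) ≤ (t:ℤ) - t - 1 by omega]
      · have hnat : ∑ j ∈ Finset.Ioc t k, ((n-k-j).choose (k-j)) = (n-k-t).choose (k-t-1) := by
          rw [sum_reindex n k t hn htk]
          have hm : k - t = (k - t - 1) + 1 := by omega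
          rw [hm, hockey]
          congr 1
          omega
        rw [← Nat.cast_sum, hnat]
        unfold intChoose
        rw [if_pos (by omega : (0:ℤ) ≤ (k : ℤ) - t - 1)]
        congr 2
        · omega
        · omega
    rw [hsum, hcast]
    ring
end

section
/- With f as above and h(t) = min_{t ≤ x ≤ n-k} f(x): if k ≥ t+3 then h(t) = f(t) < min_{x ≠ t} f(x); if k = t+2 then h(t) = f(t) = f(n-k) < min_{x ∉ {t, n-k}} f(x); if k ≤ t+1 then h(t) = f(n-k) < min_{x ≠ n-k} f(x). -/
open Finset

theorem h_min_cases (n k t : ℕ) (hk : 1 ≤ k) (hn : 2 * k + 1 ≤ n)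
    (ht1 : 1 ≤ t) (ht2 : t ≤ n - k)
    (g : ℕ → ℤ)
    (hg : ∀ x, g x = ∑ j ∈ Finset.Icc 1 (min x k), ((n - k - j).choose (k - j) : ℤ))
    (f : ℕ → ℤ) (hf : ∀ x, f x = g x - x) :
    (t + 3 ≤ k → ∀ x : ℕ, t ≤ x → x ≤ n - k → x ≠ t → f t < f x) ∧
    (k = t + 2 → f t = f (n - k) ∧
      ∀ x : ℕ, t ≤ x → x ≤ n - k → x ≠ t → x ≠ n - k → f t < f x) ∧
    (k ≤ t + 1 → ∀ x : ℕ, t ≤ x → x ≤ n - k → x ≠ n - k → f (n - k) < f x) := by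
  -- g is constant for x ≥ k
  have hgk : ∀ x, k ≤ x → g x = g k := by
    intro x hx
    rw [hg, hg, min_eq_right hx, min_self]
  -- step formula for g below k
  have hstep : ∀ x, x < k →
      g (x + 1) = g x + ((n - k - (x + 1)).choose (k - (x + 1)) : ℤ) := by
    intro x hx
    rw [hg, hg, min_eq_left (by omega : x + 1 ≤ k), min_eq_left (by omega : x ≤ k),
      Finset.sum_Icc_succ_top (by omega : 1 ≤ x + 1)]
  -- step formula for f below k
  have hfstep : ∀ x, x < k →
      f (x + 1) = f x + ((n - k - (x + 1)).choose (k - (x + 1)) : ℤ) - 1 := by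
    intro x hx
    rw [hf, hf, hstep x hx]
    push_cast
    ring
  -- single strict increase step
  have hstep1 : ∀ x, x + 1 ≤ k - 1 → f x + 1 ≤ f (x + 1) := by
    intro x hx
    have hxk : x < k := by omega
    have hr : 1 ≤ k - (x + 1) := by omega
    have hm : k - (x + 1) + 1 ≤ n - k - (x + 1) := by omega
    have hc : (2 : ℕ) ≤ (n - k - (x + 1)).choose (k - (x + 1)) := by
      calc (2 : ℕ) ≤ k - (x + 1) + 1 := by omega
        _ = (k - (x + 1) + 1).choose (k - (x + 1)) := (Nat.choose_succ_self_right _).symm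
        _ ≤ (n - k - (x + 1)).choose (k - (x + 1)) := Nat.choose_le_choose _ hm
    have hc' : (2 : ℤ) ≤ ((n - k - (x + 1)).choose (k - (x + 1)) : ℤ) := by exact_mod_cast hc
    rw [hfstep x hxk]
    linarith
  -- monotonicity up to k - 1
  have hmono : ∀ m x : ℕ, x + m ≤ k - 1 → f x + m ≤ f (x + m) := by
    intro m
    induction m with
    | zero => intro x _; simp
    | succ m ih =>
      intro x hx
      have h1 : f x + m ≤ f (x + m) := ih x (by omega)
      have h2 : f (x + m) + 1 ≤ f (x + m + 1) := hstep1 (x + m) (by omega)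
      have : x + (m + 1) = x + m + 1 := by omega
      rw [this]
      push_cast
      linarith
  have hmono' : ∀ x y : ℕ, x < y → y ≤ k - 1 → f x < f y := by
    intro x y hxy hy
    have := hmono (y - x) x (by omega)
    have hyx : x + (y - x) = y := by omega
    rw [hyx] at this
    have : f x + ((y - x : ℕ) : ℤ) ≤ f y := this
    have h1 : (1 : ℤ) ≤ ((y - x : ℕ) : ℤ) := by exact_mod_cast (by omega : 1 ≤ y - x)
    linarith
  -- flat step from k-1 to k
  have hflat : f k = f (k - 1) := by
    have h := hfstep (k - 1) (by omega)
    have e1 : k - 1 + 1 = k := by omega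
    have e2 : (n - k - k).choose (k - k) = (n - 2 * k).choose 0 := by
      congr 1 <;> omega
    rw [e1, e2, Nat.choose_zero_right] at h
    push_cast at h
    linarith
  -- strict decrease above k
  have hdec : ∀ x y : ℕ, k ≤ x → x < y → f y < f x := by
    intro x y hx hxy
    rw [hf, hf, hgk x hx, hgk y (by omega)]
    have : (x : ℤ) < (y : ℤ) := by exact_mod_cast hxy
    linarith
  -- key identity: f (n - k) = f (k - 2) when 2 ≤ k
  have hkey : 2 ≤ k → f (n - k) = f (k - 2) := by
    intro hk2
    have h1 : g (n - k) = g k := hgk (n - k) (by omega)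
    have h2 := hstep (k - 1) (by omega)
    have h3 := hstep (k - 2) (by omega)
    have e1 : k - 1 + 1 = k := by omega
    have e2 : (n - k - k).choose (k - k) = (n - 2 * k).choose 0 := by
      congr 1 <;> omega
    have e3 : k - 2 + 1 = k - 1 := by omega
    have e4 : (n - k - (k - 1)).choose (k - (k - 1)) = (n - 2 * k + 1).choose 1 := by
      congr 1 <;> omega
    rw [e1, e2, Nat.choose_zero_right] at h2
    rw [e3, e4, Nat.choose_one_right] at h3
    rw [hf, hf, h1, h2, h3]
    have c1 : ((n - 2 * k + 1 : ℕ) : ℤ) = (n : ℤ) - 2 * k + 1 := by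
      have : (2 * k : ℕ) ≤ n := by omega
      push_cast [Nat.cast_sub this]
      ring
    have c2 : ((n - k : ℕ) : ℤ) = (n : ℤ) - k := by
      have : (k : ℕ) ≤ n := by omega
      push_cast [Nat.cast_sub this]
      ring
    have c3 : ((k - 2 : ℕ) : ℤ) = (k : ℤ) - 2 := by
      push_cast [Nat.cast_sub hk2]
      ring
    rw [c1, c2, c3]
    push_cast
    ring
  have hknk : k < n - k := by omega
  refine ⟨?_, ?_, ?_⟩
  · -- case t + 3 ≤ k
    intro hkt x hx1 hx2 hxne
    have htk : t < k - 2 := by omega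
    have hfnk : f (n - k) = f (k - 2) := hkey (by omega)
    have hlow : f t < f (k - 2) := hmono' t (k - 2) htk (by omega)
    by_cases hxk : x ≤ k - 1
    · exact hmono' t x (by omega) hxk
    · have hxk' : k ≤ x := by omega
      have : f (n - k) ≤ f x := by
        rcases eq_or_lt_of_le hx2 with h | h
        · rw [h]
        · exact le_of_lt (hdec x (n - k) hxk' h)
      linarith
  · -- case k = t + 2
    intro hkt
    have ht' : t = k - 2 := by omega
    have hfnk : f (n - k) = f (k - 2) := hkey (by omega)
    constructor
    · rw [ht', hfnk]
    · intro x hx1 hx2 hxne hxne2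
      by_cases hxk : x ≤ k - 1
      · exact hmono' t x (by omega) hxk
      · have hxk' : k ≤ x := by omega
        have hxlt : x < n - k := by omega
        have := hdec x (n - k) hxk' hxlt
        rw [hfnk, ← ht'] at this
        linarith
  · -- case k ≤ t + 1
    intro hkt x hx1 hx2 hxne
    have hxlt : x < n - k := by omega
    by_cases hxk : k ≤ x
    · exact hdec x (n - k) hxk hxlt
    · have hx' : x = k - 1 := by omega
      have := hdec k (n - k) le_rfl hknk
      rw [hflat, ← hx'] at this
      exact this
end

section
/- Let n ≥ 7 and let F ⊆ ([n] choose 3) be a maximal non-trivial intersecting 3-uniform family with maximum-degree element p, and suppose |F₀| ≥ n−2 where F₀ = {F ∈ F : p ∉ F}. Then ⋂_{F∈F₀} F = ∅. -/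
open Finset

theorem no_common_element_in_F0 (n : ℕ) (hn : 7 ≤ n)
    (F : Finset (Finset ℕ))
    (hF : ∀ A ∈ F, A ∈ (Finset.Icc 1 n).powersetCard 3)
    (hnt : NontrivIntersecting F)
    (hmax : ∀ A ∈ (Finset.Icc 1 n).powersetCard 3, A ∉ F →
      ¬ NontrivIntersecting (insert A F))
    (p : ℕ) (hp : p ∈ Finset.Icc 1 n)
    (hpmax : ∀ q ∈ Finset.Icc 1 n,
      (F.filter (fun A => q ∈ A)).card ≤ (F.filter (fun A => p ∈ A)).card)
    (hF0card : n - 2 ≤ (F.filter (fun A => p ∉ A)).card) :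
    ¬ ∃ g, ∀ A ∈ F.filter (fun A => p ∉ A), g ∈ A := by
  rintro ⟨g, hg⟩
  obtain ⟨hint, hnontriv⟩ := hnt
  set F0 := F.filter (fun A => p ∉ A) with hF0def
  have hcard3 : ∀ A ∈ F, A.card = 3 ∧ A ⊆ Finset.Icc 1 n := by
    intro A hA
    have := Finset.mem_powersetCard.mp (hF A hA)
    exact ⟨this.2, this.1⟩
  have hF0ne : F0.Nonempty := Finset.card_pos.mp (by omega)
  obtain ⟨F1, hF1⟩ := hF0ne
  have hF1F : F1 ∈ F := (Finset.mem_filter.mp hF1).1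
  have hgF1 : g ∈ F1 := hg F1 hF1
  have hgIcc : g ∈ Finset.Icc 1 n := (hcard3 F1 hF1F).2 hgF1
  have hpg : p ≠ g := by
    rintro rfl
    refine hnontriv ⟨p, fun A hA => ?_⟩
    by_cases h : p ∈ A
    · exact h
    · exact hg A (Finset.mem_filter.mpr ⟨hA, h⟩)
  -- F0 members avoid g's partner p
  have hF0mem : ∀ B ∈ F0, B ∈ F ∧ p ∉ B ∧ g ∈ B := by
    intro B hB
    have := Finset.mem_filter.mp hB
    exact ⟨this.1, this.2, hg B hB⟩
  -- Step 1: all {p,g,x} belong to F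
  have hstep1 : ∀ x ∈ Finset.Icc 1 n, x ≠ p → x ≠ g →
      insert p (insert g ({x} : Finset ℕ)) ∈ F := by
    intro x hx hxp hxg
    set A := insert p (insert g ({x} : Finset ℕ)) with hAdef
    have hpA : p ∈ A := by simp [hAdef]
    have hgA : g ∈ A := by simp [hAdef]
    have hAcard : A.card = 3 := by
      rw [hAdef, Finset.card_insert_of_notMem (by simp [hpg, hxp.symm]),
        Finset.card_insert_of_notMem (by simp [hxg.symm])]
      rfl
    have hAsub : A ⊆ Finset.Icc 1 n := by
      intro y hy
      simp only [hAdef, Finset.mem_insert, Finset.mem_singleton] at hy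
      rcases hy with rfl | rfl | rfl
      · exact hp
      · exact hgIcc
      · exact hx
    by_contra hAF
    refine hmax A (Finset.mem_powersetCard.mpr ⟨hAsub, hAcard⟩) hAF ⟨?_, ?_⟩
    · intro B hB C hC
      rcases Finset.mem_insert.mp hB with rfl | hB
      · rcases Finset.mem_insert.mp hC with rfl | hC
        · exact ⟨p, Finset.mem_inter.mpr ⟨hpA, hpA⟩⟩
        · by_cases hpC : p ∈ C
          · exact ⟨p, Finset.mem_inter.mpr ⟨hpA, hpC⟩⟩
          · exact ⟨g, Finset.mem_inter.mpr ⟨hgA, hg C (Finset.mem_filter.mpr ⟨hC, hpC⟩)⟩⟩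
      · rcases Finset.mem_insert.mp hC with rfl | hC
        · by_cases hpB : p ∈ B
          · exact ⟨p, Finset.mem_inter.mpr ⟨hpB, hpA⟩⟩
          · exact ⟨g, Finset.mem_inter.mpr ⟨hg B (Finset.mem_filter.mpr ⟨hB, hpB⟩), hgA⟩⟩
        · exact hint B hB C hC
    · rintro ⟨q, hq⟩
      exact hnontriv ⟨q, fun B hB => hq B (Finset.mem_insert_of_mem hB)⟩
  -- the ground set minus p, g
  set S := ((Finset.Icc 1 n).erase p).erase g with hSdef
  have hScard : S.card = n - 2 := by
    rw [hSdef, Finset.card_erase_of_mem (Finset.mem_erase.mpr ⟨Ne.symm hpg, hgIcc⟩),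
      Finset.card_erase_of_mem hp, Nat.card_Icc]
    omega
  have hSmem : ∀ x, x ∈ S ↔ x ≠ g ∧ x ≠ p ∧ x ∈ Finset.Icc 1 n := by
    intro x
    simp [hSdef, Finset.mem_erase, and_assoc]
  -- image of S under x ↦ {p,g,x}
  set G1 := S.image (fun x => insert p (insert g ({x} : Finset ℕ))) with hG1def
  have hG1card : G1.card = n - 2 := by
    rw [hG1def, Finset.card_image_of_injOn, hScard]
    intro x hx y hy hxy
    dsimp only at hxy
    have hx' := (hSmem x).mp hx
    have : x ∈ insert p (insert g ({y} : Finset ℕ)) := by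
      rw [← hxy]; simp
    simp only [Finset.mem_insert, Finset.mem_singleton] at this
    rcases this with rfl | rfl | h
    · exact absurd rfl hx'.2.1
    · exact absurd rfl hx'.1
    · exact h
  have hG1sub : G1 ⊆ F.filter (fun A => g ∈ A) := by
    intro A hA
    obtain ⟨x, hx, rfl⟩ := Finset.mem_image.mp hA
    have hx' := (hSmem x).mp hx
    exact Finset.mem_filter.mpr ⟨hstep1 x hx'.2.2 hx'.2.1 hx'.1, by simp⟩
  -- degree of g at least (n-2) + |F0|
  have hdegg : n - 2 + F0.card ≤ (F.filter (fun A => g ∈ A)).card := by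
    have hsub : G1 ∪ F0 ⊆ F.filter (fun A => g ∈ A) := by
      intro A hA
      rcases Finset.mem_union.mp hA with h | h
      · exact hG1sub h
      · exact Finset.mem_filter.mpr ⟨(hF0mem A h).1, (hF0mem A h).2.2⟩
    have hdisj : Disjoint G1 F0 := by
      rw [Finset.disjoint_left]
      intro A hA hA0
      obtain ⟨x, hx, rfl⟩ := Finset.mem_image.mp hA
      exact (hF0mem _ hA0).2.1 (by simp)
    calc n - 2 + F0.card = (G1 ∪ F0).card := by
          rw [Finset.card_union_of_disjoint hdisj, hG1card]
      _ ≤ _ := Finset.card_le_card hsub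
  -- sets containing p and g lie in G1
  set T := F.filter (fun A => p ∈ A ∧ g ∉ A) with hTdef
  have hTmem : ∀ A ∈ T, A ∈ F ∧ p ∈ A ∧ g ∉ A := by
    intro A hA
    have := Finset.mem_filter.mp hA
    exact ⟨this.1, this.2⟩
  have hsplit : F.filter (fun A => p ∈ A) ⊆ T ∪ G1 := by
    intro A hA
    obtain ⟨hAF, hpA⟩ := Finset.mem_filter.mp hA
    by_cases hgA : g ∈ A
    · refine Finset.mem_union_right _ ?_
      have hA3 := (hcard3 A hAF).1
      have hgA' : g ∈ A.erase p := Finset.mem_erase.mpr ⟨Ne.symm hpg, hgA⟩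
      have hc1 : ((A.erase p).erase g).card = 1 := by
        rw [Finset.card_erase_of_mem hgA', Finset.card_erase_of_mem hpA, hA3]
      obtain ⟨x, hx⟩ := Finset.card_eq_one.mp hc1
      have hxmem : x ∈ (A.erase p).erase g := hx ▸ Finset.mem_singleton_self x
      have hxA : x ∈ A := Finset.mem_of_mem_erase (Finset.mem_of_mem_erase hxmem)
      refine Finset.mem_image.mpr ⟨x, (hSmem x).mpr
        ⟨(Finset.mem_erase.mp hxmem).1,
         (Finset.mem_erase.mp (Finset.mem_of_mem_erase hxmem)).1,
         (hcard3 A hAF).2 hxA⟩, ?_⟩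
      rw [← hx, Finset.insert_erase hgA', Finset.insert_erase hpA]
    · exact Finset.mem_union_left _ (Finset.mem_filter.mpr ⟨hAF, hpA, hgA⟩)
  have hTcard : n - 2 ≤ T.card ∧ F0.card ≤ T.card := by
    have h1 := hpmax g hgIcc
    have h2 : (F.filter (fun A => p ∈ A)).card ≤ T.card + (n - 2) := by
      calc (F.filter (fun A => p ∈ A)).card ≤ (T ∪ G1).card := Finset.card_le_card hsplit
        _ ≤ T.card + G1.card := Finset.card_union_le _ _
        _ = T.card + (n - 2) := by rw [hG1card]
    omega
  -- cross intersection
  have hcross : ∀ A ∈ T, ∀ B ∈ F0, ((A.erase p) ∩ (B.erase g)).Nonempty := by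
    intro A hA B hB
    obtain ⟨x, hx⟩ := hint A (hTmem A hA).1 B (hF0mem B hB).1
    obtain ⟨hxA, hxB⟩ := Finset.mem_inter.mp hx
    refine ⟨x, Finset.mem_inter.mpr ⟨Finset.mem_erase.mpr ⟨?_, hxA⟩,
      Finset.mem_erase.mpr ⟨?_, hxB⟩⟩⟩
    · rintro rfl; exact (hF0mem B hB).2.1 hxB
    · rintro rfl; exact (hTmem A hA).2.2 hxA
  -- erase facts
  have hTer : ∀ A ∈ T, (A.erase p).card = 2 ∧ p ∉ A.erase p := by
    intro A hA
    constructor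
    · rw [Finset.card_erase_of_mem (hTmem A hA).2.1, (hcard3 A (hTmem A hA).1).1]
    · exact Finset.notMem_erase p A
  have hF0er : ∀ B ∈ F0, (B.erase g).card = 2 := by
    intro B hB
    rw [Finset.card_erase_of_mem (hF0mem B hB).2.2, (hcard3 B (hF0mem B hB).1).1]
  -- pick two distinct members of T
  have hT2 : 1 < T.card := by omega
  obtain ⟨A1, hA1, A2, hA2, hA12⟩ := Finset.one_lt_card.mp hT2
  have he12 : A1.erase p ≠ A2.erase p := by
    intro h
    apply hA12
    rw [← Finset.insert_erase (hTmem A1 hA1).2.1, h, Finset.insert_erase (hTmem A2 hA2).2.1]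
  by_cases hsep : ((A1.erase p) ∩ (A2.erase p)).Nonempty
  · -- shared vertex u
    obtain ⟨u, hu⟩ := hsep
    obtain ⟨hu1, hu2⟩ := Finset.mem_inter.mp hu
    have hup : u ≠ p := (Finset.mem_erase.mp hu1).1
    have huA1 : u ∈ A1 := Finset.mem_of_mem_erase hu1
    have hug : u ≠ g := by rintro rfl; exact (hTmem A1 hA1).2.2 huA1
    have huIcc : u ∈ Finset.Icc 1 n := (hcard3 A1 (hTmem A1 hA1).1).2 huA1
    -- e1 = {u,a}, e2 = {u,b}
    obtain ⟨a, ha⟩ : ∃ a, (A1.erase p).erase u = {a} := by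
      refine Finset.card_eq_one.mp ?_
      rw [Finset.card_erase_of_mem hu1, (hTer A1 hA1).1]
    obtain ⟨b, hb⟩ : ∃ b, (A2.erase p).erase u = {b} := by
      refine Finset.card_eq_one.mp ?_
      rw [Finset.card_erase_of_mem hu2, (hTer A2 hA2).1]
    have he1 : A1.erase p = insert u {a} := by
      rw [← ha, Finset.insert_erase hu1]
    have he2 : A2.erase p = insert u {b} := by
      rw [← hb, Finset.insert_erase hu2]
    have hab : a ≠ b := by
      intro h; exact he12 (by rw [he1, he2, h])
    have hau : a ≠ u := (Finset.mem_erase.mp (ha ▸ Finset.mem_singleton_self a)).1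
    have hbu : b ≠ u := (Finset.mem_erase.mp (hb ▸ Finset.mem_singleton_self b)).1
    -- F0 members not containing u equal insert g {a,b}
    set W : Finset ℕ := insert g (insert a {b}) with hWdef
    have hF0u : ∀ B ∈ F0, u ∉ B → B = W := by
      intro B hB huB
      obtain ⟨x, hx⟩ := hcross A1 hA1 B hB
      obtain ⟨hx1, hxB⟩ := Finset.mem_inter.mp hx
      rw [he1] at hx1
      have hxa : x = a := by
        rcases Finset.mem_insert.mp hx1 with rfl | h
        · exact absurd (Finset.mem_of_mem_erase hxB) huB
        · exact Finset.mem_singleton.mp h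
      obtain ⟨y, hy⟩ := hcross A2 hA2 B hB
      obtain ⟨hy2, hyB⟩ := Finset.mem_inter.mp hy
      rw [he2] at hy2
      have hyb : y = b := by
        rcases Finset.mem_insert.mp hy2 with rfl | h
        · exact absurd (Finset.mem_of_mem_erase hyB) huB
        · exact Finset.mem_singleton.mp h
      have hsub : insert a ({b} : Finset ℕ) ⊆ B.erase g := by
        intro z hz
        rcases Finset.mem_insert.mp hz with rfl | hz
        · exact hxa ▸ hxB
        · rw [Finset.mem_singleton.mp hz]; exact hyb ▸ hyB
      have habc : (insert a ({b} : Finset ℕ)).card = 2 := by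
        rw [Finset.card_insert_of_notMem (by simp [hab]), Finset.card_singleton]
      have : B.erase g = insert a {b} :=
        (Finset.eq_of_subset_of_card_le hsub (by rw [habc, hF0er B hB])).symm
      rw [hWdef, ← this, Finset.insert_erase (hF0mem B hB).2.2]
    -- many F0 members contain u
    set F0u := F0.filter (fun B => u ∈ B) with hF0udef
    have hF0ucard : n - 3 ≤ F0u.card := by
      have hsub : F0 ⊆ insert W F0u := by
        intro B hB
        by_cases huB : u ∈ B
        · exact Finset.mem_insert_of_mem (Finset.mem_filter.mpr ⟨hB, huB⟩)
        · exact Finset.mem_insert.mpr (Or.inl (hF0u B hB huB))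
      have := Finset.card_le_card hsub
      have := Finset.card_insert_le W F0u
      omega
    -- every member of T contains u
    have hTu : ∀ A ∈ T, u ∈ A := by
      intro A hA
      by_contra huA
      -- map F0u into A.erase p
      have hkey : F0u.card ≤ (A.erase p).card := by
        refine Finset.card_le_card_of_injOn (fun B => ((B.erase g).erase u).sum id) ?_ ?_
        · intro B hB
          obtain ⟨hBF0, huB⟩ := Finset.mem_filter.mp hB
          have huB' : u ∈ B.erase g := Finset.mem_erase.mpr ⟨hug, huB⟩
          obtain ⟨x, hx⟩ : ∃ x, (B.erase g).erase u = {x} := by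
            refine Finset.card_eq_one.mp ?_
            rw [Finset.card_erase_of_mem huB', hF0er B hBF0]
          obtain ⟨y, hy⟩ := hcross A hA B hBF0
          obtain ⟨hyA, hyB⟩ := Finset.mem_inter.mp hy
          have hyu : y ≠ u := by rintro rfl; exact huA (Finset.mem_of_mem_erase hyA)
          have : y ∈ ({x} : Finset ℕ) := hx ▸ Finset.mem_erase.mpr ⟨hyu, hyB⟩
          dsimp only
          rw [hx, Finset.sum_singleton, id, ← Finset.mem_singleton.mp this]
          exact hyA
        · intro B hB C hC hBC
          obtain ⟨hBF0, huB⟩ := Finset.mem_filter.mp hB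
          obtain ⟨hCF0, huC⟩ := Finset.mem_filter.mp hC
          have huB' : u ∈ B.erase g := Finset.mem_erase.mpr ⟨hug, huB⟩
          have huC' : u ∈ C.erase g := Finset.mem_erase.mpr ⟨hug, huC⟩
          obtain ⟨x, hx⟩ : ∃ x, (B.erase g).erase u = {x} := by
            refine Finset.card_eq_one.mp ?_
            rw [Finset.card_erase_of_mem huB', hF0er B hBF0]
          obtain ⟨y, hy⟩ : ∃ y, (C.erase g).erase u = {y} := by
            refine Finset.card_eq_one.mp ?_
            rw [Finset.card_erase_of_mem huC', hF0er C hCF0]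
          dsimp only at hBC
          rw [hx, hy, Finset.sum_singleton, Finset.sum_singleton] at hBC
          simp only [id_eq] at hBC
          have : B.erase g = C.erase g := by
            rw [← Finset.insert_erase huB', ← Finset.insert_erase huC', hx, hy, hBC]
          rw [← Finset.insert_erase (hF0mem B hBF0).2.2,
            ← Finset.insert_erase (hF0mem C hCF0).2.2, this]
      rw [(hTer A hA).1] at hkey
      omega
    -- T injects into S.erase u, contradiction with |T| ≥ n-2
    have hfin : T.card ≤ (S.erase u).card := by
      refine Finset.card_le_card_of_injOn (fun A => ((A.erase p).erase u).sum id) ?_ ?_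
      · intro A hA
        have hpA := (hTmem A hA).2.1
        have huA : u ∈ A.erase p := Finset.mem_erase.mpr ⟨hup, hTu A hA⟩
        obtain ⟨x, hx⟩ : ∃ x, (A.erase p).erase u = {x} := by
          refine Finset.card_eq_one.mp ?_
          rw [Finset.card_erase_of_mem huA, (hTer A hA).1]
        have hxmem : x ∈ (A.erase p).erase u := hx ▸ Finset.mem_singleton_self x
        have hxA : x ∈ A := Finset.mem_of_mem_erase (Finset.mem_of_mem_erase hxmem)
        dsimp only
        rw [hx, Finset.sum_singleton, id]
        refine Finset.mem_erase.mpr ⟨(Finset.mem_erase.mp hxmem).1, (hSmem x).mpr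
          ⟨?_, (Finset.mem_erase.mp (Finset.mem_of_mem_erase hxmem)).1,
            (hcard3 A (hTmem A hA).1).2 hxA⟩⟩
        rintro rfl; exact (hTmem A hA).2.2 hxA
      · intro A hA B hB hAB
        have huA : u ∈ A.erase p := Finset.mem_erase.mpr ⟨hup, hTu A hA⟩
        have huB : u ∈ B.erase p := Finset.mem_erase.mpr ⟨hup, hTu B hB⟩
        obtain ⟨x, hx⟩ : ∃ x, (A.erase p).erase u = {x} := by
          refine Finset.card_eq_one.mp ?_
          rw [Finset.card_erase_of_mem huA, (hTer A hA).1]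
        obtain ⟨y, hy⟩ : ∃ y, (B.erase p).erase u = {y} := by
          refine Finset.card_eq_one.mp ?_
          rw [Finset.card_erase_of_mem huB, (hTer B hB).1]
        dsimp only at hAB
        rw [hx, hy, Finset.sum_singleton, Finset.sum_singleton] at hAB
        simp only [id_eq] at hAB
        have : A.erase p = B.erase p := by
          rw [← Finset.insert_erase huA, ← Finset.insert_erase huB, hx, hy, hAB]
        rw [← Finset.insert_erase (hTmem A hA).2.1,
          ← Finset.insert_erase (hTmem B hB).2.1, this]
    have huS : u ∈ S := (hSmem u).mpr ⟨hug, hup, huIcc⟩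
    rw [Finset.card_erase_of_mem huS, hScard] at hfin
    omega
  · -- e1, e2 disjoint: F0 embeds into e1 ×ˢ e2
    have hdisj : ∀ x, x ∈ A1.erase p → x ∈ A2.erase p → False := by
      intro x h1 h2
      exact hsep ⟨x, Finset.mem_inter.mpr ⟨h1, h2⟩⟩
    have hsub : F0 ⊆ ((A1.erase p) ×ˢ (A2.erase p)).image
        (fun q => insert g (insert q.1 {q.2})) := by
      intro B hB
      obtain ⟨x, hx⟩ := hcross A1 hA1 B hB
      obtain ⟨hx1, hxB⟩ := Finset.mem_inter.mp hx
      obtain ⟨y, hy⟩ := hcross A2 hA2 B hB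
      obtain ⟨hy2, hyB⟩ := Finset.mem_inter.mp hy
      have hxy : x ≠ y := by rintro rfl; exact hdisj x hx1 hy2
      have hsub2 : insert x {y} ⊆ B.erase g := by
        intro z hz
        rcases Finset.mem_insert.mp hz with rfl | hz
        · exact hxB
        · rw [Finset.mem_singleton.mp hz]; exact hyB
      have hcxy : (insert x ({y} : Finset ℕ)).card = 2 := by
        rw [Finset.card_insert_of_notMem (by simp [hxy]), Finset.card_singleton]
      have hBer : B.erase g = insert x {y} :=
        (Finset.eq_of_subset_of_card_le hsub2 (by rw [hcxy, hF0er B hB])).symm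
      refine Finset.mem_image.mpr ⟨(x, y), Finset.mem_product.mpr ⟨hx1, hy2⟩, ?_⟩
      rw [← hBer, Finset.insert_erase (hF0mem B hB).2.2]
    have hle : F0.card ≤ 4 := by
      calc F0.card ≤ (((A1.erase p) ×ˢ (A2.erase p)).image
            (fun q => insert g (insert q.1 {q.2}))).card := Finset.card_le_card hsub
        _ ≤ ((A1.erase p) ×ˢ (A2.erase p)).card := Finset.card_image_le
        _ = 4 := by rw [Finset.card_product, (hTer A1 hA1).1, (hTer A2 hA2).1]
    omega
end
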